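/- arXiv:2207.06925 — 2 statements merged into one kernel-verified Lean document; each statement's English description precedes it below -/
import Mathlib

section
/- The number of facets of the flow polytope F(D) of an acyclic network D equals the number of good corridors of D (assuming D has more than one s–t path). -/
open scoped Classical

variable {V : Type*} [Fintype V] [DecidableEq V]

/-- A directed graph (arc set `A`) is acyclic: no directed cycle. -/
def Acyclic (A : Finset (V × V)) : Prop :=
  ∀ v : V, ¬ Relation.TransGen (fun u w => (u, w) ∈ A) v v

/-- Sum of `x` over the arcs of `A` with tail `v`. -/
noncomputable def outSum (A : Finset (V × V)) (x : V × V → ℝ) (v : V) : ℝ :=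
  ∑ a ∈ A.filter (fun a => a.1 = v), x a

/-- Sum of `x` over the arcs of `A` with head `v`. -/
noncomputable def inSum (A : Finset (V × V)) (x : V × V → ℝ) (v : V) : ℝ :=
  ∑ a ∈ A.filter (fun a => a.2 = v), x a

/-- A flow of value 1 in the network `(V, A, s, t)`. -/
def IsFlow (A : Finset (V × V)) (s t : V) (x : V × V → ℝ) : Prop :=
  (∀ a, a ∉ A → x a = 0) ∧ (∀ a, 0 ≤ x a) ∧
    (∀ v, v ≠ s → v ≠ t → outSum A x v = inSum A x v) ∧
    outSum A x s - inSum A x s = 1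

/-- The flow polytope: all value-1 flows, as a subset of `ℝ^(V × V)`. -/
def flowPolytope (A : Finset (V × V)) (s t : V) : Set ((V × V) → ℝ) :=
  {x | IsFlow A s t x}

/-- An `s`–`t` path, given by its list of nodes. -/
def IsPath (A : Finset (V × V)) (s t : V) (p : List V) : Prop :=
  p.Chain' (fun u v => (u, v) ∈ A) ∧ p.head? = some s ∧ p.getLast? = some t ∧ p.Nodup

/-- The arcs of a path given by its node list. -/
def pathEdges (p : List V) : List (V × V) := p.zip p.tail

/-- Characteristic vector of (the arc set of) a path. -/
def chi (p : List V) : (V × V) → ℝ := fun a => if a ∈ pathEdges p then 1 else 0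

/-- Arcs lying on at least one `s`–`t` path (the arc set of the reduced network). -/
noncomputable def redArcs (A : Finset (V × V)) (s t : V) : Finset (V × V) :=
  A.filter fun a => ∃ p : List V, IsPath A s t p ∧ a ∈ pathEdges p

/-- Nodes incident to an arc of the reduced network. -/
noncomputable def redNodes (A : Finset (V × V)) (s t : V) : Finset V :=
  (redArcs A s t).image Prod.fst ∪ (redArcs A s t).image Prod.snd

/-- Out-degree in the reduced network. -/
noncomputable def dplus (A : Finset (V × V)) (s t : V) (u : V) : ℕ :=
  ((redArcs A s t).filter fun a => a.1 = u).card

/-- In-degree in the reduced network. -/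
noncomputable def dminus (A : Finset (V × V)) (s t : V) (u : V) : ℕ :=
  ((redArcs A s t).filter fun a => a.2 = u).card

/-- A corridor: a maximal path of the reduced network all of whose internal nodes
have in- and out-degree 1 in the reduced network. -/
def IsCorridor (A : Finset (V × V)) (s t : V) (c : List V) : Prop :=
  2 ≤ c.length ∧ c.Chain' (fun u v => (u, v) ∈ redArcs A s t) ∧
    (∀ v ∈ c.tail.dropLast, dminus A s t v = 1 ∧ dplus A s t v = 1) ∧
    (∀ h, c.head? = some h → dminus A s t h ≠ 1 ∨ dplus A s t h ≠ 1) ∧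
    (∀ z, c.getLast? = some z → dminus A s t z ≠ 1 ∨ dplus A s t z ≠ 1)

/-- A good corridor. -/
def IsGoodCorridor (A : Finset (V × V)) (s t : V) (c : List V) : Prop :=
  IsCorridor A s t c ∧ (∀ h, c.head? = some h → 2 ≤ dplus A s t h) ∧
    (∀ z, c.getLast? = some z → 2 ≤ dminus A s t z)

/-- A good arc: an arc belonging to some good corridor. -/
def IsGoodArc (A : Finset (V × V)) (s t : V) (a : V × V) : Prop :=
  ∃ c, IsGoodCorridor A s t c ∧ a ∈ pathEdges c

/-- Two vertices of a polytope `S` are adjacent when the segment joining them is a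
(one-dimensional) face of `S`, i.e. an exposed face. -/
def AdjacentVerts (S : Set ((V × V) → ℝ)) (x y : (V × V) → ℝ) : Prop :=
  x ≠ y ∧ IsExposed ℝ S (segment ℝ x y)

/-- A facet: a proper maximal (exposed) face. -/
def IsFacetOf (S F : Set ((V × V) → ℝ)) : Prop :=
  IsExposed ℝ S F ∧ F ≠ S ∧ ∀ G, IsExposed ℝ S G → G ≠ S → F ⊆ G → G = F

set_option linter.unusedSectionVars false

section Basics

variable {A : Finset (V × V)} {s t : V}

lemma pathEdges_cons_cons (u v : V) (l : List V) :
    pathEdges (u :: v :: l) = (u, v) :: pathEdges (v :: l) := rfl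

lemma pathEdges_single (v : V) : pathEdges ([v] : List V) = [] := rfl

lemma pathEdges_nil : pathEdges ([] : List V) = [] := rfl

lemma pathEdges_glue (xs : List V) (y : V) (ys : List V) :
    pathEdges (xs ++ y :: ys) = pathEdges (xs ++ [y]) ++ pathEdges (y :: ys) := by
  induction xs with
  | nil => simp [pathEdges_single]
  | cons x xs ih =>
    cases xs with
    | nil => simp [pathEdges_cons_cons, pathEdges_single]
    | cons x' xs' =>
      simpa [pathEdges_cons_cons] using ih

lemma mem_pathEdges_of_chain' {r : V → V → Prop} {l : List V} (h : l.Chain' r) :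
    ∀ a ∈ pathEdges l, r a.1 a.2 := by
  induction l with
  | nil => simp [pathEdges_nil]
  | cons x xs ih =>
    cases xs with
    | nil => simp [pathEdges_single]
    | cons y ys =>
      intro a ha
      rw [pathEdges_cons_cons] at ha
      rcases List.mem_cons.mp ha with h1 | h1
      · subst h1; exact h.rel_head
      · exact ih h.tail a h1

lemma chain'_nodup (hA : Acyclic A) {l : List V}
    (h : l.Chain' (fun u v => (u, v) ∈ A)) : l.Nodup := by
  haveI : IsTrans V (Relation.TransGen (fun u w : V => (u, w) ∈ A)) :=
    ⟨fun _ _ _ h1 h2 => h1.trans h2⟩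
  have h2 : l.Chain' (Relation.TransGen (fun u w : V => (u, w) ∈ A)) :=
    List.IsChain.imp (fun a b hab => Relation.TransGen.single hab) h
  have h3 := (List.isChain_iff_pairwise).mp h2
  refine h3.imp ?_
  intro a b hab he
  exact hA a (he ▸ hab)

lemma mem_pathEdges_split {a : V × V} {p : List V} (h : a ∈ pathEdges p) :
    ∃ l1 l2, p = l1 ++ a.1 :: a.2 :: l2 := by
  induction p with
  | nil => simp [pathEdges_nil] at h
  | cons x xs ih =>
    cases xs with
    | nil => simp [pathEdges_single] at h
    | cons y ys =>
      rw [pathEdges_cons_cons] at h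
      rcases List.mem_cons.mp h with h1 | h1
      · refine ⟨[], ys, ?_⟩
        rw [show a.1 = x from by rw [h1], show a.2 = y from by rw [h1]]
        rfl
      · obtain ⟨l1, l2, hl⟩ := ih h1
        exact ⟨x :: l1, l2, by simp [hl]⟩

lemma mem_pathEdges_of_split (l1 l2 : List V) (u v : V) :
    (u, v) ∈ pathEdges (l1 ++ u :: v :: l2) := by
  rw [pathEdges_glue l1 u (v :: l2)]
  exact List.mem_append_right _ (by rw [pathEdges_cons_cons]; exact List.mem_cons_self)

lemma map_fst_pathEdges (p : List V) : (pathEdges p).map Prod.fst = p.dropLast := by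
  induction p with
  | nil => simp [pathEdges_nil]
  | cons x xs ih =>
    cases xs with
    | nil => simp [pathEdges_single]
    | cons y ys => simpa [pathEdges_cons_cons] using ih

lemma map_snd_pathEdges (p : List V) : (pathEdges p).map Prod.snd = p.tail := by
  induction p with
  | nil => simp [pathEdges_nil]
  | cons x xs ih =>
    cases xs with
    | nil => simp [pathEdges_single]
    | cons y ys => simpa [pathEdges_cons_cons] using ih

lemma fst_mem_dropLast {a : V × V} {p : List V} (h : a ∈ pathEdges p) :
    a.1 ∈ p.dropLast := by
  rw [← map_fst_pathEdges]; exact List.mem_map_of_mem h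

lemma snd_mem_tail {a : V × V} {p : List V} (h : a ∈ pathEdges p) :
    a.2 ∈ p.tail := by
  rw [← map_snd_pathEdges]; exact List.mem_map_of_mem h

lemma pathEdges_nodup {p : List V} (h : p.Nodup) : (pathEdges p).Nodup := by
  have h1 : (p.dropLast).Nodup := h.sublist (List.dropLast_sublist p)
  rw [← map_fst_pathEdges] at h1
  exact h1.of_map _

lemma fst_mem_of_mem_pathEdges {a : V × V} {p : List V} (h : a ∈ pathEdges p) : a.1 ∈ p :=
  (List.dropLast_sublist p).mem (fst_mem_dropLast h)

lemma snd_mem_of_mem_pathEdges {a : V × V} {p : List V} (h : a ∈ pathEdges p) : a.2 ∈ p :=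
  (List.tail_sublist p).mem (snd_mem_tail h)

/-- In a nodup list, the successor of a node along the edge list is unique. -/
lemma succ_unique {p : List V} (hnd : p.Nodup) {u v w : V}
    (h1 : (u, v) ∈ pathEdges p) (h2 : (u, w) ∈ pathEdges p) : v = w := by
  obtain ⟨l1, l2, hl⟩ := mem_pathEdges_split h1
  simp only at hl
  subst hl
  obtain ⟨hn1, hn2, hdisj⟩ := List.nodup_append'.mp hnd
  have hu1 : u ∉ l1 := fun h => hdisj h (List.mem_cons_self)
  have hu2 : u ∉ v :: l2 := (List.nodup_cons.mp hn2).1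
  rw [pathEdges_glue l1 u (v :: l2)] at h2
  rcases List.mem_append.mp h2 with h3 | h3
  · exfalso
    have := fst_mem_dropLast h3
    simp only [List.dropLast_concat] at this
    exact hu1 this
  · rw [pathEdges_cons_cons] at h3
    rcases List.mem_cons.mp h3 with h4 | h4
    · exact (((Prod.mk.injEq u w u v).mp h4).2).symm
    · exact absurd (fst_mem_of_mem_pathEdges h4) hu2

/-- In a nodup list, the predecessor of a node along the edge list is unique. -/
lemma pred_unique {p : List V} (hnd : p.Nodup) {u v w : V}
    (h1 : (u, v) ∈ pathEdges p) (h2 : (w, v) ∈ pathEdges p) : u = w := by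
  obtain ⟨l1, l2, hl⟩ := mem_pathEdges_split h1
  simp only at hl
  subst hl
  obtain ⟨hn1, hn2, hdisj⟩ := List.nodup_append'.mp hnd
  have hv1 : v ∉ l1 := fun h => hdisj h (by simp)
  have hv2 : v ∉ l2 := by
    have := (List.nodup_cons.mp hn2).2
    exact (List.nodup_cons.mp this).1
  rw [pathEdges_glue l1 u (v :: l2)] at h2
  rcases List.mem_append.mp h2 with h3 | h3
  · have h5 := snd_mem_tail h3
    -- v ∈ (l1 ++ [u]).tail ⊆ l1 ++ [u]
    have h6 : v ∈ l1 ++ [u] := (List.tail_sublist _).mem h5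
    rcases List.mem_append.mp h6 with h7 | h7
    · exact absurd h7 hv1
    · -- v = u : then (w, v) with v = u; u is head of (l1++[u]).tail?? contradiction:
      -- fine; but also (u,v)=(u,u) arc means u appears twice? v = u contradicts nodup: u ∈ v::l2? no...
      -- v = u: but v ∈ v::l2 and u ∈ ** l1++[u] ** ; nodup of whole: u ∉ v::l2, yet v=u ∈ v::l2. contra.
      exfalso
      have : u ∈ v :: l2 := by
        rw [← List.mem_singleton.mp h7]
        exact List.mem_cons_self
      exact (List.nodup_cons.mp hn2).1 this
  · rw [pathEdges_cons_cons] at h3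
    rcases List.mem_cons.mp h3 with h4 | h4
    · exact ((Prod.mk.injEq w v u v).mp h4).1.symm
    · exfalso
      have := snd_mem_tail h4
      -- v ∈ (v::l2).tail = l2
      simp only [List.tail_cons] at this
      exact hv2 this

end Basics

section Paths

variable {A : Finset (V × V)} {s t : V} {p q : List V}

lemma IsPath.ne_nil (h : IsPath A s t p) : p ≠ [] := by
  intro hn; subst hn
  exact absurd h.2.1 (by simp)

lemma IsPath.cons_form (h : IsPath A s t p) : p = s :: p.tail := by
  cases p with
  | nil => exact absurd rfl h.ne_nil
  | cons a l =>
    have : a = s := by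
      have := h.2.1; simp [List.head?] at this; exact this
    rw [this]; rfl

lemma IsPath.concat_form (h : IsPath A s t p) : p = p.dropLast ++ [t] := by
  have hne := h.ne_nil
  have h1 : p.getLast hne = t := by
    have := h.2.2.1
    rwa [List.getLast?_eq_getLast hne, Option.some.injEq] at this
  conv_lhs => rw [← List.dropLast_append_getLast hne]
  rw [h1]

lemma IsPath.s_mem (h : IsPath A s t p) : s ∈ p := by
  rw [h.cons_form]; exact List.mem_cons_self

lemma IsPath.t_mem (h : IsPath A s t p) : t ∈ p := by
  rw [h.concat_form]; exact List.mem_append_right _ (List.mem_singleton_self _)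

lemma IsPath.mem_tail_iff (h : IsPath A s t p) {v : V} :
    v ∈ p.tail ↔ v ∈ p ∧ v ≠ s := by
  have hnd := h.2.2.2
  constructor
  · intro hv
    refine ⟨(List.tail_sublist p).mem hv, ?_⟩
    intro he; subst he
    rw [h.cons_form] at hnd
    exact (List.nodup_cons.mp hnd).1 hv
  · rintro ⟨hv, hne⟩
    conv at hv => rw [h.cons_form]
    rcases List.mem_cons.mp hv with h1 | h1
    · exact absurd h1 hne
    · exact h1

lemma IsPath.mem_dropLast_iff (h : IsPath A s t p) {v : V} :
    v ∈ p.dropLast ↔ v ∈ p ∧ v ≠ t := by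
  have hnd := h.2.2.2
  constructor
  · intro hv
    refine ⟨(List.dropLast_sublist p).mem hv, ?_⟩
    intro he; subst he
    conv at hnd => rw [h.concat_form]
    obtain ⟨-, -, hdisj⟩ := List.nodup_append'.mp hnd
    exact hdisj hv (List.mem_singleton_self _)
  · rintro ⟨hv, hne⟩
    conv at hv => rw [h.concat_form]
    rcases List.mem_append.mp hv with h1 | h1
    · exact h1
    · exact absurd (List.mem_singleton.mp h1) hne

lemma IsPath.edge_mem_A (h : IsPath A s t p) {a : V × V} (ha : a ∈ pathEdges p) :
    a ∈ A := mem_pathEdges_of_chain' h.1 a ha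

lemma IsPath.edge_mem_red (h : IsPath A s t p) {a : V × V} (ha : a ∈ pathEdges p) :
    a ∈ redArcs A s t :=
  Finset.mem_filter.mpr ⟨h.edge_mem_A ha, p, h, ha⟩

omit [Fintype V] in
lemma red_subset_A : redArcs A s t ⊆ A := Finset.filter_subset _ _

lemma exists_path_of_red {a : V × V} (ha : a ∈ redArcs A s t) :
    ∃ p, IsPath A s t p ∧ a ∈ pathEdges p := (Finset.mem_filter.mp ha).2

lemma IsPath.exists_in_arc (h : IsPath A s t p) {v : V} (hv : v ∈ p) (hne : v ≠ s) :
    ∃ u, (u, v) ∈ pathEdges p := by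
  have hv' : v ∈ p.tail := h.mem_tail_iff.mpr ⟨hv, hne⟩
  rw [← map_snd_pathEdges] at hv'
  obtain ⟨a, ha, hae⟩ := List.mem_map.mp hv'
  exact ⟨a.1, by rwa [show (a.1, v) = a from by rw [← hae]]⟩

lemma IsPath.exists_out_arc (h : IsPath A s t p) {v : V} (hv : v ∈ p) (hne : v ≠ t) :
    ∃ w, (v, w) ∈ pathEdges p := by
  have hv' : v ∈ p.dropLast := h.mem_dropLast_iff.mpr ⟨hv, hne⟩
  rw [← map_fst_pathEdges] at hv'
  obtain ⟨a, ha, hae⟩ := List.mem_map.mp hv'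
  exact ⟨a.2, by rwa [show (v, a.2) = a from by rw [← hae]]⟩

lemma dminus_s_eq_zero : dminus A s t s = 0 := by
  rw [dminus, Finset.card_eq_zero, Finset.filter_eq_empty_iff]
  intro a ha h2
  obtain ⟨p, hp, hmem⟩ := exists_path_of_red ha
  have := snd_mem_tail hmem
  rw [h2] at this
  exact ((hp.mem_tail_iff).mp this).2 rfl

lemma dplus_t_eq_zero : dplus A s t t = 0 := by
  rw [dplus, Finset.card_eq_zero, Finset.filter_eq_empty_iff]
  intro a ha h2
  obtain ⟨p, hp, hmem⟩ := exists_path_of_red ha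
  have := fst_mem_dropLast hmem
  rw [h2] at this
  exact ((hp.mem_dropLast_iff).mp this).2 rfl

lemma head?_append_cons (l l₁ l₂ : List V) (x : V) :
    (l ++ x :: l₁).head? = (l ++ x :: l₂).head? := by
  cases l <;> rfl

/-- The key splicing construction: stitch a prefix of a path to a suffix of another
path along an arc; acyclicity gives nodup for free. -/
lemma path_splice (hA : Acyclic A) (hp : IsPath A s t p) (hq : IsPath A s t q)
    {p1 p2 q1 q2 : List V} {u w : V}
    (hsp : p = p1 ++ u :: p2) (hsq : q = q1 ++ w :: q2) (harc : (u, w) ∈ A) :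
    IsPath A s t (p1 ++ u :: w :: q2) := by
  have hchainp : (p1 ++ [u]).Chain' (fun a b => (a, b) ∈ A) := by
    refine List.IsChain.prefix hp.1 ⟨p2, ?_⟩
    rw [hsp]; simp
  have hchainq : (w :: q2).Chain' (fun a b => (a, b) ∈ A) := by
    refine List.IsChain.suffix hq.1 ⟨q1, ?_⟩
    rw [hsq]
  have hchain : (p1 ++ u :: w :: q2).Chain' (fun a b => (a, b) ∈ A) := by
    rw [show p1 ++ u :: w :: q2 = (p1 ++ [u]) ++ w :: q2 from by simp]
    simp only [List.Chain']
    rw [List.isChain_append]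
    refine ⟨hchainp, hchainq, ?_⟩
    intro x hx y hy
    simp only [List.getLast?_concat, Option.mem_def, Option.some.injEq] at hx
    simp only [List.head?_cons, Option.mem_def, Option.some.injEq] at hy
    rw [← hx, ← hy]; exact harc
  refine ⟨hchain, ?_, ?_, chain'_nodup hA hchain⟩
  · rw [head?_append_cons p1 _ p2 u, ← hsp]; exact hp.2.1
  · rw [show p1 ++ u :: w :: q2 = (p1 ++ [u]) ++ w :: q2 from by simp,
      List.getLast?_append_of_ne_nil _ (by simp : (w :: q2) ≠ [])]
    have h5 : q.getLast? = (w :: q2).getLast? := by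
      rw [hsq]
      exact List.getLast?_append_of_ne_nil _ (by simp)
    rw [← h5]
    exact hq.2.2.1

lemma IsPath.mem_split {v : V} (hv : v ∈ p) : ∃ l1 l2, p = l1 ++ v :: l2 :=
  List.append_of_mem hv

end Paths

section FlowBasics

variable {A : Finset (V × V)} {s t : V} {p : List V} {x y : (V × V) → ℝ}

lemma outSum_comb (c d : ℝ) (x y : (V × V) → ℝ) (v : V) :
    outSum A (fun a => c * x a + d * y a) v = c * outSum A x v + d * outSum A y v := by
  simp [outSum, Finset.mul_sum, Finset.sum_add_distrib]

lemma inSum_comb (c d : ℝ) (x y : (V × V) → ℝ) (v : V) :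
    inSum A (fun a => c * x a + d * y a) v = c * inSum A x v + d * inSum A y v := by
  simp [inSum, Finset.mul_sum, Finset.sum_add_distrib]

lemma sum_fiber_out (f : (V × V) → ℝ) (T : Finset V) :
    ∑ v ∈ T, outSum A f v = ∑ a ∈ A.filter (fun a => a.1 ∈ T), f a := by
  simp only [outSum, Finset.sum_filter]
  rw [Finset.sum_comm]
  refine Finset.sum_congr rfl fun a _ => ?_
  simp [eq_comm]

lemma sum_fiber_in (f : (V × V) → ℝ) (T : Finset V) :
    ∑ v ∈ T, inSum A f v = ∑ a ∈ A.filter (fun a => a.2 ∈ T), f a := by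
  simp only [inSum, Finset.sum_filter]
  rw [Finset.sum_comm]
  refine Finset.sum_congr rfl fun a _ => ?_
  simp [eq_comm]

lemma total_excess (f : (V × V) → ℝ) :
    ∑ v : V, (outSum A f v - inSum A f v) = 0 := by
  rw [Finset.sum_sub_distrib, sum_fiber_out f Finset.univ, sum_fiber_in f Finset.univ]
  simp

lemma flow_value_t (hx : IsFlow A s t x) (hst : s ≠ t) :
    inSum A x t - outSum A x t = 1 := by
  have h0 := total_excess (A := A) x
  have h1 : ∑ v ∈ ({s, t} : Finset V), (outSum A x v - inSum A x v) = 0 := by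
    rw [← h0]
    refine Finset.sum_subset (Finset.subset_univ _) ?_
    intro v _ hv
    simp only [Finset.mem_insert, Finset.mem_singleton, not_or] at hv
    rw [hx.2.2.1 v hv.1 hv.2]; ring
  rw [Finset.sum_pair hst] at h1
  have h2 := hx.2.2.2
  linarith

lemma outSum_chi (hp : IsPath A s t p) (v : V) :
    outSum A (chi p) v = if v ∈ p.dropLast then 1 else 0 := by
  have hnd : (pathEdges p).Nodup := pathEdges_nodup hp.2.2.2
  have h1 : outSum A (chi p) v
      = ((A.filter (fun a => a.1 = v)).filter (fun a => a ∈ pathEdges p)).card := by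
    simp [outSum, chi, Finset.sum_boole]
  have h2 : (A.filter (fun a => a.1 = v)).filter (fun a => a ∈ pathEdges p)
      = ((pathEdges p).filter (fun a => a.1 = v)).toFinset := by
    ext a
    simp only [Finset.mem_filter, List.mem_toFinset, List.mem_filter, decide_eq_true_eq]
    constructor
    · rintro ⟨⟨_, h⟩, hm⟩; exact ⟨hm, h⟩
    · rintro ⟨hm, h⟩; exact ⟨⟨hp.edge_mem_A hm, h⟩, hm⟩
  have h3 : ((pathEdges p).filter (fun a => a.1 = v)).toFinset.card
      = ((pathEdges p).filter (fun a => a.1 = v)).length :=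
    List.toFinset_card_of_nodup (hnd.filter _)
  have h4 : ((pathEdges p).filter (fun a => a.1 = v)).length
      = (p.dropLast).count v := by
    rw [List.count, ← map_fst_pathEdges, List.countP_map, List.countP_eq_length_filter]
    congr 1
  have h5 : (p.dropLast).count v = if v ∈ p.dropLast then 1 else 0 := by
    split
    · exact List.count_eq_one_of_mem (hp.2.2.2.sublist (List.dropLast_sublist p))
        (by assumption)
    · exact List.count_eq_zero_of_not_mem (by assumption)
  rw [h1, h2, h3, h4, h5]
  split <;> norm_num

lemma inSum_chi (hp : IsPath A s t p) (v : V) :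
    inSum A (chi p) v = if v ∈ p.tail then 1 else 0 := by
  have hnd : (pathEdges p).Nodup := pathEdges_nodup hp.2.2.2
  have h1 : inSum A (chi p) v
      = ((A.filter (fun a => a.2 = v)).filter (fun a => a ∈ pathEdges p)).card := by
    simp [inSum, chi, Finset.sum_boole]
  have h2 : (A.filter (fun a => a.2 = v)).filter (fun a => a ∈ pathEdges p)
      = ((pathEdges p).filter (fun a => a.2 = v)).toFinset := by
    ext a
    simp only [Finset.mem_filter, List.mem_toFinset, List.mem_filter, decide_eq_true_eq]
    constructor
    · rintro ⟨⟨_, h⟩, hm⟩; exact ⟨hm, h⟩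
    · rintro ⟨hm, h⟩; exact ⟨⟨hp.edge_mem_A hm, h⟩, hm⟩
  have h3 : ((pathEdges p).filter (fun a => a.2 = v)).toFinset.card
      = ((pathEdges p).filter (fun a => a.2 = v)).length :=
    List.toFinset_card_of_nodup (hnd.filter _)
  have h4 : ((pathEdges p).filter (fun a => a.2 = v)).length
      = (p.tail).count v := by
    rw [List.count, ← map_snd_pathEdges, List.countP_map, List.countP_eq_length_filter]
    congr 1
  have h5 : (p.tail).count v = if v ∈ p.tail then 1 else 0 := by
    split
    · exact List.count_eq_one_of_mem (hp.2.2.2.sublist (List.tail_sublist p))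
        (by assumption)
    · exact List.count_eq_zero_of_not_mem (by assumption)
  rw [h1, h2, h3, h4, h5]
  split <;> norm_num

lemma chi_nonneg (p : List V) (a : V × V) : 0 ≤ chi p a := by
  unfold chi; split <;> norm_num

lemma chi_le_one (p : List V) (a : V × V) : chi p a ≤ 1 := by
  unfold chi; split <;> norm_num

lemma chi_isFlow (hp : IsPath A s t p) (hst : s ≠ t) : IsFlow A s t (chi p) := by
  refine ⟨?_, chi_nonneg p, ?_, ?_⟩
  · intro a ha
    unfold chi
    rw [if_neg (fun hmem => ha (hp.edge_mem_A hmem))]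
  · intro v hvs hvt
    rw [outSum_chi hp, inSum_chi hp]
    have : v ∈ p.dropLast ↔ v ∈ p.tail := by
      rw [hp.mem_dropLast_iff, hp.mem_tail_iff]
      exact and_congr_right (fun _ => ⟨fun _ => hvs, fun _ => hvt⟩)
    simp only [this]
  · rw [outSum_chi hp, inSum_chi hp]
    rw [if_pos (hp.mem_dropLast_iff.mpr ⟨hp.s_mem, hst⟩),
      if_neg (fun h => (hp.mem_tail_iff.mp h).2 rfl)]
    norm_num

lemma convex_flowPolytope : Convex ℝ (flowPolytope A s t) := by
  rintro x hx y hy a b ha hb hab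
  have hfun : a • x + b • y = fun c => a * x c + b * y c := by
    funext c; simp [smul_eq_mul]
  refine ⟨?_, ?_, ?_, ?_⟩
  · intro c hc
    rw [hfun]
    simp only
    rw [hx.1 c hc, hy.1 c hc]; ring
  · intro c
    rw [hfun]
    have := hx.2.1 c; have := hy.2.1 c
    simp only
    nlinarith
  · intro v hvs hvt
    rw [hfun, outSum_comb, inSum_comb, hx.2.2.1 v hvs hvt, hy.2.2.1 v hvs hvt]
  · rw [hfun, outSum_comb, inSum_comb]
    have h1 := hx.2.2.2; have h2 := hy.2.2.2
    nlinarith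

end FlowBasics

section Decomp

variable {A : Finset (V × V)} {s t : V} {x : (V × V) → ℝ}

/-- From any value-1 flow one can extract an `s`–`t` path through arcs of positive flow. -/
lemma exists_pos_path (hA : Acyclic A) (hx : IsFlow A s t x) :
    ∃ p, IsPath A s t p ∧ ∀ a ∈ pathEdges p, 0 < x a := by
  classical
  set r : V → V → Prop := fun u w => (u, w) ∈ A ∧ 0 < x (u, w) with hr
  set Rch : Finset V := Finset.univ.filter (fun v => Relation.ReflTransGen r s v) with hRch
  have hs : s ∈ Rch := by
    rw [hRch]; simp only [Finset.mem_filter, Finset.mem_univ, true_and]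
    exact Relation.ReflTransGen.refl
  have hclosed : ∀ u w, u ∈ Rch → r u w → w ∈ Rch := by
    intro u w hu hr2
    simp only [hRch, Finset.mem_filter, Finset.mem_univ, true_and] at hu ⊢
    exact hu.tail hr2
  have ht : t ∈ Rch := by
    by_contra ht
    have hsum : ∑ v ∈ Rch, (outSum A x v - inSum A x v) = 1 := by
      rw [Finset.sum_eq_single_of_mem s hs]
      · exact hx.2.2.2
      · intro v hv hne
        rw [hx.2.2.1 v hne (fun he => ht (he ▸ hv))]; ring
    rw [Finset.sum_sub_distrib, sum_fiber_out, sum_fiber_in] at hsum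
    set B1 := A.filter (fun a => a.1 ∈ Rch) with hB1
    set B2 := A.filter (fun a => a.2 ∈ Rch) with hB2
    have e1 : ∑ a ∈ B1 ∩ B2, x a = ∑ a ∈ B1, x a := by
      refine Finset.sum_subset (Finset.inter_subset_left) ?_
      intro a ha hna
      by_contra hne
      have hpos : 0 < x a := lt_of_le_of_ne (hx.2.1 a) (Ne.symm hne)
      have haA : a ∈ A := (Finset.mem_filter.mp ha).1
      have h1 : a.1 ∈ Rch := (Finset.mem_filter.mp ha).2
      have h2 : a.2 ∈ Rch := hclosed a.1 a.2 h1 ⟨by rwa [Prod.mk.eta], by rwa [Prod.mk.eta]⟩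
      exact hna (Finset.mem_inter.mpr ⟨ha, Finset.mem_filter.mpr ⟨haA, h2⟩⟩)
    have e2 : ∑ a ∈ B1 ∩ B2, x a ≤ ∑ a ∈ B2, x a := by
      refine Finset.sum_le_sum_of_subset_of_nonneg (Finset.inter_subset_right) ?_
      intro a _ _; exact hx.2.1 a
    linarith
  simp only [hRch, Finset.mem_filter, Finset.mem_univ, true_and] at ht
  obtain ⟨l, hchain, hlast⟩ := List.exists_isChain_cons_of_relationReflTransGen ht
  have hchain' : (s :: l).Chain' r := hchain
  have hchainA : (s :: l).Chain' (fun u w => (u, w) ∈ A) :=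
    List.IsChain.imp (fun a b hab => hab.1) hchain'
  refine ⟨s :: l, ⟨hchainA, rfl, ?_, chain'_nodup hA hchainA⟩, ?_⟩
  · rw [List.getLast?_eq_getLast (by simp), hlast]
  · intro a ha
    exact (mem_pathEdges_of_chain' hchain' a ha).2

/-- A nonnegative flow with zero excess everywhere on an acyclic network is zero. -/
lemma zero_flow (hA : Acyclic A) (y : (V × V) → ℝ)
    (h0 : ∀ a, a ∉ A → y a = 0) (hnn : ∀ a, 0 ≤ y a)
    (hcons : ∀ v, outSum A y v = inSum A y v) : y = 0 := by
  classical
  funext a₀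
  by_contra ha₀
  have hpos : 0 < y a₀ := lt_of_le_of_ne (hnn a₀) (Ne.symm ha₀)
  have ha₀A : a₀ ∈ A := by
    by_contra h; rw [h0 a₀ h] at hpos; exact lt_irrefl 0 hpos
  have hout0 : 0 < outSum A y a₀.1 := by
    have hmem : a₀ ∈ A.filter (fun a => a.1 = a₀.1) := Finset.mem_filter.mpr ⟨ha₀A, rfl⟩
    calc 0 < y a₀ := hpos
    _ ≤ outSum A y a₀.1 := Finset.single_le_sum (fun a _ => hnn a) hmem
  have step : ∀ v, 0 < outSum A y v →
      ∃ u, ((u, v) ∈ A ∧ 0 < y (u, v)) ∧ 0 < outSum A y u := by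
    intro v hv
    have hin : 0 < inSum A y v := by rw [← hcons v]; exact hv
    have : ∃ a ∈ A.filter (fun a => a.2 = v), 0 < y a := by
      by_contra hno
      push_neg at hno
      have : inSum A y v ≤ 0 := Finset.sum_nonpos (fun a ha => hno a ha)
      linarith
    obtain ⟨a, ha, hya⟩ := this
    obtain ⟨haA, ha2⟩ := Finset.mem_filter.mp ha
    subst ha2
    refine ⟨a.1, ⟨by rwa [Prod.mk.eta], by rwa [Prod.mk.eta]⟩, ?_⟩
    have hmem : a ∈ A.filter (fun b => b.1 = a.1) := Finset.mem_filter.mpr ⟨haA, rfl⟩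
    calc (0:ℝ) < y a := hya
    _ ≤ outSum A y a.1 := Finset.single_le_sum (fun b _ => hnn b) hmem
  -- build an infinite backwards walk
  let g : ℕ → {v : V // 0 < outSum A y v} := fun n =>
    Nat.rec ⟨a₀.1, hout0⟩
      (fun _ prev => ⟨(step prev.1 prev.2).choose, (step prev.1 prev.2).choose_spec.2⟩) n
  have hstep : ∀ n, ((g (n + 1)).1, (g n).1) ∈ A ∧ 0 < y ((g (n + 1)).1, (g n).1) :=
    fun n => (step (g n).1 (g n).2).choose_spec.1
  have htrans : ∀ d i, Relation.TransGen (fun u w => (u, w) ∈ A)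
      ((g (i + d + 1)).1) ((g i).1) := by
    intro d
    induction d with
    | zero => intro i; exact Relation.TransGen.single (hstep i).1
    | succ d ih =>
      intro i
      exact Relation.TransGen.head (hstep (i + d + 1)).1 (ih i)
  obtain ⟨i, j, hne, heq⟩ :=
    Finite.exists_ne_map_eq_of_infinite (fun n => (g n).1)
  rcases lt_or_gt_of_ne hne with h | h
  · obtain ⟨d, rfl⟩ : ∃ d, j = i + d + 1 := ⟨j - i - 1, by omega⟩
    exact hA _ (heq ▸ htrans d i)
  · obtain ⟨d, rfl⟩ : ∃ d, i = j + d + 1 := ⟨i - j - 1, by omega⟩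
    exact hA _ (heq ▸ htrans d j)

lemma flow_decomp_aux (hA : Acyclic A) (hst : s ≠ t) :
    ∀ n (x : (V × V) → ℝ), (A.filter (fun a => 0 < x a)).card ≤ n → IsFlow A s t x →
      x ∈ convexHull ℝ (chi '' {p | IsPath A s t p}) := by
  intro n
  induction n with
  | zero =>
    intro x hcard hx
    exfalso
    obtain ⟨p, hp, hpos⟩ := exists_pos_path hA hx
    have hne : pathEdges p ≠ [] := by
      intro hE
      have := hp.cons_form
      cases htl : p.tail with
      | nil =>
        have : p = [s] := by rw [hp.cons_form, htl]
        have h2 := hp.2.2.1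
        rw [this] at h2
        simp at h2
        exact hst h2
      | cons b l =>
        have hpe : p = s :: b :: l := by rw [hp.cons_form, htl]
        rw [hpe] at hE
        simp [pathEdges_cons_cons] at hE
    obtain ⟨a, ha⟩ := List.exists_mem_of_ne_nil _ hne
    have : a ∈ A.filter (fun a => 0 < x a) :=
      Finset.mem_filter.mpr ⟨hp.edge_mem_A ha, hpos a ha⟩
    have := Finset.card_pos.mpr ⟨a, this⟩
    omega
  | succ n ih =>
    intro x hcard hx
    obtain ⟨p, hp, hpos⟩ := exists_pos_path hA hx
    have hchi : chi p ∈ chi '' {p | IsPath A s t p} := Set.mem_image_of_mem _ hp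
    have hne : (pathEdges p).toFinset.Nonempty := by
      rw [List.toFinset_nonempty_iff]
      intro hE
      cases htl : p.tail with
      | nil =>
        have : p = [s] := by rw [hp.cons_form, htl]
        have h2 := hp.2.2.1
        rw [this] at h2
        simp at h2
        exact hst h2
      | cons b l =>
        have hpe : p = s :: b :: l := by rw [hp.cons_form, htl]
        rw [hpe] at hE
        simp [pathEdges_cons_cons] at hE
    set F := (pathEdges p).toFinset with hF
    set ε := F.inf' hne x with hε
    have hεpos : 0 < ε := by
      rw [hε, Finset.lt_inf'_iff]
      intro b hb
      exact hpos b (List.mem_toFinset.mp hb)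
    have hεle : ∀ a ∈ pathEdges p, ε ≤ x a := by
      intro a ha
      exact Finset.inf'_le _ (List.mem_toFinset.mpr ha)
    have hchiE : ∀ a : V × V, a ∈ pathEdges p → chi p a = 1 := by
      intro a ha; unfold chi; rw [if_pos ha]
    have hchiN : ∀ a : V × V, a ∉ pathEdges p → chi p a = 0 := by
      intro a ha; unfold chi; rw [if_neg ha]
    rcases le_or_gt 1 ε with h1 | h1
    · -- x = chi p
      have hy : (fun a => x a - chi p a) = 0 := by
        apply zero_flow hA
        · intro a ha
          rw [hx.1 a ha, hchiN a (fun hmem => ha (hp.edge_mem_A hmem))]; ring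
        · intro a
          by_cases ha : a ∈ pathEdges p
          · rw [hchiE a ha]
            have := hεle a ha
            linarith
          · rw [hchiN a ha]
            have := hx.2.1 a
            linarith
        · intro v
          have hfun : (fun a => x a - chi p a) = fun a => 1 * x a + (-1) * chi p a := by
            funext a; ring
          rw [hfun, outSum_comb, inSum_comb]
          have hc := chi_isFlow hp hst
          by_cases hvs : v = s
          · subst hvs
            have e1 := hx.2.2.2
            have e2 := hc.2.2.2
            linarith
          · by_cases hvt : v = t
            · subst hvt
              have e1 := flow_value_t hx hst
              have e2 := flow_value_t hc hst
              linarith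
            · rw [hx.2.2.1 v hvs hvt, hc.2.2.1 v hvs hvt]
      have hxchi : x = chi p := by
        funext a
        have := congrFun hy a
        simp only [Pi.zero_apply] at this
        linarith
      rw [hxchi]
      exact subset_convexHull ℝ _ hchi
    · -- recurse
      have h1' : 0 < 1 - ε := by linarith
      set x' : (V × V) → ℝ := fun a => (1 - ε)⁻¹ * (x a - ε * chi p a) with hx'
      have hx'fun : x' = fun a => (1 - ε)⁻¹ * x a + (-(ε * (1 - ε)⁻¹)) * chi p a := by
        funext a; rw [hx']; ring
      have hchiflow := chi_isFlow hp hst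
      have hx'flow : IsFlow A s t x' := by
        refine ⟨?_, ?_, ?_, ?_⟩
        · intro a ha
          show (1 - ε)⁻¹ * (x a - ε * chi p a) = 0
          rw [hx.1 a ha, hchiN a (fun hmem => ha (hp.edge_mem_A hmem))]; ring
        · intro a
          show 0 ≤ (1 - ε)⁻¹ * (x a - ε * chi p a)
          by_cases ha : a ∈ pathEdges p
          · have := hεle a ha
            rw [hchiE a ha]
            have h2 : (0:ℝ) ≤ x a - ε * 1 := by linarith
            exact mul_nonneg (le_of_lt (inv_pos.mpr h1')) h2
          · rw [hchiN a ha, mul_zero, sub_zero]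
            have := hx.2.1 a
            exact mul_nonneg (le_of_lt (inv_pos.mpr h1')) this
        · intro v hvs hvt
          rw [hx'fun, outSum_comb, inSum_comb, hx.2.2.1 v hvs hvt,
            hchiflow.2.2.1 v hvs hvt]
        · rw [hx'fun, outSum_comb, inSum_comb]
          have e1 := hx.2.2.2
          have e2 := hchiflow.2.2.2
          field_simp
          nlinarith
      have hsubset : A.filter (fun a => 0 < x' a) ⊆ A.filter (fun a => 0 < x a) := by
        intro a ha
        obtain ⟨haA, hax'⟩ := Finset.mem_filter.mp ha
        refine Finset.mem_filter.mpr ⟨haA, ?_⟩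
        by_cases hmem : a ∈ pathEdges p
        · exact lt_of_lt_of_le hεpos (hεle a hmem)
        · replace hax' : 0 < (1 - ε)⁻¹ * (x a - ε * chi p a) := hax'
          rw [hchiN a hmem, mul_zero, sub_zero] at hax'
          have hc : 0 < (1 - ε)⁻¹ := inv_pos.mpr h1'
          nlinarith
      obtain ⟨b, hbF, hbe⟩ : ∃ b ∈ F, ε = x b := Finset.exists_mem_eq_inf' hne x
      have hbmem : b ∈ pathEdges p := List.mem_toFinset.mp hbF
      have hb_in : b ∈ A.filter (fun a => 0 < x a) :=
        Finset.mem_filter.mpr ⟨hp.edge_mem_A hbmem, by rw [← hbe]; exact hεpos⟩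
      have hb_out : b ∉ A.filter (fun a => 0 < x' a) := by
        intro hmem
        have hlt : 0 < (1 - ε)⁻¹ * (x b - ε * chi p b) := (Finset.mem_filter.mp hmem).2
        rw [hchiE b hbmem, ← hbe] at hlt
        have h0 : ε - ε * 1 = 0 := by ring
        rw [h0, mul_zero] at hlt
        exact lt_irrefl 0 hlt
      have hcard' : (A.filter (fun a => 0 < x' a)).card ≤ n := by
        have hss : A.filter (fun a => 0 < x' a) ⊂ A.filter (fun a => 0 < x a) :=
          ⟨hsubset, fun h => hb_out (h hb_in)⟩
        have := Finset.card_lt_card hss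
        omega
      have hx'conv := ih x' hcard' hx'flow
      have hcomb : x = ε • chi p + (1 - ε) • x' := by
        funext a
        simp only [Pi.add_apply, Pi.smul_apply, smul_eq_mul, hx']
        field_simp
        ring
      rw [hcomb]
      exact (convex_convexHull ℝ _) (subset_convexHull ℝ _ hchi) hx'conv
        (le_of_lt hεpos) (by linarith) (by ring)

/-- The flow polytope is the convex hull of the path indicator vectors. -/
lemma flowPolytope_eq_convexHull (hA : Acyclic A) (hst : s ≠ t) :
    flowPolytope A s t = convexHull ℝ (chi '' {p | IsPath A s t p}) := by
  apply Set.Subset.antisymm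
  · intro x hx
    exact flow_decomp_aux hA hst _ x le_rfl hx
  · rw [show flowPolytope A s t = {x | IsFlow A s t x} from rfl]
    refine convexHull_min ?_ convex_flowPolytope
    rintro y ⟨p, hp, rfl⟩
    exact chi_isFlow hp hst

end Decomp

section Corridors


variable {A : Finset (V × V)} {s t : V}

/-- Internal node of the reduced network: in- and out-degree 1. -/
def IsInternal (A : Finset (V × V)) (s t : V) (v : V) : Prop :=
  dminus A s t v = 1 ∧ dplus A s t v = 1

lemma red_out_unique {v w w' : V} (h : dplus A s t v = 1)
    (h1 : (v, w) ∈ redArcs A s t) (h2 : (v, w') ∈ redArcs A s t) : w = w' := by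
  unfold dplus at h
  have hc := Finset.card_le_one.mp (le_of_eq h)
  have m1 : (v, w) ∈ (redArcs A s t).filter (fun a => a.1 = v) :=
    Finset.mem_filter.mpr ⟨h1, rfl⟩
  have m2 : (v, w') ∈ (redArcs A s t).filter (fun a => a.1 = v) :=
    Finset.mem_filter.mpr ⟨h2, rfl⟩
  have := hc _ m1 _ m2
  exact congrArg Prod.snd this

lemma red_in_unique {v u u' : V} (h : dminus A s t v = 1)
    (h1 : (u, v) ∈ redArcs A s t) (h2 : (u', v) ∈ redArcs A s t) : u = u' := by
  unfold dminus at h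
  have hc := Finset.card_le_one.mp (le_of_eq h)
  have m1 : (u, v) ∈ (redArcs A s t).filter (fun a => a.2 = v) :=
    Finset.mem_filter.mpr ⟨h1, rfl⟩
  have m2 : (u', v) ∈ (redArcs A s t).filter (fun a => a.2 = v) :=
    Finset.mem_filter.mpr ⟨h2, rfl⟩
  have := hc _ m1 _ m2
  exact congrArg Prod.fst this

lemma dplus_pos_of_red {v w : V} (h : (v, w) ∈ redArcs A s t) : 1 ≤ dplus A s t v :=
  Finset.card_pos.mpr ⟨(v, w), Finset.mem_filter.mpr ⟨h, rfl⟩⟩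

lemma dminus_pos_of_red {v w : V} (h : (v, w) ∈ redArcs A s t) : 1 ≤ dminus A s t w :=
  Finset.card_pos.mpr ⟨(v, w), Finset.mem_filter.mpr ⟨h, rfl⟩⟩

lemma dminus_pos_of_ne_s {v : V} (hv : ∃ p, IsPath A s t p ∧ v ∈ p) (hne : v ≠ s) :
    1 ≤ dminus A s t v := by
  obtain ⟨p, hp, hvp⟩ := hv
  obtain ⟨u, hu⟩ := hp.exists_in_arc hvp hne
  exact dminus_pos_of_red (hp.edge_mem_red hu)

lemma dplus_pos_of_ne_t {v : V} (hv : ∃ p, IsPath A s t p ∧ v ∈ p) (hne : v ≠ t) :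
    1 ≤ dplus A s t v := by
  obtain ⟨p, hp, hvp⟩ := hv
  obtain ⟨w, hw⟩ := hp.exists_out_arc hvp hne
  exact dplus_pos_of_red (hp.edge_mem_red hw)

lemma red_fst_on_path {v w : V} (h : (v, w) ∈ redArcs A s t) :
    ∃ p, IsPath A s t p ∧ v ∈ p := by
  obtain ⟨p, hp, hmem⟩ := exists_path_of_red h
  exact ⟨p, hp, fst_mem_of_mem_pathEdges hmem⟩

lemma red_snd_on_path {v w : V} (h : (v, w) ∈ redArcs A s t) :
    ∃ p, IsPath A s t p ∧ w ∈ p := by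
  obtain ⟨p, hp, hmem⟩ := exists_path_of_red h
  exact ⟨p, hp, snd_mem_of_mem_pathEdges hmem⟩

lemma ne_t_of_red_fst {v w : V} (h : (v, w) ∈ redArcs A s t) : v ≠ t := by
  intro he; subst he
  have := dplus_pos_of_red h
  rw [dplus_t_eq_zero] at this
  omega

lemma ne_s_of_red_snd {v w : V} (h : (v, w) ∈ redArcs A s t) : w ≠ s := by
  intro he; subst he
  have := dminus_pos_of_red h
  rw [dminus_s_eq_zero] at this
  omega

/-- Successor of a node with reduced out-degree 1. -/
noncomputable def rsucc (A : Finset (V × V)) (s t : V) (v : V) : V :=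
  if h : ((redArcs A s t).filter fun a => a.1 = v).card = 1 then
    (Finset.card_eq_one.mp h).choose.2
  else v

/-- Predecessor of a node with reduced in-degree 1. -/
noncomputable def rpred (A : Finset (V × V)) (s t : V) (v : V) : V :=
  if h : ((redArcs A s t).filter fun a => a.2 = v).card = 1 then
    (Finset.card_eq_one.mp h).choose.1
  else v

omit [Fintype V] in
lemma rsucc_spec {v : V} (h : dplus A s t v = 1) :
    (v, rsucc A s t v) ∈ redArcs A s t := by
  have h' : ((redArcs A s t).filter fun a => a.1 = v).card = 1 := h
  unfold rsucc
  rw [dif_pos h']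
  set a := (Finset.card_eq_one.mp h').choose with ha
  have hspec : (redArcs A s t).filter (fun a => a.1 = v) = {a} :=
    (Finset.card_eq_one.mp h').choose_spec
  have hm : a ∈ ({a} : Finset (V × V)) := Finset.mem_singleton_self _
  rw [← hspec] at hm
  obtain ⟨hred, hfst⟩ := Finset.mem_filter.mp hm
  have he : (v, a.2) = a := Prod.ext hfst.symm rfl
  rw [he]
  exact hred

omit [Fintype V] in
lemma rpred_spec {v : V} (h : dminus A s t v = 1) :
    (rpred A s t v, v) ∈ redArcs A s t := by
  have h' : ((redArcs A s t).filter fun a => a.2 = v).card = 1 := h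
  unfold rpred
  rw [dif_pos h']
  set a := (Finset.card_eq_one.mp h').choose with ha
  have hspec : (redArcs A s t).filter (fun a => a.2 = v) = {a} :=
    (Finset.card_eq_one.mp h').choose_spec
  have hm : a ∈ ({a} : Finset (V × V)) := Finset.mem_singleton_self _
  rw [← hspec] at hm
  obtain ⟨hred, hsnd⟩ := Finset.mem_filter.mp hm
  have he : (a.1, v) = a := Prod.ext rfl hsnd.symm
  rw [he]
  exact hred

lemma rsucc_unique {v w : V} (h : dplus A s t v = 1) (hw : (v, w) ∈ redArcs A s t) :
    w = rsucc A s t v := red_out_unique h hw (rsucc_spec h)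

lemma rpred_unique {v u : V} (h : dminus A s t v = 1) (hu : (u, v) ∈ redArcs A s t) :
    u = rpred A s t v := red_in_unique h hu (rpred_spec h)

/-- Arcs at or below `v` in the reduced network (used as a termination measure). -/
noncomputable def rdesc (A : Finset (V × V)) (s t : V) (v : V) : Finset (V × V) :=
  A.filter (fun a => a.1 = v ∨ Relation.TransGen (fun a b => (a, b) ∈ redArcs A s t) v a.1)

/-- Arcs at or above `v` in the reduced network (used as a termination measure). -/
noncomputable def ranc (A : Finset (V × V)) (s t : V) (v : V) : Finset (V × V) :=
  A.filter (fun a => a.2 = v ∨ Relation.TransGen (fun a b => (a, b) ∈ redArcs A s t) a.2 v)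

omit [Fintype V] in
lemma acyclic_red (hA : Acyclic A) (v : V) :
    ¬ Relation.TransGen (fun a b => (a, b) ∈ redArcs A s t) v v := by
  intro h
  exact hA v (Relation.TransGen.mono (fun a b hab => red_subset_A hab) v v h)

omit [Fintype V] in
lemma rdesc_lt_of_red (hA : Acyclic A) {v w : V} (h : (v, w) ∈ redArcs A s t) :
    (rdesc A s t w).card < (rdesc A s t v).card := by
  apply Finset.card_lt_card
  constructor
  · intro z hz
    simp only [rdesc, Finset.mem_filter] at hz ⊢
    refine ⟨hz.1, Or.inr ?_⟩
    rcases hz.2 with h1 | h1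
    · exact h1 ▸ Relation.TransGen.single h
    · exact Relation.TransGen.head h h1
  · intro hsub
    have hv : (v, w) ∈ rdesc A s t v :=
      Finset.mem_filter.mpr ⟨red_subset_A h, Or.inl rfl⟩
    have h2 := (Finset.mem_filter.mp (hsub hv)).2
    rcases h2 with h1 | h1
    · exact acyclic_red hA w (Relation.TransGen.single (show (w, w) ∈ redArcs A s t from h1 ▸ h))
    · exact acyclic_red hA w (Relation.TransGen.tail h1 h)

omit [Fintype V] in
lemma ranc_lt_of_red (hA : Acyclic A) {v w : V} (h : (v, w) ∈ redArcs A s t) :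
    (ranc A s t v).card < (ranc A s t w).card := by
  apply Finset.card_lt_card
  constructor
  · intro z hz
    simp only [ranc, Finset.mem_filter] at hz ⊢
    refine ⟨hz.1, Or.inr ?_⟩
    rcases hz.2 with h1 | h1
    · exact h1 ▸ Relation.TransGen.single h
    · exact h1.tail h
  · intro hsub
    have hv : (v, w) ∈ ranc A s t w :=
      Finset.mem_filter.mpr ⟨red_subset_A h, Or.inl rfl⟩
    have h2 := (Finset.mem_filter.mp (hsub hv)).2
    rcases h2 with h1 | h1
    · exact acyclic_red hA v (Relation.TransGen.single (show (v, v) ∈ redArcs A s t from h1 ▸ h))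
    · exact acyclic_red hA v (Relation.TransGen.head h h1)

/-- Forward extension: walk forward while the current node is internal. -/
noncomputable def fwd (hA : Acyclic A) (s t : V) (v : V) : List V :=
  if h : IsInternal A s t v then v :: fwd hA s t (rsucc A s t v) else [v]
termination_by (rdesc A s t v).card
decreasing_by exact rdesc_lt_of_red hA (rsucc_spec h.2)

/-- Backward extension: walk backward while the current node is internal. -/
noncomputable def bwd (hA : Acyclic A) (s t : V) (u : V) : List V :=
  if h : IsInternal A s t u then bwd hA s t (rpred A s t u) ++ [u] else [u]
termination_by (ranc A s t u).card
decreasing_by exact ranc_lt_of_red hA (rpred_spec h.1)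

end Corridors

section CorridorProps

variable {A : Finset (V × V)} {s t : V}

lemma tail_append_ne_nil {l1 l2 : List V} (h : l1 ≠ []) :
    (l1 ++ l2).tail = l1.tail ++ l2 := by
  cases l1 with
  | nil => exact absurd rfl h
  | cons a as => rfl

lemma dropLast_append_ne_nil {l1 l2 : List V} (h : l2 ≠ []) :
    (l1 ++ l2).dropLast = l1 ++ l2.dropLast := by
  induction l1 with
  | nil => rfl
  | cons a as ih =>
    rw [List.cons_append, List.dropLast_cons_of_ne_nil (by
      intro hc
      exact h (by simpa using (List.append_eq_nil_iff.mp hc).2)), ih]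
    rfl

lemma fwd_ne_nil (hA : Acyclic A) (v : V) : fwd hA s t v ≠ [] := by
  rw [fwd]
  split <;> simp

lemma fwd_head (hA : Acyclic A) (v : V) : (fwd hA s t v).head? = some v := by
  rw [fwd]
  split <;> simp

lemma bwd_ne_nil (hA : Acyclic A) (u : V) : bwd hA s t u ≠ [] := by
  rw [bwd]
  split <;> simp

lemma bwd_last (hA : Acyclic A) (u : V) : (bwd hA s t u).getLast? = some u := by
  rw [bwd]
  split
  · rw [List.getLast?_concat]
  · rfl

lemma fwd_chain (hA : Acyclic A) (v : V) :
    (fwd hA s t v).Chain' (fun a b => (a, b) ∈ redArcs A s t) := by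
  induction v using fwd.induct hA s t with
  | case1 v h ih =>
    rw [fwd, dif_pos h]
    simp only [List.Chain']
    rw [List.isChain_cons]
    refine ⟨?_, ih⟩
    intro y hy
    rw [fwd_head hA] at hy
    rw [Option.mem_def, Option.some.injEq] at hy
    rw [← hy]
    exact rsucc_spec h.2
  | case2 v h =>
    rw [fwd, dif_neg h]
    simp [List.Chain']

lemma fwd_dropLast_int (hA : Acyclic A) (v : V) :
    ∀ w ∈ (fwd hA s t v).dropLast, IsInternal A s t w := by
  induction v using fwd.induct hA s t with
  | case1 v h ih =>
    rw [fwd, dif_pos h, List.dropLast_cons_of_ne_nil (fwd_ne_nil hA _)]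
    intro w hw
    rcases List.mem_cons.mp hw with h1 | h1
    · exact h1 ▸ h
    · exact ih w h1
  | case2 v h =>
    rw [fwd, dif_neg h]
    simp

lemma fwd_last_not_int (hA : Acyclic A) (v : V) :
    ∀ z, (fwd hA s t v).getLast? = some z → ¬ IsInternal A s t z := by
  induction v using fwd.induct hA s t with
  | case1 v h ih =>
    intro z hz
    rw [fwd, dif_pos h] at hz
    have hne := fwd_ne_nil hA (rsucc A s t v) (s := s) (t := t)
    cases hf : fwd hA s t (rsucc A s t v) with
    | nil => exact absurd hf hne
    | cons b l =>
      rw [hf, List.getLast?_cons_cons] at hz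
      exact ih z (by rw [hf]; exact hz)
  | case2 v h =>
    intro z hz
    rw [fwd, dif_neg h] at hz
    simp at hz
    exact hz ▸ h

lemma bwd_chain (hA : Acyclic A) (u : V) :
    (bwd hA s t u).Chain' (fun a b => (a, b) ∈ redArcs A s t) := by
  induction u using bwd.induct hA s t with
  | case1 u h ih =>
    rw [bwd, dif_pos h]
    simp only [List.Chain']
    rw [List.isChain_append]
    refine ⟨ih, List.isChain_singleton _, ?_⟩
    intro x hx y hy
    rw [bwd_last hA] at hx
    simp only [Option.mem_def, Option.some.injEq] at hx hy
    have hyu : y = u := by simpa [eq_comm] using hy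
    rw [← hx, hyu]
    exact rpred_spec h.1
  | case2 u h =>
    rw [bwd, dif_neg h]
    simp [List.Chain']

lemma bwd_tail_int (hA : Acyclic A) (u : V) :
    ∀ w ∈ (bwd hA s t u).tail, IsInternal A s t w := by
  induction u using bwd.induct hA s t with
  | case1 u h ih =>
    rw [bwd, dif_pos h, tail_append_ne_nil (bwd_ne_nil hA _)]
    intro w hw
    rcases List.mem_append.mp hw with h1 | h1
    · exact ih w h1
    · rw [List.mem_singleton.mp h1]; exact h
  | case2 u h =>
    rw [bwd, dif_neg h]
    simp

lemma bwd_head_not_int (hA : Acyclic A) (u : V) :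
    ∀ z, (bwd hA s t u).head? = some z → ¬ IsInternal A s t z := by
  induction u using bwd.induct hA s t with
  | case1 u h ih =>
    intro z hz
    rw [bwd, dif_pos h, List.head?_append_of_ne_nil _ (bwd_ne_nil hA _)] at hz
    exact ih z hz
  | case2 u h =>
    intro z hz
    rw [bwd, dif_neg h] at hz
    simp at hz
    exact hz ▸ h

lemma fwd_unique (hA : Acyclic A) :
    ∀ (l : List V), l ≠ [] →
    l.Chain' (fun a b => (a, b) ∈ redArcs A s t) →
    (∀ w ∈ l.dropLast, IsInternal A s t w) →
    (∀ z, l.getLast? = some z → ¬ IsInternal A s t z) →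
    ∀ v, l.head? = some v → l = fwd hA s t v := by
  intro l
  induction l with
  | nil => intro h; exact absurd rfl h
  | cons v' rest ih =>
    intro _ hchain hint hlast v hhead
    have hv : v' = v := by simpa using hhead
    subst hv
    cases rest with
    | nil =>
      have : ¬ IsInternal A s t v' := hlast v' rfl
      rw [fwd, dif_neg this]
    | cons w rest' =>
      have hintv : IsInternal A s t v' := by
        apply hint
        rw [List.dropLast_cons_of_ne_nil (by simp)]
        exact List.mem_cons_self
      have harc : (v', w) ∈ redArcs A s t := hchain.rel_head
      have hw : w = rsucc A s t v' := rsucc_unique hintv.2 harc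
      rw [fwd, dif_pos hintv]
      congr 1
      refine ih (by simp) hchain.tail ?_ ?_ w rfl |>.trans (by rw [hw])
      · intro z hz
        apply hint
        rw [List.dropLast_cons_of_ne_nil (by simp)]
        exact List.mem_cons_of_mem _ hz
      · intro z hz
        apply hlast
        rw [List.getLast?_cons_cons]
        exact hz

lemma bwd_unique (hA : Acyclic A) (l : List V) : l ≠ [] →
    l.Chain' (fun a b => (a, b) ∈ redArcs A s t) →
    (∀ w ∈ l.tail, IsInternal A s t w) →
    (∀ z, l.head? = some z → ¬ IsInternal A s t z) →
    ∀ u, l.getLast? = some u → l = bwd hA s t u := by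
  induction l using List.reverseRecOn with
  | nil => intro h; exact absurd rfl h
  | append_singleton l' u' ih =>
    intro _ hchain hint hhead u hlast
    have hu : u' = u := by rwa [List.getLast?_concat, Option.some.injEq] at hlast
    subst hu
    by_cases hl'e : l' = []
    · subst hl'e
      have : ¬ IsInternal A s t u' := hhead u' rfl
      rw [bwd, dif_neg this]
      rfl
    · have hl'ne : l' ≠ [] := hl'e
      have hintu : IsInternal A s t u' := by
        apply hint
        rw [tail_append_ne_nil hl'ne]
        exact List.mem_append_right _ (List.mem_singleton_self _)
      obtain ⟨x, hx⟩ : ∃ x, l'.getLast? = some x :=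
        ⟨l'.getLast hl'ne, List.getLast?_eq_getLast _⟩
      have harc : (x, u') ∈ redArcs A s t := by
        obtain ⟨h1, h2, h3⟩ := List.isChain_append.mp hchain
        exact h3 x hx u' rfl
      have hx' : x = rpred A s t u' := rpred_unique hintu.1 harc
      rw [bwd, dif_pos hintu]
      congr 1
      refine (ih hl'ne (List.isChain_append.mp hchain).1 ?_ ?_ x hx).trans (by rw [hx'])
      · intro z hz
        apply hint
        rw [tail_append_ne_nil hl'ne]
        exact List.mem_append_left _ hz
      · intro z hz
        apply hhead
        rwa [List.head?_append_of_ne_nil _ hl'ne]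

/-- The corridor through a reduced arc. -/
noncomputable def corridorOf (hA : Acyclic A) (s t : V) (a : V × V) : List V :=
  bwd hA s t a.1 ++ fwd hA s t a.2

lemma corridorOf_isCorridor (hA : Acyclic A) {a : V × V} (ha : a ∈ redArcs A s t) :
    IsCorridor A s t (corridorOf hA s t a) ∧ a ∈ pathEdges (corridorOf hA s t a) := by
  have hbne := bwd_ne_nil hA a.1 (s := s) (t := t)
  have hfne := fwd_ne_nil hA a.2 (s := s) (t := t)
  have hblast := bwd_last hA a.1 (s := s) (t := t)
  have hfhead := fwd_head hA a.2 (s := s) (t := t)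
  have hchain : (corridorOf hA s t a).Chain' (fun u v => (u, v) ∈ redArcs A s t) := by
    rw [corridorOf]
    simp only [List.Chain']
    rw [List.isChain_append]
    refine ⟨bwd_chain hA a.1, fwd_chain hA a.2, ?_⟩
    intro x hx y hy
    rw [hblast] at hx; rw [hfhead] at hy
    simp only [Option.mem_def, Option.some.injEq] at hx hy
    rw [← hx, ← hy, Prod.mk.eta]
    exact ha
  constructor
  · refine ⟨?_, hchain, ?_, ?_, ?_⟩
    · rw [corridorOf, List.length_append]
      have h1 : 1 ≤ (bwd hA s t a.1).length := List.length_pos_iff.mpr hbne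
      have h2 : 1 ≤ (fwd hA s t a.2).length := List.length_pos_iff.mpr hfne
      omega
    · intro v hv
      rw [corridorOf, tail_append_ne_nil hbne, dropLast_append_ne_nil hfne] at hv
      rcases List.mem_append.mp hv with h1 | h1
      · exact bwd_tail_int hA a.1 v h1
      · exact fwd_dropLast_int hA a.2 v h1
    · intro h hh
      rw [corridorOf, List.head?_append_of_ne_nil _ hbne] at hh
      have := bwd_head_not_int hA a.1 h hh
      rw [IsInternal, not_and_or] at this
      exact this
    · intro z hz
      rw [corridorOf, List.getLast?_append_of_ne_nil _ hfne] at hz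
      have := fwd_last_not_int hA a.2 z hz
      rw [IsInternal, not_and_or] at this
      exact this
  · rw [corridorOf]
    conv_lhs => rw [show a = (a.1, a.2) from rfl]
    have hb : bwd hA s t a.1 = (bwd hA s t a.1).dropLast ++ [a.1] := by
      conv_lhs => rw [← List.dropLast_append_getLast hbne]
      congr 1
      rw [List.getLast?_eq_getLast hbne, Option.some.injEq] at hblast
      rw [hblast]
    have hf : fwd hA s t a.2 = a.2 :: (fwd hA s t a.2).tail := by
      conv_lhs => rw [← List.cons_head_tail hfne]
      congr 1
      rw [List.head?_eq_head hfne, Option.some.injEq] at hfhead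
      rw [hfhead]
    rw [hb, hf, List.append_assoc, List.singleton_append]
    exact mem_pathEdges_of_split _ _ _ _

/-- Any corridor containing an arc is the corridor through that arc. -/
lemma corridor_unique (hA : Acyclic A) {c : List V} (hc : IsCorridor A s t c)
    {a : V × V} (ha : a ∈ pathEdges c) : c = corridorOf hA s t a := by
  obtain ⟨hlen, hchain, hint, hhead, hlast⟩ := hc
  obtain ⟨l1, l2, hsplit⟩ := mem_pathEdges_split ha
  have hc2 : c = (l1 ++ [a.1]) ++ (a.2 :: l2) := by rw [hsplit]; simp
  have htd : c.tail.dropLast = (l1 ++ [a.1]).tail ++ (a.2 :: l2).dropLast := by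
    rw [hc2, tail_append_ne_nil (by simp), dropLast_append_ne_nil (by simp)]
  have hbwd : l1 ++ [a.1] = bwd hA s t a.1 := by
    apply bwd_unique hA _ (by simp) (List.IsChain.prefix hchain ⟨a.2 :: l2, hc2.symm⟩)
    · intro w hw
      have : w ∈ c.tail.dropLast := by
        rw [htd]; exact List.mem_append_left _ hw
      have h2 := hint w this
      exact ⟨h2.1, h2.2⟩
    · intro z hz
      rw [← List.head?_append_of_ne_nil (l₂ := a.2 :: l2) _ (by simp), ← hc2] at hz
      have := hhead z hz
      rw [IsInternal]
      tauto
    · exact List.getLast?_concat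
  have hfwd : a.2 :: l2 = fwd hA s t a.2 := by
    apply fwd_unique hA _ (by simp) (List.IsChain.suffix hchain ⟨l1 ++ [a.1], hc2.symm⟩)
    · intro w hw
      have : w ∈ c.tail.dropLast := by
        rw [htd]; exact List.mem_append_right _ hw
      have h2 := hint w this
      exact ⟨h2.1, h2.2⟩
    · intro z hz
      have hcg : c.getLast? = (a.2 :: l2).getLast? := by
        rw [hc2]; exact List.getLast?_append_of_ne_nil _ (by simp)
      have := hlast z (by rw [hcg]; exact hz)
      rw [IsInternal]
      tauto
    · rfl
  rw [hc2, corridorOf, hbwd, hfwd]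

end CorridorProps

section AllOrNothing

variable {A : Finset (V × V)} {s t : V} {p c : List V}

lemma corridor_prop_fwd (hp : IsPath A s t p) :
    ∀ (l2 : List V) (v : V),
      (v :: l2).Chain' (fun a b => (a, b) ∈ redArcs A s t) →
      (∀ w ∈ (v :: l2).dropLast, IsInternal A s t w) →
      (∃ u, (u, v) ∈ pathEdges p) →
      ∀ b ∈ pathEdges (v :: l2), b ∈ pathEdges p := by
  intro l2
  induction l2 with
  | nil => intro v _ _ _ b hb; simp [pathEdges_single] at hb
  | cons w l2' ih =>
    intro v hchain hint hin b hb
    have hintv : IsInternal A s t v := by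
      apply hint
      rw [List.dropLast_cons_of_ne_nil (by simp)]
      exact List.mem_cons_self
    obtain ⟨u, hu⟩ := hin
    have hvmem : v ∈ p := snd_mem_of_mem_pathEdges hu
    have hvt : v ≠ t := by
      intro he
      have := hintv.2
      rw [he, dplus_t_eq_zero] at this
      omega
    obtain ⟨w', hw'⟩ := hp.exists_out_arc hvmem hvt
    have hred1 : (v, w') ∈ redArcs A s t := hp.edge_mem_red hw'
    have hred2 : (v, w) ∈ redArcs A s t := hchain.rel_head
    have hww : w = w' := red_out_unique hintv.2 hred2 hred1
    rw [pathEdges_cons_cons] at hb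
    rcases List.mem_cons.mp hb with h1 | h1
    · rw [h1, hww]; exact hw'
    · refine ih w hchain.tail ?_ ⟨v, hww ▸ hw'⟩ b h1
      intro z hz
      apply hint
      rw [List.dropLast_cons_of_ne_nil (by simp)]
      exact List.mem_cons_of_mem _ hz

lemma corridor_prop_bwd (hp : IsPath A s t p) :
    ∀ (l1 : List V) (u : V),
      (l1 ++ [u]).Chain' (fun a b => (a, b) ∈ redArcs A s t) →
      (∀ w ∈ (l1 ++ [u]).tail, IsInternal A s t w) →
      (∃ v, (u, v) ∈ pathEdges p) →
      ∀ b ∈ pathEdges (l1 ++ [u]), b ∈ pathEdges p := by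
  intro l1
  induction l1 using List.reverseRecOn with
  | nil => intro u _ _ _ b hb; simp [pathEdges_single] at hb
  | append_singleton l1' u' ih =>
    intro u hchain hint hin b hb
    have hintu : IsInternal A s t u := by
      apply hint
      rw [tail_append_ne_nil (by simp)]
      exact List.mem_append_right _ (List.mem_singleton_self _)
    obtain ⟨v0, hv0⟩ := hin
    have humem : u ∈ p := fst_mem_of_mem_pathEdges hv0
    have hus : u ≠ s := by
      intro he
      have := hintu.1
      rw [he, dminus_s_eq_zero] at this
      omega
    obtain ⟨u'', hu''⟩ := hp.exists_in_arc humem hus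
    have hred1 : (u'', u) ∈ redArcs A s t := hp.edge_mem_red hu''
    have hred2 : (u', u) ∈ redArcs A s t := by
      obtain ⟨h1, h2, h3⟩ := List.isChain_append.mp
        (show ((l1' ++ [u']) ++ [u]).Chain' (fun a b => (a, b) ∈ redArcs A s t) from hchain)
      exact h3 u' (List.getLast?_concat) u rfl
    have huu : u'' = u' := red_in_unique hintu.1 hred1 hred2
    have hglue : pathEdges ((l1' ++ [u']) ++ [u])
        = pathEdges (l1' ++ [u']) ++ pathEdges [u', u] := by
      rw [show (l1' ++ [u']) ++ [u] = l1' ++ u' :: [u] from by simp]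
      rw [pathEdges_glue l1' u' [u]]
    rw [hglue] at hb
    rcases List.mem_append.mp hb with h1 | h1
    · refine ih u' (List.isChain_append.mp hchain).1 ?_ ⟨u, huu ▸ hu''⟩ b h1
      intro z hz
      apply hint
      rw [tail_append_ne_nil (by
        intro hc
        exact absurd (List.append_eq_nil_iff.mp hc).2 (by simp))]
      exact List.mem_append_left _ hz
    · have : b = (u', u) := by
        have : pathEdges [u', u] = [(u', u)] := rfl
        rw [this] at h1
        exact List.mem_singleton.mp h1
      rw [this]
      exact huu ▸ hu''

/-- A path uses either all arcs of a corridor or none of them. -/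
lemma corridor_all_or_nothing (hc : IsCorridor A s t c) (hp : IsPath A s t p)
    {a : V × V} (hac : a ∈ pathEdges c) (hap : a ∈ pathEdges p) :
    ∀ b ∈ pathEdges c, b ∈ pathEdges p := by
  obtain ⟨hlen, hchain, hint, hhead, hlast⟩ := hc
  obtain ⟨l1, l2, hsplit⟩ := mem_pathEdges_split hac
  have hc2 : c = (l1 ++ [a.1]) ++ (a.2 :: l2) := by rw [hsplit]; simp
  have htd : c.tail.dropLast = (l1 ++ [a.1]).tail ++ (a.2 :: l2).dropLast := by
    rw [hc2, tail_append_ne_nil (by simp), dropLast_append_ne_nil (by simp)]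
  intro b hb
  have hbglue : pathEdges c = pathEdges (l1 ++ [a.1]) ++ pathEdges (a.1 :: a.2 :: l2) := by
    rw [hsplit]
    exact pathEdges_glue l1 a.1 (a.2 :: l2)
  rw [hbglue] at hb
  rcases List.mem_append.mp hb with h1 | h1
  · refine corridor_prop_bwd hp l1 a.1
      (List.IsChain.prefix hchain ⟨a.2 :: l2, hc2.symm⟩) ?_ ⟨a.2, by rwa [Prod.mk.eta]⟩ b h1
    intro z hz
    have : z ∈ c.tail.dropLast := by
      rw [htd]; exact List.mem_append_left _ hz
    exact hint z this
  · rw [pathEdges_cons_cons] at h1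
    rcases List.mem_cons.mp h1 with h2 | h2
    · rw [h2, Prod.mk.eta]; exact hap
    · refine corridor_prop_fwd hp l2 a.2
        (List.IsChain.suffix hchain ⟨l1 ++ [a.1], hc2.symm⟩) ?_ ⟨a.1, by rwa [Prod.mk.eta]⟩ b h2
      intro z hz
      have : z ∈ c.tail.dropLast := by
        rw [htd]; exact List.mem_append_right _ hz
      exact hint z this

lemma corridor_shape {c : List V} (hc : IsCorridor A s t c) :
    ∃ h w rest, c = h :: w :: rest := by
  obtain ⟨hlen, -⟩ := hc
  cases c with
  | nil => simp at hlen
  | cons h cs =>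
    cases cs with
    | nil => simp at hlen
    | cons w rest => exact ⟨h, w, rest, rfl⟩

lemma corridor_edges_ne_nil {c : List V} (hc : IsCorridor A s t c) :
    pathEdges c ≠ [] := by
  obtain ⟨h, w, rest, rfl⟩ := corridor_shape hc
  rw [pathEdges_cons_cons]
  simp

lemma corridor_edges_red {c : List V} (hc : IsCorridor A s t c) :
    ∀ b ∈ pathEdges c, b ∈ redArcs A s t :=
  mem_pathEdges_of_chain' hc.2.1

end AllOrNothing

section GoodFind

variable {A : Finset (V × V)} {s t : V}

lemma corridor_avoid_extend {Q : Set (List V)} (hQ : ∀ p ∈ Q, IsPath A s t p)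
    {c : List V} (hc : IsCorridor A s t c) {a : V × V} (ha : a ∈ pathEdges c)
    (hav : ∀ p ∈ Q, a ∉ pathEdges p) :
    ∀ p ∈ Q, ∀ b ∈ pathEdges c, b ∉ pathEdges p :=
  fun p hp b hb hbp =>
    hav p hp (corridor_all_or_nothing hc (hQ p hp) hb hbp a ha)

lemma ranc_lt_of_transGen (hA : Acyclic A) {z h : V}
    (htg : Relation.TransGen (fun a b => (a, b) ∈ redArcs A s t) z h) :
    (ranc A s t z).card < (ranc A s t h).card := by
  induction htg with
  | single harc => exact ranc_lt_of_red hA harc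
  | tail htg harc ih => exact lt_trans ih (ranc_lt_of_red hA harc)

lemma rdesc_lt_of_transGen (hA : Acyclic A) {z h : V}
    (htg : Relation.TransGen (fun a b => (a, b) ∈ redArcs A s t) h z) :
    (rdesc A s t z).card < (rdesc A s t h).card := by
  induction htg with
  | single harc => exact rdesc_lt_of_red hA harc
  | tail htg harc ih => exact lt_trans (rdesc_lt_of_red hA harc) ih

lemma bwd_head_reaches (hA : Acyclic A) (u : V) :
    ∀ z, (bwd hA s t u).head? = some z →
      z = u ∨ Relation.TransGen (fun a b => (a, b) ∈ redArcs A s t) z u := by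
  induction u using bwd.induct hA s t with
  | case1 u h ih =>
    intro z hz
    rw [bwd, dif_pos h, List.head?_append_of_ne_nil _ (bwd_ne_nil hA _)] at hz
    rcases ih z hz with h1 | h1
    · exact Or.inr (h1 ▸ Relation.TransGen.single (rpred_spec h.1))
    · exact Or.inr (h1.tail (rpred_spec h.1))
  | case2 u h =>
    intro z hz
    rw [bwd, dif_neg h] at hz
    simp at hz
    exact Or.inl hz.symm

lemma fwd_last_reaches (hA : Acyclic A) (v : V) :
    ∀ z, (fwd hA s t v).getLast? = some z →
      z = v ∨ Relation.TransGen (fun a b => (a, b) ∈ redArcs A s t) v z := by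
  induction v using fwd.induct hA s t with
  | case1 v h ih =>
    intro z hz
    rw [fwd, dif_pos h] at hz
    have hne := fwd_ne_nil hA (rsucc A s t v) (s := s) (t := t)
    cases hf : fwd hA s t (rsucc A s t v) with
    | nil => exact absurd hf hne
    | cons b l =>
      rw [hf, List.getLast?_cons_cons] at hz
      rcases ih z (by rw [hf]; exact hz) with h1 | h1
      · exact Or.inr (h1 ▸ Relation.TransGen.single (rsucc_spec h.2))
      · exact Or.inr (Relation.TransGen.head (rsucc_spec h.2) h1)
  | case2 v h =>
    intro z hz
    rw [fwd, dif_neg h] at hz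
    simp at hz
    exact Or.inl hz.symm

lemma corridor_first_arc {c : List V} {h w : V} {rest : List V}
    (hshape : c = h :: w :: rest) : (h, w) ∈ pathEdges c := by
  rw [hshape, pathEdges_cons_cons]
  exact List.mem_cons_self

lemma good_head_find (hA : Acyclic A) (hst : s ≠ t)
    {Q : Set (List V)} (hQ : ∀ p ∈ Q, IsPath A s t p)
    {p₀ : List V} (hp₀ : p₀ ∈ Q) :
    ∀ n (c : List V), IsCorridor A s t c →
      (∀ h0, c.head? = some h0 → (ranc A s t h0).card ≤ n) →
      (∀ p ∈ Q, ∀ b ∈ pathEdges c, b ∉ pathEdges p) →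
      ∃ c', IsCorridor A s t c' ∧ (∀ p ∈ Q, ∀ b ∈ pathEdges c', b ∉ pathEdges p) ∧
        (∀ h0, c'.head? = some h0 → 2 ≤ dplus A s t h0) ∧
        (c' = c ∨ ∀ z, c'.getLast? = some z → 2 ≤ dminus A s t z) := by
  intro n
  induction n using Nat.strong_induction_on with
  | _ n ih =>
    intro c hc hn havoid
    obtain ⟨h, w, rest, hshape⟩ := corridor_shape hc
    have hfirst : (h, w) ∈ pathEdges c := corridor_first_arc hshape
    have hfirstred : (h, w) ∈ redArcs A s t := corridor_edges_red hc _ hfirst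
    have hhead : c.head? = some h := by rw [hshape]; rfl
    by_cases hgood : 2 ≤ dplus A s t h
    · refine ⟨c, hc, havoid, ?_, Or.inl rfl⟩
      intro h0 hh0
      rw [hhead, Option.some.injEq] at hh0
      exact hh0 ▸ hgood
    · -- dplus h = 1
      have hd1 : dplus A s t h = 1 := by
        have := dplus_pos_of_red hfirstred
        omega
      -- h ≠ s
      have hhs : h ≠ s := by
        intro he; subst he
        have hp₀path := hQ p₀ hp₀
        obtain ⟨w0, hw0⟩ := hp₀path.exists_out_arc hp₀path.s_mem hst
        have : w0 = w := red_out_unique hd1 (hp₀path.edge_mem_red hw0) hfirstred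
        exact havoid p₀ hp₀ (h, w) hfirst (this ▸ hw0)
      have hdm : 2 ≤ dminus A s t h := by
        have h1 : dminus A s t h ≠ 1 := by
          rcases hc.2.2.2.1 h hhead with h1 | h1
          · exact h1
          · exact absurd hd1 h1
        have h2 : 1 ≤ dminus A s t h :=
          dminus_pos_of_ne_s (red_fst_on_path hfirstred) hhs
        omega
      -- all in-arcs of h are avoided by Q
      have hinav : ∀ u, (u, h) ∈ redArcs A s t → ∀ p ∈ Q, (u, h) ∉ pathEdges p := by
        intro u hu p hp hmem
        have hppath := hQ p hp
        have hhp : h ∈ p := snd_mem_of_mem_pathEdges hmem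
        have hht : h ≠ t := ne_t_of_red_fst hfirstred
        obtain ⟨w'', hw''⟩ := hppath.exists_out_arc hhp hht
        have : w'' = w := red_out_unique hd1 (hppath.edge_mem_red hw'') hfirstred
        exact havoid p hp (h, w) hfirst (this ▸ hw'')
      -- pick an in-arc
      obtain ⟨ar, har⟩ := Finset.card_pos.mp (show 0 < dminus A s t h by omega)
      obtain ⟨harred, har2⟩ := Finset.mem_filter.mp har
      have harr : (ar.1, h) ∈ redArcs A s t := by
        rw [show (ar.1, h) = ar from Prod.ext rfl har2.symm]
        exact harred
      set c' := corridorOf hA s t (ar.1, h) with hc'def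
      obtain ⟨hc'corr, hc'mem⟩ := corridorOf_isCorridor hA harr
      have hc'av : ∀ p ∈ Q, ∀ b ∈ pathEdges c', b ∉ pathEdges p :=
        corridor_avoid_extend hQ hc'corr hc'mem (hinav ar.1 harr)
      -- c' ends at h with dminus h ≥ 2
      have hnint : ¬ IsInternal A s t h := by
        intro hint
        rw [IsInternal] at hint
        omega
      have hfwdh : fwd hA s t h = [h] := by rw [fwd, dif_neg hnint]
      have hc'last : c'.getLast? = some h := by
        rw [hc'def, corridorOf]
        simp only
        rw [hfwdh, List.getLast?_append_of_ne_nil _ (by simp)]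
        rfl
      -- measure decreases
      obtain ⟨z', hz'⟩ : ∃ z', c'.head? = some z' := by
        rw [hc'def, corridorOf]
        simp only
        rw [List.head?_append_of_ne_nil _ (bwd_ne_nil hA _)]
        exact ⟨(bwd hA s t ar.1).head (bwd_ne_nil hA _), List.head?_eq_head _⟩
      have hz'r : z' = ar.1 ∨ Relation.TransGen (fun a b => (a, b) ∈ redArcs A s t) z' ar.1 := by
        apply bwd_head_reaches hA ar.1 z'
        rw [hc'def, corridorOf, List.head?_append_of_ne_nil _ (bwd_ne_nil hA _)] at hz'
        exact hz'
      have htg : Relation.TransGen (fun a b => (a, b) ∈ redArcs A s t) z' h := by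
        rcases hz'r with h1 | h1
        · exact h1 ▸ Relation.TransGen.single harr
        · exact h1.tail harr
      have hlt : (ranc A s t z').card < (ranc A s t h).card := ranc_lt_of_transGen hA htg
      have hbound := hn h hhead
      obtain ⟨c'', hc''corr, hc''av, hc''head, hc''or⟩ :=
        ih (ranc A s t z').card (by omega) c' hc'corr
          (fun h0 hh0 => by
            rw [hz', Option.some.injEq] at hh0
            exact hh0 ▸ le_rfl)
          hc'av
      refine ⟨c'', hc''corr, hc''av, hc''head, Or.inr ?_⟩
      rcases hc''or with h1 | h1
      · intro z hz
        rw [h1, hc'last, Option.some.injEq] at hz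
        exact hz ▸ hdm
      · exact h1

lemma corridor_shape_rev {c : List V} (hc : IsCorridor A s t c) :
    ∃ rest u z, c = rest ++ [u, z] := by
  have hlen := hc.1
  induction c using List.reverseRecOn with
  | nil => simp at hlen
  | append_singleton l' z _ =>
    rcases List.eq_nil_or_concat l' with rfl | ⟨l'', u, rfl⟩
    · simp at hlen
    · exact ⟨l'', u, z, by simp⟩

lemma good_tail_find (hA : Acyclic A) (hst : s ≠ t)
    {Q : Set (List V)} (hQ : ∀ p ∈ Q, IsPath A s t p)
    {p₀ : List V} (hp₀ : p₀ ∈ Q) :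
    ∀ n (c : List V), IsCorridor A s t c →
      (∀ z0, c.getLast? = some z0 → (rdesc A s t z0).card ≤ n) →
      (∀ p ∈ Q, ∀ b ∈ pathEdges c, b ∉ pathEdges p) →
      ∃ c', IsCorridor A s t c' ∧ (∀ p ∈ Q, ∀ b ∈ pathEdges c', b ∉ pathEdges p) ∧
        (∀ z0, c'.getLast? = some z0 → 2 ≤ dminus A s t z0) ∧
        (c' = c ∨ ∀ h0, c'.head? = some h0 → 2 ≤ dplus A s t h0) := by
  intro n
  induction n using Nat.strong_induction_on with
  | _ n ih =>
    intro c hc hn havoid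
    obtain ⟨rest, u, z, hshape⟩ := corridor_shape_rev hc
    have hlastarc : (u, z) ∈ pathEdges c := by
      rw [hshape, show rest ++ [u, z] = rest ++ u :: z :: [] from rfl]
      exact mem_pathEdges_of_split rest [] u z
    have hlastred : (u, z) ∈ redArcs A s t := corridor_edges_red hc _ hlastarc
    have hlast : c.getLast? = some z := by
      rw [hshape, show rest ++ [u, z] = (rest ++ [u]) ++ [z] from by simp]
      rw [List.getLast?_concat]
    by_cases hgood : 2 ≤ dminus A s t z
    · refine ⟨c, hc, havoid, ?_, Or.inl rfl⟩
      intro z0 hz0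
      rw [hlast, Option.some.injEq] at hz0
      exact hz0 ▸ hgood
    · have hd1 : dminus A s t z = 1 := by
        have := dminus_pos_of_red hlastred
        omega
      have hzt : z ≠ t := by
        intro he; subst he
        have hp₀path := hQ p₀ hp₀
        obtain ⟨u0, hu0⟩ := hp₀path.exists_in_arc hp₀path.t_mem (Ne.symm hst)
        have : u0 = u := red_in_unique hd1 (hp₀path.edge_mem_red hu0) hlastred
        exact havoid p₀ hp₀ (u, z) hlastarc (this ▸ hu0)
      have hdp : 2 ≤ dplus A s t z := by
        have h1 : dplus A s t z ≠ 1 := by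
          rcases hc.2.2.2.2 z hlast with h1 | h1
          · exact absurd hd1 h1
          · exact h1
        have h2 : 1 ≤ dplus A s t z :=
          dplus_pos_of_ne_t (red_snd_on_path hlastred) hzt
        omega
      have houtav : ∀ v, (z, v) ∈ redArcs A s t → ∀ p ∈ Q, (z, v) ∉ pathEdges p := by
        intro v hv p hp hmem
        have hppath := hQ p hp
        have hzp : z ∈ p := fst_mem_of_mem_pathEdges hmem
        have hzs : z ≠ s := ne_s_of_red_snd hlastred
        obtain ⟨u'', hu''⟩ := hppath.exists_in_arc hzp hzs
        have : u'' = u := red_in_unique hd1 (hppath.edge_mem_red hu'') hlastred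
        exact havoid p hp (u, z) hlastarc (this ▸ hu'')
      obtain ⟨ar, har⟩ := Finset.card_pos.mp (show 0 < dplus A s t z by omega)
      obtain ⟨harred, har1⟩ := Finset.mem_filter.mp har
      have harr : (z, ar.2) ∈ redArcs A s t := by
        rw [show (z, ar.2) = ar from Prod.ext har1.symm rfl]
        exact harred
      set c' := corridorOf hA s t (z, ar.2) with hc'def
      obtain ⟨hc'corr, hc'mem⟩ := corridorOf_isCorridor hA harr
      have hc'av : ∀ p ∈ Q, ∀ b ∈ pathEdges c', b ∉ pathEdges p :=
        corridor_avoid_extend hQ hc'corr hc'mem (houtav ar.2 harr)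
      have hnint : ¬ IsInternal A s t z := by
        intro hint
        rw [IsInternal] at hint
        omega
      have hbwdz : bwd hA s t z = [z] := by rw [bwd, dif_neg hnint]
      have hc'head : c'.head? = some z := by
        rw [hc'def, corridorOf]
        simp only
        rw [hbwdz]
        rfl
      obtain ⟨z', hz'⟩ : ∃ z', c'.getLast? = some z' := by
        rw [hc'def, corridorOf]
        simp only
        rw [List.getLast?_append_of_ne_nil _ (fwd_ne_nil hA _)]
        exact ⟨(fwd hA s t ar.2).getLast (fwd_ne_nil hA _), List.getLast?_eq_getLast _⟩
      have hz'r : z' = ar.2 ∨ Relation.TransGen (fun a b => (a, b) ∈ redArcs A s t) ar.2 z' := by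
        apply fwd_last_reaches hA ar.2 z'
        rw [hc'def, corridorOf, List.getLast?_append_of_ne_nil _ (fwd_ne_nil hA _)] at hz'
        exact hz'
      have htg : Relation.TransGen (fun a b => (a, b) ∈ redArcs A s t) z z' := by
        rcases hz'r with h1 | h1
        · exact h1 ▸ Relation.TransGen.single harr
        · exact Relation.TransGen.head harr h1
      have hlt : (rdesc A s t z').card < (rdesc A s t z).card := rdesc_lt_of_transGen hA htg
      have hbound := hn z hlast
      obtain ⟨c'', hc''corr, hc''av, hc''tail, hc''or⟩ :=
        ih (rdesc A s t z').card (by omega) c' hc'corr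
          (fun z0 hz0 => by
            rw [hz', Option.some.injEq] at hz0
            exact hz0 ▸ le_rfl)
          hc'av
      refine ⟨c'', hc''corr, hc''av, hc''tail, Or.inr ?_⟩
      rcases hc''or with h1 | h1
      · intro h0 hh0
        rw [h1, hc'head, Option.some.injEq] at hh0
        exact hh0 ▸ hdp
      · exact h1

/-- From any reduced arc avoided by a nonempty family of paths, one can find a good
corridor avoided by the family. -/
lemma good_corridor_find (hA : Acyclic A) (hst : s ≠ t)
    {Q : Set (List V)} (hQ : ∀ p ∈ Q, IsPath A s t p)
    {p₀ : List V} (hp₀ : p₀ ∈ Q)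
    {a : V × V} (ha : a ∈ redArcs A s t) (havoid : ∀ p ∈ Q, a ∉ pathEdges p) :
    ∃ c, IsGoodCorridor A s t c ∧ ∀ p ∈ Q, ∀ b ∈ pathEdges c, b ∉ pathEdges p := by
  obtain ⟨hc0corr, hc0mem⟩ := corridorOf_isCorridor hA ha
  set c0 := corridorOf hA s t a with hc0def
  have hc0av : ∀ p ∈ Q, ∀ b ∈ pathEdges c0, b ∉ pathEdges p :=
    corridor_avoid_extend hQ hc0corr hc0mem havoid
  obtain ⟨h0, w0, r0, hshape0⟩ := corridor_shape hc0corr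
  have hhead0 : c0.head? = some h0 := by rw [hshape0]; rfl
  obtain ⟨c1, hc1corr, hc1av, hc1head, hc1or⟩ :=
    good_head_find hA hst hQ hp₀ ((ranc A s t h0).card) c0 hc0corr
      (fun h1 hh1 => by
        rw [hhead0, Option.some.injEq] at hh1
        exact hh1 ▸ le_rfl) hc0av
  rcases hc1or with h1 | h1
  · obtain ⟨r1, u1, z1, hshape1⟩ := corridor_shape_rev hc1corr
    have hlast1 : c1.getLast? = some z1 := by
      rw [hshape1, show r1 ++ [u1, z1] = (r1 ++ [u1]) ++ [z1] from by simp,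
        List.getLast?_concat]
    obtain ⟨c2, hc2corr, hc2av, hc2tail, hc2or⟩ :=
      good_tail_find hA hst hQ hp₀ ((rdesc A s t z1).card) c1 hc1corr
        (fun z0 hz0 => by
          rw [hlast1, Option.some.injEq] at hz0
          exact hz0 ▸ le_rfl) hc1av
    rcases hc2or with h2 | h2
    · refine ⟨c2, ⟨hc2corr, ?_, hc2tail⟩, hc2av⟩
      intro h0 hh0
      exact hc1head h0 (by rw [← h2]; exact hh0)
    · exact ⟨c2, ⟨hc2corr, h2, hc2tail⟩, hc2av⟩
  · exact ⟨c1, ⟨hc1corr, hc1head, h1⟩, hc1av⟩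

end GoodFind

section Surgery

variable {A : Finset (V × V)} {s t : V}

lemma chain'_pathEdges (m : List V) : m.Chain' (fun x y => (x, y) ∈ pathEdges m) := by
  induction m with
  | nil => simp [List.Chain']
  | cons x xs ih =>
    cases xs with
    | nil => simp [List.Chain']
    | cons y ys =>
      simp only [List.Chain']
      rw [List.isChain_cons]
      constructor
      · intro z hz
        simp only [List.head?_cons, Option.mem_def, Option.some.injEq] at hz
        rw [← hz, pathEdges_cons_cons]
        exact List.mem_cons_self
      · refine List.IsChain.imp ?_ ih
        intro a b hab
        rw [pathEdges_cons_cons]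
        exact List.mem_cons_of_mem _ hab

lemma succ_in_prefix {p l1 l2 : List V} {u y y' : V} (hnd : p.Nodup)
    (hp : p = l1 ++ u :: l2) (hy : y ∈ l1 ++ [u]) (hyu : y ≠ u)
    (he : (y, y') ∈ pathEdges p) : y' ∈ l1 ++ [u] := by
  have hyl1 : y ∈ l1 := by
    rcases List.mem_append.mp hy with h1 | h1
    · exact h1
    · exact absurd (List.mem_singleton.mp h1) hyu
  obtain ⟨b1, b2, hb⟩ := List.append_of_mem hyl1
  have hp2 : p = b1 ++ y :: (b2 ++ u :: l2) := by rw [hp, hb]; simp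
  cases b2 with
  | nil =>
    have : (y, u) ∈ pathEdges p := by
      rw [hp2]; exact mem_pathEdges_of_split b1 l2 y u
    rw [succ_unique hnd he this]
    exact List.mem_append_right _ (List.mem_singleton_self _)
  | cons x b2' =>
    have : (y, x) ∈ pathEdges p := by
      rw [hp2]; exact mem_pathEdges_of_split b1 (b2' ++ u :: l2) y x
    rw [succ_unique hnd he this]
    apply List.mem_append_left
    rw [hb]
    exact List.mem_append_right _ (List.mem_cons_of_mem _ (List.mem_cons_self))

lemma list_in_prefix {p l1 l2 : List V} {u a2 : V} (hnd : p.Nodup)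
    (hp : p = l1 ++ u :: l2) (ha : (u, a2) ∈ pathEdges p) :
    ∀ (m : List V), m.Chain' (fun x y => (x, y) ∈ pathEdges p ∧ (x, y) ≠ (u, a2)) →
      (∀ h0, m.head? = some h0 → h0 ∈ l1 ++ [u]) → ∀ y ∈ m, y ∈ l1 ++ [u] := by
  intro m
  induction m with
  | nil => simp
  | cons x xs ih =>
    intro hchain hhead y hy
    have hx : x ∈ l1 ++ [u] := hhead x rfl
    rcases List.mem_cons.mp hy with h1 | h1
    · exact h1 ▸ hx
    · cases xs with
      | nil => simp at h1
      | cons x2 xs2 =>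
        have harc := hchain.rel_head
        have hxu : x ≠ u := by
          intro he; subst he
          have := succ_unique hnd harc.1 ha
          exact harc.2 (by rw [this])
        have hx2 : x2 ∈ l1 ++ [u] := succ_in_prefix hnd hp hx hxu harc.1
        refine ih hchain.tail ?_ y h1
        intro h0 hh0
        simp only [List.head?_cons, Option.some.injEq] at hh0
        exact hh0 ▸ hx2

/-- For a good corridor, some path avoids it entirely. -/
lemma good_corridor_avoidable (hA : Acyclic A) (hst : s ≠ t) {c : List V}
    (hgc : IsGoodCorridor A s t c) :
    ∃ p, IsPath A s t p ∧ ∀ b ∈ pathEdges c, b ∉ pathEdges p := by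
  obtain ⟨hc, hgh, hgt⟩ := hgc
  obtain ⟨h, w, rest, hshape⟩ := corridor_shape hc
  have hfirst : (h, w) ∈ pathEdges c := corridor_first_arc hshape
  have hfirstred : (h, w) ∈ redArcs A s t := corridor_edges_red hc _ hfirst
  have hdp : 2 ≤ dplus A s t h := hgh h (by rw [hshape]; rfl)
  obtain ⟨ar, harm, harne⟩ :=
    Finset.exists_mem_ne (show 1 < dplus A s t h by omega) (h, w)
  obtain ⟨harred, har1⟩ := Finset.mem_filter.mp harm
  have har : (h, ar.2) ∈ redArcs A s t := by
    rw [show (h, ar.2) = ar from Prod.ext har1.symm rfl]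
    exact harred
  have hne2 : ar.2 ≠ w := by
    intro he
    apply harne
    rw [← har1, ← he]
  obtain ⟨q, hq, hqmem⟩ := exists_path_of_red har
  refine ⟨q, hq, ?_⟩
  intro b hb hbq
  have hall := corridor_all_or_nothing hc hq hb hbq
  have hfq : (h, w) ∈ pathEdges q := hall _ hfirst
  exact hne2 (succ_unique hq.2.2.2 hqmem hfq)

/-- Distinct good corridors can be separated: some path uses the first and avoids
the second. -/
lemma good_corridor_separate (hA : Acyclic A) (hst : s ≠ t) {c c' : List V}
    (hgc : IsGoodCorridor A s t c) (hgc' : IsGoodCorridor A s t c') (hne : c ≠ c') :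
    ∃ p, IsPath A s t p ∧ (∃ b ∈ pathEdges c, b ∈ pathEdges p) ∧
      (∀ b ∈ pathEdges c', b ∉ pathEdges p) := by
  obtain ⟨hc, hgh, hgt⟩ := hgc
  obtain ⟨hc', hgh', hgt'⟩ := hgc'
  -- the corridors are arc-disjoint
  have hdisj : ∀ b ∈ pathEdges c', b ∉ pathEdges c := by
    intro b hb' hb
    exact hne ((corridor_unique hA hc hb).trans (corridor_unique hA hc' hb').symm)
  obtain ⟨h, w, rst, hshape⟩ := corridor_shape hc
  have hfirst : (h, w) ∈ pathEdges c := corridor_first_arc hshape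
  have hfirstred : (h, w) ∈ redArcs A s t := corridor_edges_red hc _ hfirst
  obtain ⟨p₀, hp₀, hap₀⟩ := exists_path_of_red hfirstred
  by_cases hav : ∀ b ∈ pathEdges c', b ∉ pathEdges p₀
  · exact ⟨p₀, hp₀, ⟨(h, w), hfirst, hap₀⟩, hav⟩
  push_neg at hav
  obtain ⟨b₀, hb₀c, hb₀p⟩ := hav
  have hall : ∀ b ∈ pathEdges c', b ∈ pathEdges p₀ :=
    corridor_all_or_nothing hc' hp₀ hb₀c hb₀p
  -- data of c'
  obtain ⟨h', w', rst', hshape'⟩ := corridor_shape hc'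
  have hfirst' : (h', w') ∈ pathEdges c' := corridor_first_arc hshape'
  obtain ⟨rest', u', z', hshapez'⟩ := corridor_shape_rev hc'
  have hlastarc' : (u', z') ∈ pathEdges c' := by
    rw [hshapez', show rest' ++ [u', z'] = rest' ++ u' :: z' :: [] from rfl]
    exact mem_pathEdges_of_split rest' [] u' z'
  have hhead' : c'.head? = some h' := by rw [hshape']; rfl
  have hdp' : 2 ≤ dplus A s t h' := hgh' h' hhead'
  have hlast' : c'.getLast? = some z' := by
    rw [hshapez', show rest' ++ [u', z'] = (rest' ++ [u']) ++ [z'] from by simp,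
      List.getLast?_concat]
  have hdm' : 2 ≤ dminus A s t z' := hgt' z' hlast'
  -- split p₀ at the arc a := (h, w)
  obtain ⟨l1, l2, hsplit0⟩ := mem_pathEdges_split hap₀
  simp only at hsplit0
  have hndp₀ := hp₀.2.2.2
  by_cases hcase : h' ∈ w :: l2
  · -- corridor c' starts at or after the arc (h, w): reroute at h'
    obtain ⟨k1, k2, hk⟩ := List.append_of_mem hcase
    have hp₀2 : p₀ = (l1 ++ h :: k1) ++ h' :: k2 := by
      rw [hsplit0, hk]; simp
    have hamem : (h, w) ∈ pathEdges ((l1 ++ h :: k1) ++ [h']) := by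
      cases k1 with
      | nil =>
        have hh'w : h' = w := by
          have := hk
          rw [List.nil_append] at this
          exact (List.cons.injEq _ _ _ _ ▸ this).1.symm
        rw [hh'w, show (l1 ++ h :: []) ++ [w] = l1 ++ h :: w :: [] from by simp]
        exact mem_pathEdges_of_split l1 [] h w
      | cons kx k1' =>
        have hwkx : w = kx := by
          have := hk
          exact (List.cons.injEq _ _ _ _ ▸ this).1
        rw [show (l1 ++ h :: kx :: k1') ++ [h'] = l1 ++ h :: kx :: (k1' ++ [h']) from by simp,
          hwkx]
        exact mem_pathEdges_of_split l1 (k1' ++ [h']) h kx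
    -- pick another out-arc at h'
    obtain ⟨ar, harm, harne⟩ :=
      Finset.exists_mem_ne (show 1 < dplus A s t h' by omega) (h', w')
    obtain ⟨harred, har1⟩ := Finset.mem_filter.mp harm
    have har : (h', ar.2) ∈ redArcs A s t := by
      rw [show (h', ar.2) = ar from Prod.ext har1.symm rfl]
      exact harred
    have hne2 : ar.2 ≠ w' := by
      intro he; apply harne; rw [← har1, ← he]
    obtain ⟨q, hq, hqmem⟩ := exists_path_of_red har
    obtain ⟨q1, q2, hsq⟩ := mem_pathEdges_split hqmem
    simp only at hsq
    have hstar : IsPath A s t ((l1 ++ h :: k1) ++ h' :: ar.2 :: q2) :=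
      path_splice hA hp₀ hq hp₀2
        (show q = (q1 ++ [h']) ++ ar.2 :: q2 by rw [hsq, List.append_assoc]; rfl)
        (red_subset_A har)
    refine ⟨_, hstar, ⟨(h, w), hfirst, ?_⟩, ?_⟩
    · rw [show (l1 ++ h :: k1) ++ h' :: ar.2 :: q2
          = ((l1 ++ h :: k1)) ++ h' :: (ar.2 :: q2) from rfl,
        pathEdges_glue (l1 ++ h :: k1) h' (ar.2 :: q2)]
      exact List.mem_append_left _ hamem
    · intro b hb hbp
      have hall2 := corridor_all_or_nothing hc' hstar hb hbp
      have hf2 : (h', w') ∈ pathEdges ((l1 ++ h :: k1) ++ h' :: ar.2 :: q2) :=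
        hall2 _ hfirst'
      have hf3 : (h', ar.2) ∈ pathEdges ((l1 ++ h :: k1) ++ h' :: ar.2 :: q2) := by
        rw [show (l1 ++ h :: k1) ++ h' :: ar.2 :: q2
            = (l1 ++ h :: k1) ++ h' :: ar.2 :: q2 from rfl]
        exact mem_pathEdges_of_split (l1 ++ h :: k1) q2 h' ar.2
      exact hne2 (succ_unique hstar.2.2.2 hf3 hf2)
  · -- corridor c' lies before the arc (h, w): reroute into z'
    have hh'p : h' ∈ p₀ := fst_mem_of_mem_pathEdges (hall _ hfirst')
    have hh'pre : h' ∈ l1 ++ [h] := by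
      rw [hsplit0] at hh'p
      rcases List.mem_append.mp (show h' ∈ (l1 ++ [h]) ++ w :: l2 from by
        simpa using hh'p) with h1 | h1
      · exact h1
      · exact absurd h1 hcase
    have hchainc' : c'.Chain' (fun x y =>
        (x, y) ∈ pathEdges p₀ ∧ (x, y) ≠ (h, w)) := by
      refine List.IsChain.imp ?_ (chain'_pathEdges c')
      intro x y hxy
      exact ⟨hall _ hxy, fun he => hdisj _ hxy (he ▸ hfirst)⟩
    have hz'pre : z' ∈ l1 ++ [h] := by
      refine list_in_prefix hndp₀ hsplit0 hap₀ c' hchainc' ?_ z' ?_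
      · intro h0 hh0
        rw [hhead', Option.some.injEq] at hh0
        exact hh0 ▸ hh'pre
      · rw [hshapez']
        exact List.mem_append_right _ (by simp)
    -- split p₀ at z'; the arc (h, w) lies in the suffix from z'
    obtain ⟨n1, m3, hn, hamem⟩ : ∃ n1 m3, p₀ = n1 ++ z' :: m3 ∧
        (h, w) ∈ pathEdges (z' :: m3) := by
      rcases List.mem_append.mp hz'pre with h1 | h1
      · obtain ⟨r1, r2, hr⟩ := List.append_of_mem h1
        refine ⟨r1, r2 ++ h :: w :: l2, by rw [hsplit0, hr]; simp, ?_⟩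
        rw [show z' :: (r2 ++ h :: w :: l2) = (z' :: r2) ++ h :: w :: l2 from by simp]
        exact mem_pathEdges_of_split (z' :: r2) l2 h w
      · have hz'h : z' = h := List.mem_singleton.mp h1
        refine ⟨l1, w :: l2, by rw [hsplit0, hz'h], ?_⟩
        rw [hz'h]
        exact mem_pathEdges_of_split [] l2 h w
    -- pick another in-arc at z'
    obtain ⟨ar, harm, harne⟩ :=
      Finset.exists_mem_ne (show 1 < dminus A s t z' by omega) (u', z')
    obtain ⟨harred, har2⟩ := Finset.mem_filter.mp harm
    have har : (ar.1, z') ∈ redArcs A s t := by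
      rw [show (ar.1, z') = ar from Prod.ext rfl har2.symm]
      exact harred
    have hne2 : ar.1 ≠ u' := by
      intro he; apply harne; rw [← har2, ← he]
    obtain ⟨q, hq, hqmem⟩ := exists_path_of_red har
    obtain ⟨q1, q2, hsq⟩ := mem_pathEdges_split hqmem
    simp only at hsq
    have hstar : IsPath A s t (q1 ++ ar.1 :: z' :: m3) :=
      path_splice hA hq hp₀ hsq hn (red_subset_A har)
    refine ⟨_, hstar, ⟨(h, w), hfirst, ?_⟩, ?_⟩
    · rw [show q1 ++ ar.1 :: z' :: m3 = q1 ++ ar.1 :: (z' :: m3) from rfl,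
        pathEdges_glue q1 ar.1 (z' :: m3)]
      refine List.mem_append_right _ ?_
      rw [show ar.1 :: z' :: m3 = [ar.1] ++ z' :: m3 from rfl,
        pathEdges_glue [ar.1] z' m3]
      exact List.mem_append_right _ hamem
    · intro b hb hbp
      have hall2 := corridor_all_or_nothing hc' hstar hb hbp
      have hf2 : (u', z') ∈ pathEdges (q1 ++ ar.1 :: z' :: m3) := hall2 _ hlastarc'
      have hf3 : (ar.1, z') ∈ pathEdges (q1 ++ ar.1 :: z' :: m3) :=
        mem_pathEdges_of_split q1 m3 ar.1 z'
      exact hne2 (pred_unique hstar.2.2.2 hf3 hf2)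

end Surgery

section Geometry

variable {A : Finset (V × V)} {s t : V}

/-- The face of the flow polytope where all arcs of `c` carry zero flow. -/
def corridorFace (A : Finset (V × V)) (s t : V) (c : List V) : Set ((V × V) → ℝ) :=
  {x ∈ flowPolytope A s t | ∀ b ∈ pathEdges c, x b = 0}

lemma paths_finite : {p : List V | IsPath A s t p}.Finite := by
  have h1 : {p : List V | IsPath A s t p} ⊆ {l : List V | l.Nodup} :=
    fun p hp => hp.2.2.2
  have h2 : {l : List V | l.Nodup}.Finite := by
    haveI hfin : Finite {l : List V // l.Nodup} := Finite.of_fintype _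
    rw [← Set.finite_coe_iff]
    exact Finite.of_equiv {l : List V // l.Nodup}
      (Equiv.subtypeEquivRight fun l => Iff.rfl)
  exact h2.subset h1

lemma chi_mem_flowPolytope (hst : s ≠ t) {p : List V} (hp : IsPath A s t p) :
    chi p ∈ flowPolytope A s t := chi_isFlow hp hst

lemma convex_G {l : ((V × V) → ℝ) →L[ℝ] ℝ} :
    Convex ℝ {x ∈ flowPolytope A s t | ∀ y ∈ flowPolytope A s t, l y ≤ l x} := by
  rintro x ⟨hxS, hxm⟩ y ⟨hyS, hym⟩ a b ha hb hab
  refine ⟨convex_flowPolytope hxS hyS ha hb hab, ?_⟩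
  intro z hz
  have h1 : l z ≤ l x := hxm z hz
  have h2 : l z ≤ l y := hym z hz
  have : l (a • x + b • y) = a * l x + b * l y := by
    rw [map_add, map_smul, map_smul]; rfl
  have h1' : a * l z ≤ a * l x := mul_le_mul_of_nonneg_left h1 ha
  have h2' : b * l z ≤ b * l y := mul_le_mul_of_nonneg_left h2 hb
  have h3 : a * l z + b * l z = l z := by rw [← add_mul, hab, one_mul]
  rw [this]
  linarith

lemma exists_max_vertex (hA : Acyclic A) (hst : s ≠ t) (l : ((V × V) → ℝ) →L[ℝ] ℝ)
    {p₀ : List V} (hp₀ : IsPath A s t p₀) :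
    ∃ q, IsPath A s t q ∧ ∀ x ∈ flowPolytope A s t, l x ≤ l (chi q) := by
  classical
  have hPfin := paths_finite (A := A) (s := s) (t := t)
  set PF := hPfin.toFinset with hPF
  have hPFne : PF.Nonempty := ⟨p₀, hPfin.mem_toFinset.mpr hp₀⟩
  have hPFim : (PF.image (fun p => l (chi p))).Nonempty := hPFne.image _
  set B := (PF.image (fun p => l (chi p))).max' hPFim with hB
  obtain ⟨q, hqPF, hqB⟩ := Finset.mem_image.mp ((PF.image (fun p => l (chi p))).max'_mem hPFim)
  have hqpath : IsPath A s t q := hPfin.mem_toFinset.mp hqPF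
  refine ⟨q, hqpath, ?_⟩
  intro x hx
  rw [hqB]
  have hx2 : x ∈ convexHull ℝ (chi '' {p | IsPath A s t p}) := by
    rw [← flowPolytope_eq_convexHull hA hst]; exact hx
  have hsub : convexHull ℝ (chi '' {p | IsPath A s t p}) ⊆ {y | l y ≤ B} := by
    apply convexHull_min
    · rintro y ⟨p, hp, rfl⟩
      show l (chi p) ≤ B
      apply Finset.le_max'
      exact Finset.mem_image.mpr ⟨p, hPfin.mem_toFinset.mpr hp, rfl⟩
    · exact convex_halfSpace_le ⟨fun a b => l.map_add a b, fun r a => l.map_smul r a⟩ B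
  exact hsub hx2

/-- Points of an exposed face are supported on paths whose vertices lie in the face. -/
lemma face_eval_zero (hA : Acyclic A) (hst : s ≠ t)
    {G : Set ((V × V) → ℝ)} {l : ((V × V) → ℝ) →L[ℝ] ℝ}
    (hGl : G = {x ∈ flowPolytope A s t | ∀ y ∈ flowPolytope A s t, l y ≤ l x})
    {x : (V × V) → ℝ} (hx : x ∈ G) {b : V × V}
    (hzero : ∀ p, IsPath A s t p → chi p ∈ G → chi p b = 0) : x b = 0 := by
  classical
  have hxS : x ∈ flowPolytope A s t := by rw [hGl] at hx; exact hx.1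
  have hxm : ∀ y ∈ flowPolytope A s t, l y ≤ l x := by rw [hGl] at hx; exact hx.2
  have hPfin := paths_finite (A := A) (s := s) (t := t)
  set PF := hPfin.toFinset with hPF
  set YF : Finset ((V × V) → ℝ) := PF.image chi with hYF
  have hYFcoe : (YF : Set ((V × V) → ℝ)) = chi '' {p | IsPath A s t p} := by
    rw [hYF, Finset.coe_image, Set.Finite.coe_toFinset]
  have hx3 : x ∈ convexHull ℝ (YF : Set ((V × V) → ℝ)) := by
    rw [hYFcoe, ← flowPolytope_eq_convexHull hA hst]; exact hxS
  rw [Finset.convexHull_eq] at hx3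
  obtain ⟨w, hw0, hw1, hwc⟩ := hx3
  have hxsum : x = ∑ y ∈ YF, w y • y := by
    rw [← hwc, Finset.centerMass_eq_of_sum_1 _ _ hw1]
    rfl
  -- every vertex that appears with positive weight lies in G
  have hsupp : ∀ y ∈ YF, w y ≠ 0 → y ∈ G := by
    intro y hy hwy
    have hyS : y ∈ flowPolytope A s t := by
      obtain ⟨p, hpPF, rfl⟩ := Finset.mem_image.mp hy
      exact chi_mem_flowPolytope hst (hPfin.mem_toFinset.mp hpPF)
    have hle : l y ≤ l x := hxm y hyS
    have hwypos : 0 < w y := lt_of_le_of_ne (hw0 y hy) (Ne.symm hwy)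
    have heq : l y = l x := by
      by_contra hne
      have hlt : l y < l x := lt_of_le_of_ne hle hne
      have h1 : l x = ∑ y ∈ YF, w y * l y := by
        rw [hxsum, map_sum]
        refine Finset.sum_congr rfl fun z _ => ?_
        rw [map_smul]; rfl
      have h2 : ∑ z ∈ YF, w z * l z < ∑ z ∈ YF, w z * l x := by
        apply Finset.sum_lt_sum
        · intro i hi
          have hiS : l i ≤ l x := by
            obtain ⟨p, hpPF, rfl⟩ := Finset.mem_image.mp hi
            exact hxm _ (chi_mem_flowPolytope hst (hPfin.mem_toFinset.mp hpPF))
          exact mul_le_mul_of_nonneg_left hiS (hw0 i hi)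
        · exact ⟨y, hy, (mul_lt_mul_iff_right₀ hwypos).mpr hlt⟩
      have h3 : ∑ z ∈ YF, w z * l x = l x := by
        rw [← Finset.sum_mul, hw1, one_mul]
      rw [h3] at h2
      rw [← h1] at h2
      exact lt_irrefl _ h2
    rw [hGl]
    exact ⟨hyS, fun z hz => le_trans (hxm z hz) (le_of_eq heq.symm)⟩
  have hxb : x b = ∑ y ∈ YF, w y * y b := by
    rw [hxsum, Finset.sum_apply]
    refine Finset.sum_congr rfl fun z _ => rfl
  rw [hxb]
  apply Finset.sum_eq_zero
  intro y hy
  by_cases hwy : w y = 0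
  · rw [hwy, zero_mul]
  · obtain ⟨p, hpPF, rfl⟩ := Finset.mem_image.mp hy
    rw [hzero p (hPfin.mem_toFinset.mp hpPF) (hsupp _ hy hwy), mul_zero]

lemma flow_pos_arc {x : (V × V) → ℝ} (hx : IsFlow A s t x) : ∃ a ∈ A, 0 < x a := by
  have h1 := hx.2.2.2
  have h2 : 0 ≤ inSum A x s := Finset.sum_nonneg (fun a _ => hx.2.1 a)
  have h3 : 0 < outSum A x s := by linarith
  have : ∃ a ∈ A.filter (fun a => a.1 = s), 0 < x a := by
    by_contra hc
    push_neg at hc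
    have : outSum A x s ≤ 0 := Finset.sum_nonpos hc
    linarith
  obtain ⟨a, ha, hxa⟩ := this
  exact ⟨a, (Finset.mem_filter.mp ha).1, hxa⟩

/-- Any nonempty proper exposed face of the flow polytope lies in a good corridor's face. -/
lemma exposed_subset_corridorFace (hA : Acyclic A) (hst : s ≠ t)
    {G : Set ((V × V) → ℝ)} (hG : IsExposed ℝ (flowPolytope A s t) G)
    (hGne : G.Nonempty) (hGneS : G ≠ flowPolytope A s t) :
    ∃ c, IsGoodCorridor A s t c ∧ G ⊆ corridorFace A s t c := by
  classical
  obtain ⟨l, hGl⟩ := hG hGne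
  have hGsubS : G ⊆ flowPolytope A s t := by rw [hGl]; exact fun x hx => hx.1
  set Q : Set (List V) := {p | IsPath A s t p ∧ chi p ∈ G} with hQ
  have hQpaths : ∀ p ∈ Q, IsPath A s t p := fun p hp => hp.1
  obtain ⟨x0, hx0⟩ := hGne
  have hx0S : x0 ∈ flowPolytope A s t := hGsubS hx0
  have hx0m : ∀ y ∈ flowPolytope A s t, l y ≤ l x0 := by
    rw [hGl] at hx0; exact hx0.2
  obtain ⟨p₀, hp₀, -⟩ := exists_pos_path hA hx0S
  obtain ⟨q, hqpath, hqmax⟩ := exists_max_vertex hA hst l hp₀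
  have hchiq : chi q ∈ G := by
    rw [hGl]
    exact ⟨chi_mem_flowPolytope hst hqpath, hqmax⟩
  have hqQ : q ∈ Q := ⟨hqpath, hchiq⟩
  -- some path's vertex is outside G
  obtain ⟨p₁, hp₁path, hp₁notG⟩ : ∃ p₁, IsPath A s t p₁ ∧ chi p₁ ∉ G := by
    by_contra hall
    push_neg at hall
    apply hGneS
    apply Set.Subset.antisymm hGsubS
    have hsub : convexHull ℝ (chi '' {p | IsPath A s t p}) ⊆ G := by
      apply convexHull_min
      · rintro y ⟨p, hp, rfl⟩
        exact hall p hp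
      · rw [hGl]; exact convex_G
    rw [flowPolytope_eq_convexHull hA hst]
    exact hsub
  -- find an avoided reduced arc
  obtain ⟨a, hared, haav⟩ : ∃ a, a ∈ redArcs A s t ∧ ∀ p ∈ Q, a ∉ pathEdges p := by
    by_contra hno
    push_neg at hno
    have hPfin := paths_finite (A := A) (s := s) (t := t)
    set PF := hPfin.toFinset with hPF
    set QF := PF.filter (fun p => p ∈ Q) with hQF
    have hqQF : q ∈ QF := Finset.mem_filter.mpr
      ⟨hPfin.mem_toFinset.mpr hqpath, hqQ⟩
    have hp₁PF : p₁ ∈ PF := hPfin.mem_toFinset.mpr hp₁path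
    have hNpos : 0 < (PF.card : ℝ) := by
      have : 0 < PF.card := Finset.card_pos.mpr ⟨p₁, hp₁PF⟩
      exact_mod_cast this
    have hNQpos : 0 < (QF.card : ℝ) := by
      have : 0 < QF.card := Finset.card_pos.mpr ⟨q, hqQF⟩
      exact_mod_cast this
    set xb : (V × V) → ℝ := (PF.card : ℝ)⁻¹ • ∑ p ∈ PF, chi p with hxb
    set yb : (V × V) → ℝ := (QF.card : ℝ)⁻¹ • ∑ p ∈ QF, chi p with hyb
    have hxbS : xb ∈ flowPolytope A s t := by
      have hcm : PF.centerMass (fun _ => (1 : ℝ)) chi = xb := by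
        rw [Finset.centerMass]
        simp [hxb]
      rw [← hcm]
      exact Convex.centerMass_mem convex_flowPolytope (fun _ _ => zero_le_one)
        (by simpa using hNpos)
        (fun p hp => chi_mem_flowPolytope hst (hPfin.mem_toFinset.mp hp))
    have hybG : yb ∈ G := by
      have hcm : QF.centerMass (fun _ => (1 : ℝ)) chi = yb := by
        rw [Finset.centerMass]
        simp [hyb]
      rw [← hcm, hGl]
      refine Convex.centerMass_mem convex_G (fun _ _ => zero_le_one)
        (by simpa using hNQpos) ?_
      intro p hp
      have := (Finset.mem_filter.mp hp).2
      rw [← hGl]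
      exact this.2
    have hybS : yb ∈ flowPolytope A s t := hGsubS hybG
    have hybm : ∀ y ∈ flowPolytope A s t, l y ≤ l yb := by
      rw [hGl] at hybG; exact hybG.2
    -- pointwise evaluations
    have hxbev : ∀ b, xb b = (PF.card : ℝ)⁻¹ * ∑ p ∈ PF, chi p b := by
      intro b
      rw [hxb]
      rw [Pi.smul_apply, Finset.sum_apply]
      rfl
    have hybev : ∀ b, yb b = (QF.card : ℝ)⁻¹ * ∑ p ∈ QF, chi p b := by
      intro b
      rw [hyb]
      rw [Pi.smul_apply, Finset.sum_apply]
      rfl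
    -- if yb vanishes on an arc so does xb
    have key1 : ∀ b, yb b = 0 → xb b = 0 := by
      intro b hyb0
      by_contra hxb0
      have hxbpos : 0 < xb b := lt_of_le_of_ne (hxbS.2.1 b) (Ne.symm hxb0)
      rw [hxbev] at hxbpos
      have : ∃ p ∈ PF, 0 < chi p b := by
        by_contra hc
        push_neg at hc
        have h1 : ∑ p ∈ PF, chi p b ≤ 0 := Finset.sum_nonpos hc
        nlinarith [inv_pos.mpr hNpos]
      obtain ⟨p, hpPF, hpb⟩ := this
      have hbmem : b ∈ pathEdges p := by
        by_contra hc
        rw [chi, if_neg hc] at hpb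
        exact lt_irrefl 0 hpb
      have hbred : b ∈ redArcs A s t :=
        (hPfin.mem_toFinset.mp hpPF).edge_mem_red hbmem
      obtain ⟨p', hp'Q, hp'b⟩ := hno b hbred
      have hp'QF : p' ∈ QF := Finset.mem_filter.mpr
        ⟨hPfin.mem_toFinset.mpr (hQpaths p' hp'Q), hp'Q⟩
      have hchip' : chi p' b = 1 := by rw [chi, if_pos hp'b]
      have hsum : (1 : ℝ) ≤ ∑ p ∈ QF, chi p b := by
        calc (1 : ℝ) = chi p' b := hchip'.symm
        _ ≤ ∑ p ∈ QF, chi p b :=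
            Finset.single_le_sum (fun i _ => chi_nonneg i b) hp'QF
      have : 0 < yb b := by
        rw [hybev]
        have := inv_pos.mpr hNQpos
        nlinarith
      rw [hyb0] at this
      exact lt_irrefl 0 this
    -- minimum positive value of yb
    have hFpos : (A.filter (fun a => 0 < yb a)).Nonempty := by
      obtain ⟨a0, ha0A, ha0⟩ := flow_pos_arc hybS
      exact ⟨a0, Finset.mem_filter.mpr ⟨ha0A, ha0⟩⟩
    set m := (A.filter (fun a => 0 < yb a)).inf' hFpos yb with hm
    have hmpos : 0 < m := by
      rw [hm, Finset.lt_inf'_iff]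
      intro b hb
      exact (Finset.mem_filter.mp hb).2
    set ε := m / 2 with hε
    have hεpos : 0 < ε := by rw [hε]; linarith
    -- xb is bounded by 1
    have hxble : ∀ b, xb b ≤ 1 := by
      intro b
      rw [hxbev]
      have h1 : ∑ p ∈ PF, chi p b ≤ PF.card := by
        calc ∑ p ∈ PF, chi p b ≤ ∑ _p ∈ PF, (1 : ℝ) :=
          Finset.sum_le_sum (fun i _ => chi_le_one i b)
        _ = PF.card := by simp
      rw [inv_mul_le_iff₀ hNpos, mul_one]
      exact h1
    set z : (V × V) → ℝ := fun b => (1 + ε) * yb b + (-ε) * xb b with hz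
    have hzflow : IsFlow A s t z := by
      refine ⟨?_, ?_, ?_, ?_⟩
      · intro b hb
        rw [hz]
        simp only
        rw [hybS.1 b hb, hxbS.1 b hb]; ring
      · intro b
        rw [hz]
        simp only
        by_cases hyb0 : yb b = 0
        · rw [hyb0, key1 b hyb0]; ring_nf; exact le_refl 0
        · have hybpos : 0 < yb b := lt_of_le_of_ne (hybS.2.1 b) (Ne.symm hyb0)
          have hbA : b ∈ A := by
            by_contra hc
            rw [hybS.1 b hc] at hybpos
            exact lt_irrefl 0 hybpos
          have hble' : m ≤ yb b :=
            Finset.inf'_le _ (Finset.mem_filter.mpr ⟨hbA, hybpos⟩)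
          have hx1 := hxble b
          have hx0 := hxbS.2.1 b
          nlinarith
      · intro v hvs hvt
        rw [hz, outSum_comb, inSum_comb, hybS.2.2.1 v hvs hvt, hxbS.2.2.1 v hvs hvt]
      · rw [hz, outSum_comb, inSum_comb]
        have e1 := hybS.2.2.2
        have e2 := hxbS.2.2.2
        nlinarith
    -- l yb is strictly larger than l xb
    have hlxyb : l xb < l yb := by
      have h1 : l xb = (PF.card : ℝ)⁻¹ * ∑ p ∈ PF, l (chi p) := by
        rw [hxb, map_smul, map_sum]; rfl
      have h2 : ∑ p ∈ PF, l (chi p) < ∑ _p ∈ PF, l yb := by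
        apply Finset.sum_lt_sum
        · intro p hp
          exact hybm _ (chi_mem_flowPolytope hst (hPfin.mem_toFinset.mp hp))
        · refine ⟨p₁, hp₁PF, ?_⟩
          have hle : l (chi p₁) ≤ l yb := hybm _ (chi_mem_flowPolytope hst hp₁path)
          rcases lt_or_eq_of_le hle with h | h
          · exact h
          · exfalso
            apply hp₁notG
            rw [hGl]
            refine ⟨chi_mem_flowPolytope hst hp₁path, ?_⟩
            intro y hy
            rw [h]
            exact hybm y hy
      have h3 : ∑ _p ∈ PF, l yb = PF.card * l yb := by simp
      rw [h1]
      rw [h3] at h2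
      rw [inv_mul_lt_iff₀ hNpos]
      exact h2
    have hlz : l z = (1 + ε) * l yb + (-ε) * l xb := by
      have hzvec : z = (1 + ε) • yb + (-ε) • xb := by
        funext b
        rw [hz]
        rw [Pi.add_apply, Pi.smul_apply, Pi.smul_apply, smul_eq_mul, smul_eq_mul]
      calc l z = l ((1 + ε) • yb + (-ε) • xb) := by rw [hzvec]
      _ = l ((1 + ε) • yb) + l ((-ε) • xb) := map_add l _ _
      _ = (1 + ε) • l yb + (-ε) • l xb :=
          congrArg₂ (· + ·) (map_smul l (1 + ε) yb) (map_smul l (-ε) xb)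
      _ = (1 + ε) * l yb + (-ε) * l xb := rfl
    have hcontra : l z ≤ l yb := hybm z hzflow
    rw [hlz] at hcontra
    nlinarith [mul_pos hεpos (sub_pos.mpr hlxyb)]
  -- conclude with the good corridor
  obtain ⟨c, hgc, hcav⟩ := good_corridor_find hA hst hQpaths hqQ hared haav
  refine ⟨c, hgc, ?_⟩
  intro x hx
  refine ⟨hGsubS hx, ?_⟩
  intro b hb
  refine face_eval_zero hA hst hGl hx ?_
  intro p hppath hpG
  rw [chi, if_neg (hcav p ⟨hppath, hpG⟩ b hb)]

end Geometry

section Assembly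

variable {A : Finset (V × V)} {s t : V}

lemma path_eq_single {p : List V} (hp : IsPath A s s p) : p = [s] := by
  have h1 := hp.cons_form
  cases htl : p.tail with
  | nil => rw [h1, htl]
  | cons b l =>
    exfalso
    have hpp : p = s :: b :: l := by rw [h1, htl]
    have h2 := hp.2.2.1
    rw [hpp, List.getLast?_cons_cons,
      List.getLast?_eq_getLast (by simp), Option.some.injEq] at h2
    have hmem : s ∈ b :: l := by
      rw [← h2]
      exact List.getLast_mem _
    have hs : s ∈ p.tail := by rw [htl]; exact hmem
    exact (hp.mem_tail_iff.mp hs).2 rfl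

lemma lists_eq_of_edges :
    ∀ (q p : List V), q.Nodup → p.Nodup →
      q.head? = p.head? → q.getLast? = p.getLast? →
      (∀ b ∈ pathEdges q, b ∈ pathEdges p) → q = p := by
  intro q
  induction q with
  | nil =>
    intro p _ _ hh _ _
    cases p with
    | nil => rfl
    | cons a p' => exact absurd hh.symm (by simp)
  | cons x q' ih =>
    intro p hqnd hpnd hh hl hsub
    cases p with
    | nil => exact absurd hh (by simp)
    | cons a p' =>
      have hax : a = x := by
        simp only [List.head?_cons, Option.some.injEq] at hh
        exact hh.symm
      subst hax
      cases q' with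
      | nil =>
        cases p' with
        | nil => rfl
        | cons b p'' =>
          exfalso
          have h2 : (b :: p'').getLast? = some a := by
            have e1 : (a :: b :: p'').getLast? = (b :: p'').getLast? :=
              List.getLast?_cons_cons
            rw [← e1, ← hl]
            rfl
          have hmem : a ∈ b :: p'' := by
            rw [List.getLast?_eq_getLast (by simp), Option.some.injEq] at h2
            rw [← h2]
            exact List.getLast_mem _
          exact (List.nodup_cons.mp hpnd).1 hmem
      | cons y q'' =>
        cases p' with
        | nil =>
          exfalso
          have : (a, y) ∈ pathEdges [a] := hsub (a, y)
            (by rw [pathEdges_cons_cons]; exact List.mem_cons_self)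
          simp [pathEdges_single] at this
        | cons py p'' =>
          have hfirstq : (a, y) ∈ pathEdges (a :: y :: q'') := by
            rw [pathEdges_cons_cons]; exact List.mem_cons_self
          have hfirstp : (a, py) ∈ pathEdges (a :: py :: p'') := by
            rw [pathEdges_cons_cons]; exact List.mem_cons_self
          have hypy : y = py := succ_unique hpnd (hsub _ hfirstq) hfirstp
          subst hypy
          have heq : y :: q'' = y :: p'' := by
            apply ih
            · exact (List.nodup_cons.mp hqnd).2
            · exact (List.nodup_cons.mp hpnd).2
            · rfl
            · have e1 : (a :: y :: q'').getLast? = (y :: q'').getLast? :=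
                List.getLast?_cons_cons
              have e2 : (a :: y :: p'').getLast? = (y :: p'').getLast? :=
                List.getLast?_cons_cons
              rw [← e1, ← e2]
              exact hl
            · intro b hb
              have hbq : b ∈ pathEdges (a :: y :: q'') := by
                rw [pathEdges_cons_cons]; exact List.mem_cons_of_mem _ hb
              have hbp := hsub b hbq
              rw [pathEdges_cons_cons] at hbp
              rcases List.mem_cons.mp hbp with h1 | h1
              · exfalso
                have : b.1 ∈ (y :: q'').dropLast := fst_mem_dropLast hb
                have hbl : b.1 = a := by rw [h1]
                have : a ∈ y :: q'' := by
                  rw [← hbl]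
                  exact (List.dropLast_sublist _).mem this
                exact (List.nodup_cons.mp hqnd).1 this
              · exact h1
          rw [heq]

lemma exists_good_corridor (hA : Acyclic A) (hst : s ≠ t)
    {p q : List V} (hp : IsPath A s t p) (hq : IsPath A s t q) (hne : q ≠ p) :
    ∃ c, IsGoodCorridor A s t c := by
  obtain ⟨a, haq, hap⟩ : ∃ a, a ∈ pathEdges q ∧ a ∉ pathEdges p := by
    by_contra hc
    push_neg at hc
    exact hne (lists_eq_of_edges q p hq.2.2.2 hp.2.2.2
      (hq.2.1.trans hp.2.1.symm) (hq.2.2.1.trans hp.2.2.1.symm) hc)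
  have hared : a ∈ redArcs A s t := hq.edge_mem_red haq
  have hQpaths : ∀ p' ∈ ({p} : Set (List V)), IsPath A s t p' := by
    intro p' hp'
    rw [Set.mem_singleton_iff.mp hp']
    exact hp
  obtain ⟨c, hgc, -⟩ := good_corridor_find hA hst hQpaths rfl hared
    (fun p' hp' => by rw [Set.mem_singleton_iff.mp hp']; exact hap)
  exact ⟨c, hgc⟩

lemma chi_mem_corridorFace (hst : s ≠ t) {c p : List V} (hp : IsPath A s t p)
    (hav : ∀ b ∈ pathEdges c, b ∉ pathEdges p) :
    chi p ∈ corridorFace A s t c := by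
  refine ⟨chi_mem_flowPolytope hst hp, ?_⟩
  intro b hb
  rw [chi, if_neg (hav b hb)]

lemma corridorFace_exposed (hA : Acyclic A) (hst : s ≠ t) {c : List V}
    (hgc : IsGoodCorridor A s t c) :
    IsExposed ℝ (flowPolytope A s t) (corridorFace A s t c) := by
  intro _
  classical
  obtain ⟨pav, hpav, hpavoid⟩ := good_corridor_avoidable hA hst hgc
  set E := (pathEdges c).toFinset with hE
  set l0 : ((V × V) → ℝ) →L[ℝ] ℝ :=
    -(∑ b ∈ E, (ContinuousLinearMap.proj b : ((V × V) → ℝ) →L[ℝ] ℝ)) with hl0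
  refine ⟨l0, ?_⟩
  have hlval : ∀ x : (V × V) → ℝ, l0 x = -∑ b ∈ E, x b := by
    intro x
    rw [hl0]
    rw [ContinuousLinearMap.neg_apply, ContinuousLinearMap.sum_apply]
    congr 1
  ext x
  constructor
  · rintro ⟨hxS, hxz⟩
    refine ⟨hxS, ?_⟩
    intro y hyS
    rw [hlval, hlval]
    have h1 : ∑ b ∈ E, x b = 0 :=
      Finset.sum_eq_zero (fun b hb => hxz b (List.mem_toFinset.mp hb))
    have h2 : 0 ≤ ∑ b ∈ E, y b := Finset.sum_nonneg (fun b _ => hyS.2.1 b)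
    rw [h1]
    linarith
  · rintro ⟨hxS, hxmax⟩
    refine ⟨hxS, ?_⟩
    have hle := hxmax (chi pav) (chi_mem_flowPolytope hst hpav)
    rw [hlval, hlval] at hle
    have h0 : ∑ b ∈ E, chi pav b = 0 := by
      apply Finset.sum_eq_zero
      intro b hb
      rw [chi, if_neg (hpavoid b (List.mem_toFinset.mp hb))]
    rw [h0] at hle
    have h1 : ∑ b ∈ E, x b ≤ 0 := by linarith
    have h2 : ∑ b ∈ E, x b = 0 :=
      le_antisymm h1 (Finset.sum_nonneg (fun b _ => hxS.2.1 b))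
    have h3 := (Finset.sum_eq_zero_iff_of_nonneg (fun b _ => hxS.2.1 b)).mp h2
    intro b hb
    exact h3 b (List.mem_toFinset.mpr hb)

lemma corridorFace_ne (hst : s ≠ t) {c : List V}
    (hgc : IsGoodCorridor A s t c) :
    corridorFace A s t c ≠ flowPolytope A s t := by
  intro he
  obtain ⟨h, w, rest, hshape⟩ := corridor_shape hgc.1
  have hfirst : (h, w) ∈ pathEdges c := corridor_first_arc hshape
  have hfirstred : (h, w) ∈ redArcs A s t := corridor_edges_red hgc.1 _ hfirst
  obtain ⟨p1, hp1, hp1mem⟩ := exists_path_of_red hfirstred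
  have hp1S : chi p1 ∈ flowPolytope A s t := chi_mem_flowPolytope hst hp1
  have : chi p1 ∈ corridorFace A s t c := by rw [he]; exact hp1S
  have hzero := this.2 (h, w) hfirst
  rw [chi, if_pos hp1mem] at hzero
  exact one_ne_zero hzero

lemma corridorFace_facet (hA : Acyclic A) (hst : s ≠ t) {c : List V}
    (hgc : IsGoodCorridor A s t c) :
    IsFacetOf (flowPolytope A s t) (corridorFace A s t c) := by
  obtain ⟨pav, hpav, hpavoid⟩ := good_corridor_avoidable hA hst hgc
  refine ⟨corridorFace_exposed hA hst hgc, corridorFace_ne hst hgc, ?_⟩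
  intro G hGexp hGneS hsub
  have hGne : G.Nonempty := ⟨chi pav, hsub (chi_mem_corridorFace hst hpav hpavoid)⟩
  obtain ⟨c'', hgc'', hsub''⟩ := exposed_subset_corridorFace hA hst hGexp hGne hGneS
  by_cases hcc : c = c''
  · subst hcc
    exact Set.Subset.antisymm hsub'' hsub
  · exfalso
    obtain ⟨p', hp', ⟨b, hbc, hbp⟩, hav⟩ :=
      good_corridor_separate hA hst hgc'' hgc (fun he => hcc he.symm)
    have h1 : chi p' ∈ corridorFace A s t c := chi_mem_corridorFace hst hp' hav
    have h2 : chi p' ∈ corridorFace A s t c'' := hsub'' (hsub h1)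
    have h3 := h2.2 b hbc
    rw [chi, if_pos hbp] at h3
    exact one_ne_zero h3

lemma facet_is_corridorFace (hA : Acyclic A) (hst : s ≠ t)
    (hex : ∃ c0, IsGoodCorridor A s t c0)
    {F : Set ((V × V) → ℝ)} (hF : IsFacetOf (flowPolytope A s t) F) :
    ∃ c, IsGoodCorridor A s t c ∧ F = corridorFace A s t c := by
  obtain ⟨hFexp, hFneS, hFmax⟩ := hF
  by_cases hFe : F = ∅
  · exfalso
    obtain ⟨c0, hgc0⟩ := hex
    obtain ⟨pav, hpav, hpavoid⟩ := good_corridor_avoidable hA hst hgc0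
    have := hFmax (corridorFace A s t c0) (corridorFace_exposed hA hst hgc0)
      (corridorFace_ne hst hgc0) (hFe ▸ Set.empty_subset _)
    have hne : (corridorFace A s t c0).Nonempty :=
      ⟨chi pav, chi_mem_corridorFace hst hpav hpavoid⟩
    rw [this, hFe] at hne
    exact Set.not_nonempty_empty hne
  · have hFne : F.Nonempty := Set.nonempty_iff_ne_empty.mpr hFe
    obtain ⟨c'', hgc'', hsub''⟩ := exposed_subset_corridorFace hA hst hFexp hFne hFneS
    have := hFmax (corridorFace A s t c'') (corridorFace_exposed hA hst hgc'')
      (corridorFace_ne hst hgc'') hsub''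
    exact ⟨c'', hgc'', this.symm⟩

end Assembly

/-- The number of facets of the flow polytope of an acyclic network with more than one
`s`–`t` path equals the number of good corridors. -/
theorem stmt15 (A : Finset (V × V)) (s t : V) (hA : Acyclic A)
    (h2 : ∃ p q : List V, IsPath A s t p ∧ IsPath A s t q ∧ p ≠ q) :
    {F : Set ((V × V) → ℝ) | IsFacetOf (flowPolytope A s t) F}.ncard
      = {c : List V | IsGoodCorridor A s t c}.ncard := by
  obtain ⟨p, q, hp, hq, hpq⟩ := h2
  have hst : s ≠ t := by
    intro he
    subst he
    exact hpq ((path_eq_single hp).trans (path_eq_single hq).symm)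
  have hex : ∃ c0, IsGoodCorridor A s t c0 :=
    exists_good_corridor hA hst hp hq (fun he => hpq he.symm)
  have hset : {F : Set ((V × V) → ℝ) | IsFacetOf (flowPolytope A s t) F}
      = corridorFace A s t '' {c : List V | IsGoodCorridor A s t c} := by
    ext F
    constructor
    · intro hF
      obtain ⟨c, hgc, he⟩ := facet_is_corridorFace hA hst hex hF
      exact ⟨c, hgc, he.symm⟩
    · rintro ⟨c, hgc, rfl⟩
      exact corridorFace_facet hA hst hgc
  rw [hset]
  apply Set.ncard_image_of_injOn
  intro c hc c' hc' he
  by_contra hne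
  obtain ⟨p', hp', ⟨b, hbc, hbp⟩, hav⟩ := good_corridor_separate hA hst hc hc' hne
  have h1 : chi p' ∈ corridorFace A s t c' := chi_mem_corridorFace hst hp' hav
  rw [← he] at h1
  have h3 := h1.2 b hbc
  rw [chi, if_pos hbp] at h3
  exact one_ne_zero h3
end

section
/- For two linear orderings L_1 and L_2 of a finite set C, the corresponding vertices of the multiple choice polytope (equivalently, the characteristic vectors of the associated ∅–C paths in the network whose nodes are subsets of C and arcs are covering pairs of inclusion) are adjacent if and only if: whenever a nonempty proper subset S of C is a beginning set of both L_1 and L_2, then L_1 and L_2 coincide on S or on C \ S. -/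
open scoped Classical

variable {V : Type*} [Fintype V] [DecidableEq V]

/-- The arcs of the network `D_LO(C) = (2^C, ≺, ∅, C)`: the covering pairs of inclusion. -/
def mcArcs (α : Type*) [Fintype α] [DecidableEq α] : Finset (Finset α × Finset α) :=
  Finset.univ.filter fun a => a.1 ⊆ a.2 ∧ a.2.card = a.1.card + 1

/-- A linear ordering of `α`, encoded as the list of all elements in decreasing order. -/
def IsLinOrd {α : Type*} (l : List α) : Prop := l.Nodup ∧ ∀ a : α, a ∈ l

/-- The `∅`–`C` path corresponding to a linear ordering: the list of its beginning sets. -/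
def pathOf {α : Type*} [DecidableEq α] (l : List α) : List (Finset α) :=
  (List.range (l.length + 1)).map fun k => (l.take k).toFinset

set_option linter.unusedSectionVars false
set_option maxHeartbeats 1000000

section Aux
variable {α : Type*} [Fintype α] [DecidableEq α]

/-- The arc of the path of `l` at level `k`. -/
def arcOf (l : List α) (k : ℕ) : Finset α × Finset α :=
  ((l.take k).toFinset, (l.take (k+1)).toFinset)

lemma IsLinOrd.length {l : List α} (h : IsLinOrd l) : l.length = Fintype.card α := by
  have : l.toFinset = Finset.univ := by
    ext a; simp [h.2 a]
  have h2 := List.toFinset_card_of_nodup h.1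
  rw [this, Finset.card_univ] at h2
  omega

lemma take_toFinset_card {l : List α} (h : l.Nodup) (k : ℕ) :
    (l.take k).toFinset.card = min k l.length := by
  rw [List.toFinset_card_of_nodup (h.sublist (List.take_sublist _ _)), List.length_take]

lemma mem_pathEdges_iff {l : List α} (a : Finset α × Finset α) :
    a ∈ pathEdges (pathOf l) ↔ ∃ k < l.length, a = arcOf l k := by
  unfold pathEdges pathOf
  constructor
  · intro ha
    rw [List.mem_iff_getElem] at ha
    obtain ⟨i, hi, hget⟩ := ha
    have hlen : ((List.range (l.length + 1)).map fun k => (l.take k).toFinset).length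
        = l.length + 1 := by simp
    have hi' : i < l.length := by
      simp only [List.length_zip, hlen, List.length_tail] at hi; omega
    refine ⟨i, hi', ?_⟩
    rw [List.getElem_zip] at hget
    rw [← hget]
    have h1 : (((List.range (l.length + 1)).map fun k => (l.take k).toFinset)).tail[i]'(by
        simp; omega) = (((List.range (l.length + 1)).map fun k => (l.take k).toFinset))[i+1]'(by
        simp; omega) := List.getElem_tail _
    rw [h1]
    simp [arcOf]
  · rintro ⟨k, hk, rfl⟩
    rw [List.mem_iff_getElem]
    refine ⟨k, ?_, ?_⟩
    · simp [List.length_tail]; omega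
    · rw [List.getElem_zip]
      have h1 : (((List.range (l.length + 1)).map fun k => (l.take k).toFinset)).tail[k]'(by
          simp; omega) = (((List.range (l.length + 1)).map fun k => (l.take k).toFinset))[k+1]'(by
          simp; omega) := List.getElem_tail _
      rw [h1]
      simp [arcOf]



lemma take_succ_toFinset {l : List α} (k : ℕ) (hk : k < l.length) :
    (l.take (k+1)).toFinset = insert l[k] (l.take k).toFinset := by
  rw [List.take_succ, List.getElem?_eq_getElem hk]
  simp only [Option.toList_some]
  rw [List.toFinset_append, Finset.union_comm]
  simp [Finset.insert_eq, -Finset.singleton_union]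

lemma getElem_not_mem_take {l : List α} (h : l.Nodup) (k : ℕ) (hk : k < l.length) :
    l[k] ∉ (l.take k).toFinset := by
  intro hmem
  rw [List.mem_toFinset, List.mem_take_iff_getElem] at hmem
  obtain ⟨i, hi, hEq⟩ := hmem
  have : i < l.length := by omega
  have := h.getElem_inj_iff.mp hEq
  omega

lemma arcOf_fst_card {l : List α} (h : l.Nodup) (k : ℕ) (hk : k ≤ l.length) :
    (arcOf l k).1.card = k := by
  simp [arcOf, take_toFinset_card h, Nat.min_eq_left hk]


end Aux

section Aux2
variable {α : Type*} [Fintype α] [DecidableEq α]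

lemma mem_pathEdges_iff' {l : List α} (h : l.Nodup) (a : Finset α × Finset α) :
    a ∈ pathEdges (pathOf l) ↔ a.1.card < l.length ∧ a = arcOf l a.1.card := by
  rw [mem_pathEdges_iff]
  constructor
  · rintro ⟨k, hk, rfl⟩
    have hc : (arcOf l k).1.card = k := arcOf_fst_card h k (le_of_lt hk)
    rw [hc]; exact ⟨hk, rfl⟩
  · rintro ⟨hk, ha⟩
    exact ⟨a.1.card, hk, ha⟩

lemma chi_pathOf_eq {l : List α} (h : l.Nodup) (a : Finset α × Finset α) :
    chi (pathOf l) a =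
      if a.1.card < l.length ∧ a = arcOf l a.1.card then 1 else 0 := by
  unfold chi
  by_cases hmem : a ∈ pathEdges (pathOf l)
  · rw [if_pos hmem, if_pos ((mem_pathEdges_iff' h a).mp hmem)]
  · rw [if_neg hmem, if_neg (fun hc => hmem ((mem_pathEdges_iff' h a).mpr hc))]

lemma chi_arcOf {l : List α} (h : l.Nodup) (k : ℕ) (hk : k < l.length) :
    chi (pathOf l) (arcOf l k) = 1 := by
  unfold chi
  rw [if_pos ((mem_pathEdges_iff _).mpr ⟨k, hk, rfl⟩)]

lemma chi_ne_arcOf {l : List α} (h : l.Nodup) (a : Finset α × Finset α)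
    (ha : a ≠ arcOf l a.1.card) : chi (pathOf l) a = 0 := by
  rw [chi_pathOf_eq h a, if_neg (fun hc => ha hc.2)]

lemma arcOf_mem_mcArcs {l : List α} (h : l.Nodup) (k : ℕ) (hk : k < l.length) :
    arcOf l k ∈ mcArcs α := by
  rw [mcArcs, Finset.mem_filter]
  refine ⟨Finset.mem_univ _, ?_, ?_⟩
  · simp only [arcOf]
    rw [take_succ_toFinset k hk]
    exact Finset.subset_insert _ _
  · simp only [arcOf]
    rw [take_succ_toFinset k hk,
      Finset.card_insert_of_notMem (getElem_not_mem_take h k hk)]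

lemma mcArcs_fst_card_lt {l : List α} (hl : IsLinOrd l) {a : Finset α × Finset α}
    (ha : a ∈ mcArcs α) : a.1.card < l.length := by
  rw [mcArcs, Finset.mem_filter] at ha
  have : a.2.card ≤ Fintype.card α := Finset.card_le_univ _
  rw [hl.length]; omega

lemma eq_of_take_toFinset_eq {l1 l2 : List α} (h1 : IsLinOrd l1) (h2 : IsLinOrd l2)
    (hB : ∀ k, (l1.take k).toFinset = (l2.take k).toFinset) : l1 = l2 := by
  have hlen : l1.length = l2.length := by rw [h1.length, h2.length]
  apply List.ext_getElem hlen
  intro q hq hq'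
  have hins : insert l1[q] (l1.take q).toFinset = insert l2[q] (l1.take q).toFinset := by
    rw [← take_succ_toFinset q hq, hB (q+1), take_succ_toFinset q hq', ← hB q]
  have h1n : l1[q] ∉ (l1.take q).toFinset := getElem_not_mem_take h1.1 q hq
  have : l1[q] ∈ insert l2[q] (l1.take q).toFinset := by
    rw [← hins]; exact Finset.mem_insert_self _ _
  rcases Finset.mem_insert.mp this with h | h
  · exact h
  · exact absurd h h1n

end Aux2

section Flow
variable {α : Type*} [Fintype α] [DecidableEq α]

lemma outSum_chi_s16 {l : List α} (h : l.Nodup) (v : Finset α) :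
    outSum (mcArcs α) (chi (pathOf l)) v =
      if v.card < l.length ∧ v = (l.take v.card).toFinset then 1 else 0 := by
  unfold outSum
  split_ifs with hv
  · obtain ⟨hlt, hveq⟩ := hv
    have hmem : arcOf l v.card ∈ (mcArcs α).filter (fun a => a.1 = v) := by
      rw [Finset.mem_filter]
      refine ⟨arcOf_mem_mcArcs h v.card hlt, ?_⟩
      simp [arcOf, ← hveq]
    have hz : ∀ b ∈ (mcArcs α).filter (fun a => a.1 = v), b ≠ arcOf l v.card →
        chi (pathOf l) b = 0 := by
      intro b hb hbne
      rw [Finset.mem_filter] at hb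
      apply chi_ne_arcOf h
      intro hbeq
      apply hbne
      rw [hbeq]
      congr 1
      rw [hb.2]
    rw [Finset.sum_eq_single_of_mem _ hmem hz]
    exact chi_arcOf h v.card hlt
  · apply Finset.sum_eq_zero
    intro b hb
    rw [Finset.mem_filter] at hb
    rw [chi_pathOf_eq h]
    rw [if_neg]
    rintro ⟨hlt, hbeq⟩
    apply hv
    rw [← hb.2]
    refine ⟨hlt, ?_⟩
    conv_lhs => rw [hbeq]
    rfl

lemma inSum_chi_s16 {l : List α} (h : l.Nodup) (v : Finset α) :
    inSum (mcArcs α) (chi (pathOf l)) v =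
      if 0 < v.card ∧ v.card ≤ l.length ∧ v = (l.take v.card).toFinset then 1 else 0 := by
  unfold inSum
  split_ifs with hv
  · obtain ⟨hpos, hle, hveq⟩ := hv
    have hmem : arcOf l (v.card - 1) ∈ (mcArcs α).filter (fun a => a.2 = v) := by
      rw [Finset.mem_filter]
      have hlt : v.card - 1 < l.length := by omega
      refine ⟨arcOf_mem_mcArcs h _ hlt, ?_⟩
      show (l.take (v.card - 1 + 1)).toFinset = v
      have he : v.card - 1 + 1 = v.card := by omega
      rw [he]
      exact hveq.symm
    have hz : ∀ b ∈ (mcArcs α).filter (fun a => a.2 = v), b ≠ arcOf l (v.card - 1) →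
        chi (pathOf l) b = 0 := by
      intro b hb hbne
      rw [Finset.mem_filter] at hb
      rw [chi_pathOf_eq h, if_neg]
      rintro ⟨hlt, hbeq⟩
      apply hbne
      -- b = arcOf l b.1.card with head = v, so (take (b.1.card+1)).toFinset = v
      have hhead : (l.take (b.1.card + 1)).toFinset = v := by
        rw [← hb.2]; conv_rhs => rw [hbeq]
        rfl
      have hcard : b.1.card + 1 = v.card := by
        rw [← hhead, take_toFinset_card h]; omega
      rw [hbeq]
      congr 1
      omega
    rw [Finset.sum_eq_single_of_mem _ hmem hz]
    exact chi_arcOf h _ (by omega)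
  · apply Finset.sum_eq_zero
    intro b hb
    rw [Finset.mem_filter] at hb
    rw [chi_pathOf_eq h, if_neg]
    rintro ⟨hlt, hbeq⟩
    apply hv
    have hhead : (l.take (b.1.card + 1)).toFinset = v := by
      rw [← hb.2]; conv_rhs => rw [hbeq]
      rfl
    have hcard : b.1.card + 1 = v.card := by
      rw [← hhead, take_toFinset_card h]; omega
    refine ⟨by omega, by omega, ?_⟩
    rw [← hcard, hhead]

lemma chi_mem_flowPolytope_s16 {l : List α} (h : IsLinOrd l) (hN : 0 < Fintype.card α) :
    chi (pathOf l) ∈ flowPolytope (mcArcs α) ∅ Finset.univ := by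
  have hlen := h.length
  refine ⟨?_, ?_, ?_, ?_⟩
  · intro a ha
    rw [chi_pathOf_eq h.1, if_neg]
    rintro ⟨hlt, hbeq⟩
    exact ha (hbeq ▸ arcOf_mem_mcArcs h.1 _ hlt)
  · intro a
    unfold chi
    split_ifs <;> norm_num
  · intro v hv1 hv2
    rw [outSum_chi_s16 h.1, inSum_chi_s16 h.1]
    have hpos : 0 < v.card := Finset.card_pos.mpr (Finset.nonempty_iff_ne_empty.mpr hv1)
    have hlt : v.card < l.length := by
      have h1 : v.card ≤ Fintype.card α := Finset.card_le_univ v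
      rcases lt_or_eq_of_le h1 with h' | h'
      · omega
      · exact absurd (Finset.eq_univ_of_card v h') hv2
    by_cases hveq : v = (l.take v.card).toFinset
    · rw [if_pos ⟨hlt, hveq⟩, if_pos ⟨hpos, by omega, hveq⟩]
    · rw [if_neg (fun hc => hveq hc.2), if_neg (fun hc => hveq hc.2.2)]
  · rw [outSum_chi_s16 h.1, inSum_chi_s16 h.1]
    rw [if_pos (show (∅ : Finset α).card < l.length ∧ (∅ : Finset α) = (l.take (∅ : Finset α).card).toFinset
      from ⟨by rw [Finset.card_empty]; omega, by simp⟩)]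
    norm_num

end Flow

section Level
variable {α : Type*} [Fintype α] [DecidableEq α]

lemma mcArcs_snd_card {a : Finset α × Finset α} (ha : a ∈ mcArcs α) :
    a.2.card = a.1.card + 1 := by
  rw [mcArcs, Finset.mem_filter] at ha; exact ha.2.2

lemma mcArcs_card_lt {a : Finset α × Finset α} (ha : a ∈ mcArcs α) :
    a.1.card < Fintype.card α := by
  have h1 := mcArcs_snd_card ha
  have h2 : a.2.card ≤ Fintype.card α := Finset.card_le_univ _
  omega

lemma levelSum {x : Finset α × Finset α → ℝ}
    (hx : IsFlow (mcArcs α) ∅ Finset.univ x) :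
    ∀ k, k < Fintype.card α →
      ∑ a ∈ (mcArcs α).filter (fun a => a.1.card = k), x a = 1 := by
  intro k
  induction k with
  | zero =>
    intro _
    have hfe : (mcArcs α).filter (fun a => a.1.card = 0)
        = (mcArcs α).filter (fun a => a.1 = ∅) := by
      apply Finset.filter_congr
      intro a _
      simp [Finset.card_eq_zero]
    rw [hfe]
    have hin : inSum (mcArcs α) x ∅ = 0 := by
      apply Finset.sum_eq_zero
      intro a ha
      rw [Finset.mem_filter] at ha
      have := mcArcs_snd_card ha.1
      rw [ha.2] at this
      simp at this
    have hval := hx.2.2.2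
    rw [hin] at hval
    have : outSum (mcArcs α) x ∅ = 1 := by linarith
    exact this
  | succ k ih =>
    intro hk
    have hk' : k < Fintype.card α := by omega
    have hfib1 : ∑ v ∈ Finset.univ.filter (fun v : Finset α => v.card = k+1),
        ∑ a ∈ ((mcArcs α).filter (fun a => a.1.card = k+1)).filter (fun a => a.1 = v), x a
        = ∑ a ∈ (mcArcs α).filter (fun a => a.1.card = k+1), x a := by
      apply Finset.sum_fiberwise_of_maps_to
      intro a ha
      rw [Finset.mem_filter] at ha ⊢
      exact ⟨Finset.mem_univ _, ha.2⟩
    have hinner1 : ∀ v ∈ Finset.univ.filter (fun v : Finset α => v.card = k+1),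
        ∑ a ∈ ((mcArcs α).filter (fun a => a.1.card = k+1)).filter (fun a => a.1 = v), x a
          = outSum (mcArcs α) x v := by
      intro v hv
      rw [Finset.mem_filter] at hv
      unfold outSum
      congr 1
      rw [Finset.filter_filter]
      apply Finset.filter_congr
      intro a _
      constructor
      · rintro ⟨_, h2⟩; exact h2
      · intro h2; exact ⟨by rw [h2, hv.2], h2⟩
    have hfib2 : ∑ v ∈ Finset.univ.filter (fun v : Finset α => v.card = k+1),
        ∑ a ∈ ((mcArcs α).filter (fun a => a.2.card = k+1)).filter (fun a => a.2 = v), x a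
        = ∑ a ∈ (mcArcs α).filter (fun a => a.2.card = k+1), x a := by
      apply Finset.sum_fiberwise_of_maps_to
      intro a ha
      rw [Finset.mem_filter] at ha ⊢
      exact ⟨Finset.mem_univ _, ha.2⟩
    have hinner2 : ∀ v ∈ Finset.univ.filter (fun v : Finset α => v.card = k+1),
        ∑ a ∈ ((mcArcs α).filter (fun a => a.2.card = k+1)).filter (fun a => a.2 = v), x a
          = inSum (mcArcs α) x v := by
      intro v hv
      rw [Finset.mem_filter] at hv
      unfold inSum
      congr 1
      rw [Finset.filter_filter]
      apply Finset.filter_congr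
      intro a _
      constructor
      · rintro ⟨_, h2⟩; exact h2
      · intro h2; exact ⟨by rw [h2, hv.2], h2⟩
    have hcons : ∀ v ∈ Finset.univ.filter (fun v : Finset α => v.card = k+1),
        outSum (mcArcs α) x v = inSum (mcArcs α) x v := by
      intro v hv
      rw [Finset.mem_filter] at hv
      apply hx.2.2.1
      · intro h; rw [h] at hv; simp at hv
      · intro h; rw [h] at hv
        rw [Finset.card_univ] at hv
        omega
    have hfe : (mcArcs α).filter (fun a => a.2.card = k+1)
        = (mcArcs α).filter (fun a => a.1.card = k) := by
      apply Finset.filter_congr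
      intro a ha
      have := mcArcs_snd_card ha
      constructor
      · intro h; omega
      · intro h; omega
    calc ∑ a ∈ (mcArcs α).filter (fun a => a.1.card = k+1), x a
        = ∑ v ∈ Finset.univ.filter (fun v : Finset α => v.card = k+1),
            outSum (mcArcs α) x v := by
          rw [← hfib1]; exact Finset.sum_congr rfl hinner1
      _ = ∑ v ∈ Finset.univ.filter (fun v : Finset α => v.card = k+1),
            inSum (mcArcs α) x v := Finset.sum_congr rfl hcons
      _ = ∑ a ∈ (mcArcs α).filter (fun a => a.2.card = k+1), x a := by
          rw [← hfib2]
          exact Finset.sum_congr rfl (fun v hv => (hinner2 v hv).symm)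
      _ = 1 := by rw [hfe]; exact ih hk'

lemma totalSum {x : Finset α × Finset α → ℝ}
    (hx : IsFlow (mcArcs α) ∅ Finset.univ x) :
    ∑ a ∈ mcArcs α, x a = Fintype.card α := by
  have hfib : ∑ k ∈ Finset.range (Fintype.card α),
      ∑ a ∈ (mcArcs α).filter (fun a => a.1.card = k), x a = ∑ a ∈ mcArcs α, x a := by
    apply Finset.sum_fiberwise_of_maps_to
    intro a ha
    rw [Finset.mem_range]
    exact mcArcs_card_lt ha
  rw [← hfib]
  rw [Finset.sum_congr rfl (fun k hk => levelSum hx k (Finset.mem_range.mp hk))]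
  simp

end Level

section WSet
variable {α : Type*} [Fintype α] [DecidableEq α]

lemma outSum_add_smul {V : Type*} [Fintype V] [DecidableEq V]
    (A : Finset (V × V)) (x y : V × V → ℝ) (a b : ℝ) (v : V) :
    outSum A (a • x + b • y) v = a * outSum A x v + b * outSum A y v := by
  unfold outSum
  rw [Finset.mul_sum, Finset.mul_sum, ← Finset.sum_add_distrib]
  apply Finset.sum_congr rfl
  intro e _
  simp [mul_comm]

lemma inSum_add_smul {V : Type*} [Fintype V] [DecidableEq V]
    (A : Finset (V × V)) (x y : V × V → ℝ) (a b : ℝ) (v : V) :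
    inSum A (a • x + b • y) v = a * inSum A x v + b * inSum A y v := by
  unfold inSum
  rw [Finset.mul_sum, Finset.mul_sum, ← Finset.sum_add_distrib]
  apply Finset.sum_congr rfl
  intro e _
  simp [mul_comm]

lemma IsFlow.convex {V : Type*} [Fintype V] [DecidableEq V]
    {A : Finset (V × V)} {s t : V} {x y : V × V → ℝ} (hx : IsFlow A s t x)
    (hy : IsFlow A s t y) {a b : ℝ} (ha : 0 ≤ a) (hb : 0 ≤ b) (hab : a + b = 1) :
    IsFlow A s t (a • x + b • y) := by
  refine ⟨?_, ?_, ?_, ?_⟩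
  · intro e he
    simp [hx.1 e he, hy.1 e he]
  · intro e
    have := hx.2.1 e; have := hy.2.1 e
    simp only [Pi.add_apply, Pi.smul_apply, smul_eq_mul]
    positivity
  · intro v hv1 hv2
    rw [outSum_add_smul, inSum_add_smul, hx.2.2.1 v hv1 hv2, hy.2.2.1 v hv1 hv2]
  · rw [outSum_add_smul, inSum_add_smul]
    have h1 := hx.2.2.2
    have h2 := hy.2.2.2
    nlinarith

lemma chi_inj {l1 l2 : List α} (h1 : IsLinOrd l1) (h2 : IsLinOrd l2)
    (h : chi (pathOf l1) = chi (pathOf l2)) : l1 = l2 := by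
  have hlen : l1.length = l2.length := by rw [h1.length, h2.length]
  have harc : ∀ j, j < l1.length → arcOf l1 j = arcOf l2 j := by
    intro j hj
    have hc1 : chi (pathOf l1) (arcOf l1 j) = 1 := chi_arcOf h1.1 j hj
    rw [h] at hc1
    have hm : arcOf l1 j ∈ pathEdges (pathOf l2) := by
      by_contra hcon
      unfold chi at hc1
      rw [if_neg hcon] at hc1
      norm_num at hc1
    rw [mem_pathEdges_iff' h2.1] at hm
    have hcard : (arcOf l1 j).1.card = j := arcOf_fst_card h1.1 j (le_of_lt hj)
    rw [hcard] at hm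
    exact hm.2
  apply eq_of_take_toFinset_eq h1 h2
  intro k
  rcases Nat.eq_zero_or_pos k with rfl | hk
  · simp
  by_cases hkN : k ≤ l1.length
  · have hj : k - 1 < l1.length := by omega
    have := harc (k-1) hj
    have he : k - 1 + 1 = k := by omega
    have h2' := congrArg Prod.snd this
    simp only [arcOf] at h2'
    rwa [he] at h2'
  · have e1 : l1.take k = l1 := List.take_of_length_le (by omega)
    have e2 : l2.take k = l2 := List.take_of_length_le (by omega)
    rw [e1, e2]
    ext a; simp [h1.2 a, h2.2 a]

/-- union of the arc sets of the two paths -/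
noncomputable def Wset (l1 l2 : List α) : Finset (Finset α × Finset α) :=
  (pathEdges (pathOf l1)).toFinset ∪ (pathEdges (pathOf l2)).toFinset

lemma mem_Wset {l1 l2 : List α} (a : Finset α × Finset α) :
    a ∈ Wset l1 l2 ↔ (∃ k < l1.length, a = arcOf l1 k) ∨ (∃ k < l2.length, a = arcOf l2 k) := by
  unfold Wset
  rw [Finset.mem_union, List.mem_toFinset, List.mem_toFinset,
    mem_pathEdges_iff, mem_pathEdges_iff]

lemma Wset_subset {l1 l2 : List α} (h1 : l1.Nodup) (h2 : l2.Nodup) :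
    Wset l1 l2 ⊆ mcArcs α := by
  intro a ha
  rw [mem_Wset] at ha
  rcases ha with ⟨k, hk, rfl⟩ | ⟨k, hk, rfl⟩
  · exact arcOf_mem_mcArcs h1 k hk
  · exact arcOf_mem_mcArcs h2 k hk

lemma chi_zero_of_not_Wset {l1 l2 : List α} {a : Finset α × Finset α}
    (ha : a ∉ Wset l1 l2) : chi (pathOf l1) a = 0 ∧ chi (pathOf l2) a = 0 := by
  constructor <;> [skip; skip] <;>
  · unfold chi
    rw [if_neg]
    intro hmem
    apply ha
    unfold Wset
    rw [Finset.mem_union]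
    simp [List.mem_toFinset, hmem]

end WSet

section Support
variable {α : Type*} [Fintype α] [DecidableEq α]

lemma support_to_segment {l1 l2 : List α} (h1 : IsLinOrd l1) (h2 : IsLinOrd l2)
    (i m0 : ℕ) (hi1 : i + 1 < m0) (hm0N : m0 ≤ Fintype.card α)
    (hBeq : ∀ k, k ≤ i ∨ m0 ≤ k → (l1.take k).toFinset = (l2.take k).toFinset)
    (hBne : ∀ k, i < k → k < m0 → (l1.take k).toFinset ≠ (l2.take k).toFinset)
    {x : Finset α × Finset α → ℝ} (hx : IsFlow (mcArcs α) ∅ Finset.univ x)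
    (hsupp : ∀ a, a ∉ Wset l1 l2 → x a = 0) :
    x ∈ segment ℝ (chi (pathOf l1)) (chi (pathOf l2)) := by
  set N := Fintype.card α with hN
  have hlen1 : l1.length = N := h1.length
  have hlen2 : l2.length = N := h2.length
  -- arcs at the same level in W
  have hWlevel : ∀ a ∈ Wset l1 l2, a.1.card < N ∧
      (a = arcOf l1 a.1.card ∨ a = arcOf l2 a.1.card) := by
    intro a ha
    rw [mem_Wset] at ha
    rcases ha with ⟨k, hk, rfl⟩ | ⟨k, hk, rfl⟩
    · rw [arcOf_fst_card h1.1 k (le_of_lt hk)]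
      exact ⟨by omega, Or.inl rfl⟩
    · rw [arcOf_fst_card h2.1 k (le_of_lt hk)]
      exact ⟨by omega, Or.inr rfl⟩
  -- arcs coincide on the common parts
  have harcEq : ∀ k, k + 1 ≤ i ∨ m0 ≤ k → arcOf l1 k = arcOf l2 k := by
    intro k hk
    unfold arcOf
    rcases hk with hk | hk
    · rw [hBeq k (Or.inl (by omega)), hBeq (k+1) (Or.inl hk)]
    · rw [hBeq k (Or.inr hk), hBeq (k+1) (Or.inr (by omega))]
  have harcNe : ∀ k, i ≤ k → k < m0 → arcOf l1 k ≠ arcOf l2 k := by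
    intro k hki hkm heq
    rcases Nat.eq_or_lt_of_le hki with rfl | hlt
    · exact hBne (i+1) (by omega) (by omega) (congrArg Prod.snd heq)
    · exact hBne k hlt hkm (congrArg Prod.fst heq)
  -- level sums over the two candidate arcs
  have hlevsum : ∀ k, k < N →
      ∑ a ∈ ({arcOf l1 k, arcOf l2 k} : Finset (Finset α × Finset α)), x a = 1 := by
    intro k hk
    have hsub : ({arcOf l1 k, arcOf l2 k} : Finset (Finset α × Finset α))
        ⊆ (mcArcs α).filter (fun a => a.1.card = k) := by
      intro a ha
      rw [Finset.mem_insert, Finset.mem_singleton] at ha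
      rw [Finset.mem_filter]
      rcases ha with rfl | rfl
      · exact ⟨arcOf_mem_mcArcs h1.1 k (by omega), arcOf_fst_card h1.1 k (by omega)⟩
      · exact ⟨arcOf_mem_mcArcs h2.1 k (by omega), arcOf_fst_card h2.1 k (by omega)⟩
    have hzero : ∀ a ∈ (mcArcs α).filter (fun a => a.1.card = k),
        a ∉ ({arcOf l1 k, arcOf l2 k} : Finset (Finset α × Finset α)) → x a = 0 := by
      intro a ha hnot
      rw [Finset.mem_filter] at ha
      apply hsupp
      intro hW
      apply hnot
      rcases (hWlevel a hW).2 with h | h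
      · rw [ha.2] at h; rw [Finset.mem_insert]; exact Or.inl h
      · rw [ha.2] at h; rw [Finset.mem_insert, Finset.mem_singleton]; exact Or.inr h
    rw [Finset.sum_subset hsub hzero]
    exact levelSum hx k (by omega)
  -- common arcs carry flow 1
  have hcommon : ∀ k, k + 1 ≤ i ∨ m0 ≤ k → k < N → x (arcOf l1 k) = 1 := by
    intro k hk hkN
    have := hlevsum k hkN
    rw [← harcEq k hk] at this
    simpa using this
  -- split arcs
  have hsplit : ∀ k, i ≤ k → k < m0 → x (arcOf l1 k) + x (arcOf l2 k) = 1 := by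
    intro k hki hkm
    have := hlevsum k (by omega)
    rwa [Finset.sum_pair (harcNe k hki hkm)] at this
  -- conservation chain
  have hchain : ∀ d, i + d < m0 → x (arcOf l1 (i + d)) = x (arcOf l1 i) := by
    intro d
    induction d with
    | zero => intro _; rfl
    | succ d ih =>
      intro hd
      have hd' : i + d < m0 := by omega
      rw [← ih hd']
      set k' := i + d + 1 with hk'
      have hk'm : k' < m0 := by omega
      have hk'i : i < k' := by omega
      have hk'N : k' < N := by omega
      set v := (l1.take k').toFinset with hv
      have hvcard : v.card = k' := by
        rw [hv, take_toFinset_card h1.1]; omega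
      -- v is not the source or the sink
      have hv1 : v ≠ ∅ := by
        intro h; rw [h] at hvcard; simp at hvcard
      have hv2 : v ≠ Finset.univ := by
        intro h; rw [h, Finset.card_univ] at hvcard; omega
      have hcons := hx.2.2.1 v hv1 hv2
      -- outSum = x (arcOf l1 k')
      have hout : outSum (mcArcs α) x v = x (arcOf l1 k') := by
        unfold outSum
        apply Finset.sum_eq_single_of_mem
        · rw [Finset.mem_filter]
          exact ⟨arcOf_mem_mcArcs h1.1 k' (by omega), rfl⟩
        · intro b hb hbne
          rw [Finset.mem_filter] at hb
          apply hsupp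
          intro hW
          have hbl := hWlevel b hW
          have hbcard : b.1.card = k' := by rw [hb.2, hvcard]
          rcases hbl.2 with h | h
          · rw [hbcard] at h; exact hbne h
          · rw [hbcard] at h
            apply hBne k' hk'i hk'm
            have : b.1 = (l2.take k').toFinset := by rw [h]; rfl
            rw [← this, hb.2]
      -- inSum = x (arcOf l1 (i + d))
      have hin : inSum (mcArcs α) x v = x (arcOf l1 (i + d)) := by
        unfold inSum
        apply Finset.sum_eq_single_of_mem
        · rw [Finset.mem_filter]
          exact ⟨arcOf_mem_mcArcs h1.1 (i+d) (by omega), rfl⟩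
        · intro b hb hbne
          rw [Finset.mem_filter] at hb
          apply hsupp
          intro hW
          have hbl := hWlevel b hW
          have hbcard : b.1.card + 1 = k' := by
            have : b.2.card = v.card := by rw [hb.2]
            rw [hvcard] at this
            rw [← this, mcArcs_snd_card hb.1]
          have hbc : b.1.card = i + d := by omega
          rcases hbl.2 with h | h
          · rw [hbc] at h; exact hbne h
          · rw [hbc] at h
            apply hBne k' hk'i hk'm
            have hb2 : b.2 = (l2.take (i+d+1)).toFinset := by rw [h]; rfl
            rw [← hk'] at hb2
            rw [← hb2, hb.2]
      rw [hout, hin] at hcons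
      exact hcons
  -- the parameter t
  set t := x (arcOf l1 i) with ht
  have hti : x (arcOf l1 i) + x (arcOf l2 i) = 1 := hsplit i le_rfl (by omega)
  have ht0 : 0 ≤ t := hx.2.1 _
  have ht1 : t ≤ 1 := by
    have := hx.2.1 (arcOf l2 i)
    rw [ht]; linarith
  refine ⟨t, 1 - t, ht0, by linarith, by ring, ?_⟩
  funext a
  simp only [Pi.add_apply, Pi.smul_apply, smul_eq_mul]
  by_cases haW : a ∈ Wset l1 l2
  · obtain ⟨hacard, hor⟩ := hWlevel a haW
    set k := a.1.card with hk
    by_cases hmid : i ≤ k ∧ k < m0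
    · -- split level
      have hne := harcNe k hmid.1 hmid.2
      have hxk1 : x (arcOf l1 k) = t := by
        have := hchain (k - i) (by omega)
        have he : i + (k - i) = k := by omega
        rwa [he] at this
      have hxk2 : x (arcOf l2 k) = 1 - t := by
        have := hsplit k hmid.1 hmid.2
        linarith
      rcases hor with ha | ha
      · have hc1 : chi (pathOf l1) a = 1 := by rw [ha]; exact chi_arcOf h1.1 k (by omega)
        have hc2 : chi (pathOf l2) a = 0 := by
          apply chi_ne_arcOf h2.1
          rw [← hk, ha]
          exact hne
        rw [hc1, hc2, ha, hxk1]; ring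
      · have hc2 : chi (pathOf l2) a = 1 := by rw [ha]; exact chi_arcOf h2.1 k (by omega)
        have hc1 : chi (pathOf l1) a = 0 := by
          apply chi_ne_arcOf h1.1
          rw [← hk, ha]
          exact fun h => hne h.symm
        rw [hc1, hc2, ha, hxk2]; ring
    · -- common level
      have hcom : k + 1 ≤ i ∨ m0 ≤ k := by omega
      have heq := harcEq k hcom
      have ha1 : a = arcOf l1 k := by
        rcases hor with h | h
        · exact h
        · rw [h, heq]
      have hxa : x a = 1 := by rw [ha1]; exact hcommon k hcom (by omega)
      have hc1 : chi (pathOf l1) a = 1 := by rw [ha1]; exact chi_arcOf h1.1 k (by omega)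
      have hc2 : chi (pathOf l2) a = 1 := by
        rw [ha1, heq]; exact chi_arcOf h2.1 k (by omega)
      rw [hc1, hc2, hxa]; ring
  · have hz := chi_zero_of_not_Wset (l1 := l1) (l2 := l2) haW
    rw [hsupp a haW, hz.1, hz.2]; ring

end Support

section Interval
variable {α : Type*} [Fintype α] [DecidableEq α]

def Cond (l1 l2 : List α) : Prop :=
  ∀ k, 0 < k → k < Fintype.card α →
    (l1.take k).toFinset = (l2.take k).toFinset →
    (l1.take k = l2.take k ∨ l1.drop k = l2.drop k)

lemma take_toFinset_eq_compl {l : List α} (h : IsLinOrd l) (k : ℕ) :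
    (l.take k).toFinset = Finset.univ \ (l.drop k).toFinset := by
  have hnd := h.1
  conv at hnd => rw [← List.take_append_drop k l]
  rw [List.nodup_append] at hnd
  ext a
  simp only [List.mem_toFinset, Finset.mem_sdiff, Finset.mem_univ, true_and]
  constructor
  · intro ha hd
    exact hnd.2.2 _ ha _ hd rfl
  · intro ha
    have := h.2 a
    conv at this => rw [← List.take_append_drop k l]
    rw [List.mem_append] at this
    tauto

lemma take_toFinset_eq_of_drop_eq {l1 l2 : List α} (h1 : IsLinOrd l1) (h2 : IsLinOrd l2)
    {k : ℕ} (h : l1.drop k = l2.drop k) :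
    (l1.take k).toFinset = (l2.take k).toFinset := by
  rw [take_toFinset_eq_compl h1, take_toFinset_eq_compl h2, h]

lemma exists_interval {l1 l2 : List α} (hcard : 2 ≤ Fintype.card α)
    (h1 : IsLinOrd l1) (h2 : IsLinOrd l2) (hne : l1 ≠ l2) (hc : Cond l1 l2) :
    ∃ i m0, i + 1 < m0 ∧ m0 ≤ Fintype.card α ∧
      (∀ k, k ≤ i ∨ m0 ≤ k → (l1.take k).toFinset = (l2.take k).toFinset) ∧
      (∀ k, i < k → k < m0 → (l1.take k).toFinset ≠ (l2.take k).toFinset) := by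
  set N := Fintype.card α with hN
  have hlen1 : l1.length = N := h1.length
  have hlen2 : l2.length = N := h2.length
  set i := Nat.findGreatest (fun k => l1.take k = l2.take k) N with hi
  have hPi : l1.take i = l2.take i :=
    Nat.findGreatest_spec (P := fun k => l1.take k = l2.take k) (Nat.zero_le N) (by simp)
  have hiN' : i ≤ N := Nat.findGreatest_le N
  have hgt : ∀ k, i < k → k ≤ N → l1.take k ≠ l2.take k := by
    intro k hik hkN
    exact Nat.findGreatest_is_greatest hik hkN
  have hiN : i < N := by
    rcases Nat.lt_or_ge i N with h | h
    · exact h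
    · exfalso
      have : i = N := by omega
      rw [this] at hPi
      rw [← hlen1] at hPi
      rw [List.take_length] at hPi
      rw [hlen1, ← hlen2, List.take_length] at hPi
      exact hne hPi
  have hex : ∃ m, l1.drop m = l2.drop m := by
    refine ⟨N, ?_⟩
    rw [← hlen1, List.drop_length, hlen1, ← hlen2, List.drop_length]
  set m0 := Nat.find hex with hm0
  have hdm0 : l1.drop m0 = l2.drop m0 := Nat.find_spec hex
  have hmin : ∀ m, m < m0 → l1.drop m ≠ l2.drop m := fun m hm => Nat.find_min hex hm
  have hm0N : m0 ≤ N := Nat.find_le (by rw [← hlen1, List.drop_length, hlen1, ← hlen2, List.drop_length])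
  have him0 : i < m0 := by
    by_contra hcon
    push_neg at hcon
    apply hne
    have hd : l1.drop i = l2.drop i := by
      have e1 : l1.drop i = (l1.drop m0).drop (i - m0) := by
        rw [List.drop_drop]
        congr 1
        omega
      have e2 : l2.drop i = (l2.drop m0).drop (i - m0) := by
        rw [List.drop_drop]
        congr 1
        omega
      rw [e1, e2, hdm0]
    calc l1 = l1.take i ++ l1.drop i := (List.take_append_drop i l1).symm
      _ = l2.take i ++ l2.drop i := by rw [hPi, hd]
      _ = l2 := List.take_append_drop i l2
  -- the B sets
  have hBeq : ∀ k, k ≤ i ∨ m0 ≤ k → (l1.take k).toFinset = (l2.take k).toFinset := by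
    intro k hk
    rcases hk with hk | hk
    · have : l1.take k = l2.take k := by
        have e1 : l1.take k = (l1.take i).take k := by
          rw [List.take_take, Nat.min_eq_left hk]
        have e2 : l2.take k = (l2.take i).take k := by
          rw [List.take_take, Nat.min_eq_left hk]
        rw [e1, e2, hPi]
      rw [this]
    · apply take_toFinset_eq_of_drop_eq h1 h2
      have e1 : l1.drop k = (l1.drop m0).drop (k - m0) := by
        rw [List.drop_drop]; congr 1; omega
      have e2 : l2.drop k = (l2.drop m0).drop (k - m0) := by
        rw [List.drop_drop]; congr 1; omega
      rw [e1, e2, hdm0]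
  have hBne : ∀ k, i < k → k < m0 → (l1.take k).toFinset ≠ (l2.take k).toFinset := by
    intro k hik hkm heq
    have hkN : k < N := by omega
    rcases hc k (by omega) hkN heq with h | h
    · exact hgt k hik (by omega) h
    · exact hmin k hkm h
  have hi1 : i + 1 < m0 := by
    rcases Nat.lt_or_ge (i+1) m0 with h | h
    · exact h
    · exfalso
      have hm0i : m0 = i + 1 := by omega
      apply hne
      apply eq_of_take_toFinset_eq h1 h2
      intro k
      rcases le_or_gt k i with hk | hk
      · exact hBeq k (Or.inl hk)
      · exact hBeq k (Or.inr (by omega))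
  exact ⟨i, m0, hi1, hm0N, hBeq, hBne⟩

end Interval

section Positive
variable {α : Type*} [Fintype α] [DecidableEq α]

lemma adjacent_of_cond {l1 l2 : List α} (hcard : 2 ≤ Fintype.card α)
    (h1 : IsLinOrd l1) (h2 : IsLinOrd l2) (hne : l1 ≠ l2) (hc : Cond l1 l2) :
    AdjacentVerts (flowPolytope (mcArcs α) ∅ Finset.univ)
      (chi (pathOf l1)) (chi (pathOf l2)) := by
  set N := Fintype.card α with hN
  have hlen1 : l1.length = N := h1.length
  have hlen2 : l2.length = N := h2.length
  obtain ⟨i, m0, hi1, hm0N, hBeq, hBne⟩ := exists_interval hcard h1 h2 hne hc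
  set W := Wset l1 l2 with hW
  have hWsub : W ⊆ mcArcs α := Wset_subset h1.1 h2.1
  constructor
  · intro h
    exact hne (chi_inj h1 h2 h)
  -- the exposing functional
  set f : ((Finset α × Finset α) → ℝ) →L[ℝ] ℝ :=
    ∑ a ∈ W, ContinuousLinearMap.proj a with hf
  have hfapp : ∀ y : (Finset α × Finset α) → ℝ, f y = ∑ a ∈ W, y a := by
    intro y
    rw [hf, ContinuousLinearMap.sum_apply]
    apply Finset.sum_congr rfl
    intro a _
    rfl
  have hchi1 : chi (pathOf l1) ∈ flowPolytope (mcArcs α) ∅ Finset.univ :=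
    chi_mem_flowPolytope_s16 h1 (by omega)
  have hchi2 : chi (pathOf l2) ∈ flowPolytope (mcArcs α) ∅ Finset.univ :=
    chi_mem_flowPolytope_s16 h2 (by omega)
  have hfle : ∀ y ∈ flowPolytope (mcArcs α) ∅ Finset.univ, f y ≤ N := by
    intro y hy
    rw [hfapp]
    calc ∑ a ∈ W, y a ≤ ∑ a ∈ mcArcs α, y a := by
          apply Finset.sum_le_sum_of_subset_of_nonneg hWsub
          intro a _ _
          exact hy.2.1 a
      _ = N := totalSum hy
  have hfchi : ∀ l : List α, IsLinOrd l →
      chi (pathOf l) ∈ flowPolytope (mcArcs α) ∅ Finset.univ →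
      (∀ a ∈ mcArcs α, a ∉ W → chi (pathOf l) a = 0) → f (chi (pathOf l)) = N := by
    intro l hl hfl hzero
    rw [hfapp, Finset.sum_subset hWsub hzero]
    exact totalSum hfl
  have hzero1 : ∀ a ∈ mcArcs α, a ∉ W → chi (pathOf l1) a = 0 := by
    intro a _ ha
    exact (chi_zero_of_not_Wset ha).1
  have hzero2 : ∀ a ∈ mcArcs α, a ∉ W → chi (pathOf l2) a = 0 := by
    intro a _ ha
    exact (chi_zero_of_not_Wset ha).2
  have hf1 : f (chi (pathOf l1)) = N := hfchi l1 h1 hchi1 hzero1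
  have hf2 : f (chi (pathOf l2)) = N := hfchi l2 h2 hchi2 hzero2
  intro _
  refine ⟨f, ?_⟩
  ext x
  constructor
  · -- segment ⊆ face
    rintro ⟨a, b, ha, hb, hab, rfl⟩
    have hxP : a • chi (pathOf l1) + b • chi (pathOf l2) ∈
        flowPolytope (mcArcs α) ∅ Finset.univ := IsFlow.convex hchi1 hchi2 ha hb hab
    refine ⟨hxP, ?_⟩
    intro y hy
    have : f (a • chi (pathOf l1) + b • chi (pathOf l2)) = N := by
      rw [map_add, ContinuousLinearMap.map_smul, ContinuousLinearMap.map_smul]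
      simp only [smul_eq_mul]
      rw [hf1, hf2]
      nlinarith
    rw [this]
    exact hfle y hy
  · -- face ⊆ segment
    rintro ⟨hxP, hmax⟩
    have hfxN : f x = N := by
      have h1' := hmax _ hchi1
      rw [hf1] at h1'
      have h2' := hfle x hxP
      linarith
    -- support of x is inside W
    have hsupp : ∀ a, a ∉ W → x a = 0 := by
      have hsdiff : ∑ a ∈ mcArcs α \ W, x a = 0 := by
        have := Finset.sum_sdiff (f := x) hWsub
        rw [totalSum hxP] at this
        rw [hfapp] at hfxN
        linarith
      have hall := (Finset.sum_eq_zero_iff_of_nonneg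
        (fun a _ => hxP.2.1 a)).mp hsdiff
      intro a haW
      by_cases ham : a ∈ mcArcs α
      · exact hall a (Finset.mem_sdiff.mpr ⟨ham, haW⟩)
      · exact hxP.1 a ham
    exact support_to_segment h1 h2 i m0 hi1 hm0N hBeq hBne hxP hsupp

end Positive

section Swap
variable {α : Type*} [Fintype α] [DecidableEq α]

lemma swap_isLinOrd {l1 l2 : List α} (h1 : IsLinOrd l1) (h2 : IsLinOrd l2) (k0 : ℕ)
    (hT : (l1.take k0).toFinset = (l2.take k0).toFinset) :
    IsLinOrd (l1.take k0 ++ l2.drop k0) := by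
  have hnd2 := h2.1
  conv at hnd2 => rw [← List.take_append_drop k0 l2]
  rw [List.nodup_append] at hnd2
  constructor
  · rw [List.nodup_append]
    refine ⟨h1.1.sublist (List.take_sublist _ _), hnd2.2.1, ?_⟩
    intro a ha b had hab; subst hab
    have : a ∈ (l2.take k0).toFinset := by
      rw [← hT, List.mem_toFinset]; exact ha
    rw [List.mem_toFinset] at this
    exact hnd2.2.2 _ this _ had rfl
  · intro a
    have := h2.2 a
    conv at this => rw [← List.take_append_drop k0 l2]
    rw [List.mem_append] at this ⊢
    rcases this with h | h
    · left
      have : a ∈ (l1.take k0).toFinset := by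
        rw [hT, List.mem_toFinset]; exact h
      rwa [List.mem_toFinset] at this
    · right; exact h

lemma swap_take_low {l1 l2 : List α} (k0 : ℕ) (hk0 : k0 ≤ l1.length) {k : ℕ} (hk : k ≤ k0) :
    (l1.take k0 ++ l2.drop k0).take k = l1.take k := by
  rw [List.take_append]
  have h1 : (l1.take k0).length = k0 := by
    rw [List.length_take]; omega
  rw [h1]
  have h2 : k - k0 = 0 := by omega
  rw [h2, List.take_zero, List.append_nil, List.take_take, Nat.min_eq_left hk]

lemma swap_take_high {l1 l2 : List α} (k0 : ℕ) (hk01 : k0 ≤ l1.length)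
    (hT : (l1.take k0).toFinset = (l2.take k0).toFinset) {k : ℕ} (hk : k0 ≤ k) :
    ((l1.take k0 ++ l2.drop k0).take k).toFinset = (l2.take k).toFinset := by
  rw [List.take_append]
  have h1 : (l1.take k0).length = k0 := by
    rw [List.length_take]; omega
  rw [h1, List.take_take, Nat.min_eq_right hk]
  rw [List.toFinset_append, hT, ← List.toFinset_append]
  have : l2.take k0 ++ (l2.drop k0).take (k - k0) = l2.take k := by
    have := List.take_add (l := l2) (i := k0) (j := k - k0)
    have he : k0 + (k - k0) = k := by omega
    rw [he] at this
    exact this.symm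
  rw [this]

lemma swap_length {l1 l2 : List α} (h1 : IsLinOrd l1) (h2 : IsLinOrd l2) (k0 : ℕ)
    (hk0 : k0 ≤ Fintype.card α) :
    (l1.take k0 ++ l2.drop k0).length = Fintype.card α := by
  rw [List.length_append, List.length_take, List.length_drop, h1.length, h2.length]
  omega

lemma swap_arc_low {l1 l2 : List α} (k0 : ℕ) (hk0 : k0 ≤ l1.length) {k : ℕ}
    (hk : k + 1 ≤ k0) :
    arcOf (l1.take k0 ++ l2.drop k0) k = arcOf l1 k := by
  unfold arcOf
  rw [swap_take_low k0 hk0 (by omega), swap_take_low k0 hk0 hk]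

lemma swap_arc_high {l1 l2 : List α} (k0 : ℕ) (hk01 : k0 ≤ l1.length)
    (hT : (l1.take k0).toFinset = (l2.take k0).toFinset) {k : ℕ} (hk : k0 ≤ k) :
    arcOf (l1.take k0 ++ l2.drop k0) k = arcOf l2 k := by
  unfold arcOf
  rw [swap_take_high k0 hk01 hT hk, swap_take_high k0 hk01 hT (by omega)]

lemma exists_arc_ne {l1 l2 : List α} (h1 : IsLinOrd l1) (h2 : IsLinOrd l2) (hne : l1 ≠ l2) :
    ∃ k < Fintype.card α, arcOf l1 k ≠ arcOf l2 k := by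
  by_contra hcon
  push_neg at hcon
  apply hne
  have hlen1 := h1.length
  have hlen2 := h2.length
  apply eq_of_take_toFinset_eq h1 h2
  intro k
  rcases Nat.eq_zero_or_pos k with rfl | hk
  · simp
  by_cases hkN : k ≤ Fintype.card α
  · have := hcon (k-1) (by omega)
    have h2' := congrArg Prod.snd this
    simp only [arcOf] at h2'
    have he : k - 1 + 1 = k := by omega
    rwa [he] at h2'
  · have e1 : l1.take k = l1 := List.take_of_length_le (by omega)
    have e2 : l2.take k = l2 := List.take_of_length_le (by omega)
    rw [e1, e2]
    ext a; simp [h1.2 a, h2.2 a]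

lemma chi_vals {l : List α} (h : l.Nodup) (a : Finset α × Finset α) :
    chi (pathOf l) a = 0 ∨ chi (pathOf l) a = 1 := by
  unfold chi
  split_ifs <;> simp

end Swap

section Negative
variable {α : Type*} [Fintype α] [DecidableEq α]

lemma chi_swap_add {l1 l2 : List α} (h1 : IsLinOrd l1) (h2 : IsLinOrd l2) (k0 : ℕ)
    (hk0N : k0 ≤ Fintype.card α)
    (hT : (l1.take k0).toFinset = (l2.take k0).toFinset) :
    chi (pathOf (l1.take k0 ++ l2.drop k0)) + chi (pathOf (l2.take k0 ++ l1.drop k0))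
      = chi (pathOf l1) + chi (pathOf l2) := by
  set N := Fintype.card α with hN
  have hlen1 : l1.length = N := h1.length
  have hlen2 : l2.length = N := h2.length
  set l3 := l1.take k0 ++ l2.drop k0 with hl3
  set l4 := l2.take k0 ++ l1.drop k0 with hl4
  have h3 : IsLinOrd l3 := swap_isLinOrd h1 h2 k0 hT
  have h4 : IsLinOrd l4 := swap_isLinOrd h2 h1 k0 hT.symm
  have hlen3 : l3.length = N := swap_length h1 h2 k0 hk0N
  have hlen4 : l4.length = N := swap_length h2 h1 k0 hk0N
  funext a
  simp only [Pi.add_apply]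
  rw [chi_pathOf_eq h1.1, chi_pathOf_eq h2.1, chi_pathOf_eq h3.1, chi_pathOf_eq h4.1,
    hlen1, hlen2, hlen3, hlen4]
  set k := a.1.card with hk
  by_cases hkN : k < N
  · by_cases hklow : k + 1 ≤ k0
    · rw [swap_arc_low k0 (by omega) hklow, swap_arc_low k0 (by omega) hklow]
    · have hkhigh : k0 ≤ k := by omega
      rw [swap_arc_high k0 (by omega) hT hkhigh, swap_arc_high k0 (by omega) hT.symm hkhigh]
      ring
  · rw [if_neg (fun hcon => hkN hcon.1), if_neg (fun hcon => hkN hcon.1),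
      if_neg (fun hcon => hkN hcon.1), if_neg (fun hcon => hkN hcon.1)]

lemma not_adjacent_of_not_cond {l1 l2 : List α} (hcard : 2 ≤ Fintype.card α)
    (h1 : IsLinOrd l1) (h2 : IsLinOrd l2) (hne : l1 ≠ l2) (hnc : ¬ Cond l1 l2) :
    ¬ AdjacentVerts (flowPolytope (mcArcs α) ∅ Finset.univ)
      (chi (pathOf l1)) (chi (pathOf l2)) := by
  set N := Fintype.card α with hN
  have hlen1 : l1.length = N := h1.length
  have hlen2 : l2.length = N := h2.length
  unfold Cond at hnc
  push_neg at hnc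
  obtain ⟨k0, hk0pos, hk0N, hT, hnt, hnd⟩ := hnc
  set l3 := l1.take k0 ++ l2.drop k0 with hl3
  set l4 := l2.take k0 ++ l1.drop k0 with hl4
  have h3 : IsLinOrd l3 := swap_isLinOrd h1 h2 k0 hT
  have h4 : IsLinOrd l4 := swap_isLinOrd h2 h1 k0 hT.symm
  have hsum := chi_swap_add h1 h2 k0 (by omega) hT
  have hne31 : l3 ≠ l1 := by
    intro h
    apply hnd
    have : l1.take k0 ++ l2.drop k0 = l1.take k0 ++ l1.drop k0 := by
      rw [hl3] at h
      rw [h, List.take_append_drop]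
    exact (List.append_cancel_left this).symm
  have hne32 : l3 ≠ l2 := by
    intro h
    apply hnt
    have h' : l3.take k0 = l2.take k0 := by rw [h]
    rw [hl3, swap_take_low k0 (by omega) le_rfl] at h'
    exact h'
  rintro ⟨hxy, hexp⟩
  obtain ⟨g, hgeq⟩ := hexp ⟨chi (pathOf l1), left_mem_segment ℝ _ _⟩
  have hm1 : chi (pathOf l1) ∈ {x ∈ flowPolytope (mcArcs α) ∅ Finset.univ |
      ∀ y ∈ flowPolytope (mcArcs α) ∅ Finset.univ, g y ≤ g x} := by
    rw [← hgeq]; exact left_mem_segment ℝ _ _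
  have hm2 : chi (pathOf l2) ∈ {x ∈ flowPolytope (mcArcs α) ∅ Finset.univ |
      ∀ y ∈ flowPolytope (mcArcs α) ∅ Finset.univ, g y ≤ g x} := by
    rw [← hgeq]; exact right_mem_segment ℝ _ _
  obtain ⟨hP1, hmax1⟩ := hm1
  obtain ⟨hP2, hmax2⟩ := hm2
  have hP3 : chi (pathOf l3) ∈ flowPolytope (mcArcs α) ∅ Finset.univ :=
    chi_mem_flowPolytope_s16 h3 (by omega)
  have hP4 : chi (pathOf l4) ∈ flowPolytope (mcArcs α) ∅ Finset.univ :=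
    chi_mem_flowPolytope_s16 h4 (by omega)
  have hg12 : g (chi (pathOf l1)) = g (chi (pathOf l2)) :=
    le_antisymm (hmax2 _ hP1) (hmax1 _ hP2)
  have hgsum : g (chi (pathOf l3)) + g (chi (pathOf l4))
      = g (chi (pathOf l1)) + g (chi (pathOf l2)) := by
    rw [← map_add, ← map_add, hsum]
  have hg3le := hmax1 _ hP3
  have hg4le := hmax1 _ hP4
  have hg3 : g (chi (pathOf l3)) = g (chi (pathOf l1)) := by linarith
  have hm3 : chi (pathOf l3) ∈ segment ℝ (chi (pathOf l1)) (chi (pathOf l2)) := by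
    rw [hgeq]
    refine ⟨hP3, ?_⟩
    intro y hy
    rw [hg3]
    exact hmax1 y hy
  obtain ⟨u, v, hu, hv, huv, heq3⟩ := hm3
  obtain ⟨e, heN, hene⟩ := exists_arc_ne h1 h2 hne
  have hc1 : chi (pathOf l1) (arcOf l1 e) = 1 := chi_arcOf h1.1 e (by omega)
  have hc2 : chi (pathOf l2) (arcOf l1 e) = 0 := by
    apply chi_ne_arcOf h2.1
    rw [arcOf_fst_card h1.1 e (by omega)]
    exact hene
  have heval : chi (pathOf l3) (arcOf l1 e) = u := by
    rw [← heq3]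
    simp only [Pi.add_apply, Pi.smul_apply, smul_eq_mul]
    rw [hc1, hc2]
    ring
  rcases chi_vals h3.1 (arcOf l1 e) with h0 | h01
  · -- u = 0, so chi l3 = chi l2
    rw [heval] at h0
    have hveq : v = 1 := by linarith
    have : chi (pathOf l3) = chi (pathOf l2) := by
      rw [← heq3, h0, hveq]
      funext b
      simp
    exact hne32 (chi_inj h3 h2 this)
  · -- u = 1, so chi l3 = chi l1
    rw [heval] at h01
    have hveq : v = 0 := by linarith
    have : chi (pathOf l3) = chi (pathOf l1) := by
      rw [← heq3, h01, hveq]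
      funext b
      simp
    exact hne31 (chi_inj h3 h1 this)

end Negative

section Bridge
variable {α : Type*} [Fintype α] [DecidableEq α]

lemma filter_mem_take {l : List α} (h : l.Nodup) (k : ℕ) :
    l.filter (fun a => a ∈ (l.take k).toFinset) = l.take k := by
  set S := (l.take k).toFinset with hS
  have hnd := h
  conv at hnd => rw [← List.take_append_drop k l]
  rw [List.nodup_append] at hnd
  conv_lhs => rw [← List.take_append_drop k l]
  rw [List.filter_append]
  have e1 : (l.take k).filter (fun a => a ∈ S) = l.take k := by
    rw [List.filter_eq_self]
    intro a ha
    simp only [hS, List.mem_toFinset, decide_eq_true_eq]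
    exact ha
  have e2 : (l.drop k).filter (fun a => a ∈ S) = [] := by
    rw [List.filter_eq_nil_iff]
    intro a ha
    simp only [hS, List.mem_toFinset, decide_eq_true_eq]
    intro hmem
    exact hnd.2.2 _ hmem _ ha rfl
  rw [e1, e2, List.append_nil]

lemma filter_not_mem_take {l : List α} (h : l.Nodup) (k : ℕ) :
    l.filter (fun a => a ∉ (l.take k).toFinset) = l.drop k := by
  set S := (l.take k).toFinset with hS
  have hnd := h
  conv at hnd => rw [← List.take_append_drop k l]
  rw [List.nodup_append] at hnd
  conv_lhs => rw [← List.take_append_drop k l]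
  rw [List.filter_append]
  have e1 : (l.take k).filter (fun a => a ∉ S) = [] := by
    rw [List.filter_eq_nil_iff]
    intro a ha
    simp only [hS, List.mem_toFinset, decide_eq_true_eq]
    intro hmem
    exact hmem ha
  have e2 : (l.drop k).filter (fun a => a ∉ S) = l.drop k := by
    rw [List.filter_eq_self]
    intro a ha
    simp only [hS, List.mem_toFinset]
    simp only [decide_not, Bool.not_eq_true', decide_eq_false_iff_not]
    intro hmem
    exact hnd.2.2 _ hmem _ ha rfl
  rw [e1, e2, List.nil_append]

lemma cond_iff_rhs {l1 l2 : List α} (hcard : 2 ≤ Fintype.card α)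
    (h1 : IsLinOrd l1) (h2 : IsLinOrd l2) :
    Cond l1 l2 ↔
      ∀ S : Finset α, S ≠ ∅ → S ≠ Finset.univ →
        (∃ k, S = (l1.take k).toFinset) → (∃ k, S = (l2.take k).toFinset) →
        (l1.filter (fun a => a ∈ S) = l2.filter (fun a => a ∈ S) ∨
          l1.filter (fun a => a ∉ S) = l2.filter (fun a => a ∉ S)) := by
  set N := Fintype.card α with hN
  have hlen1 : l1.length = N := h1.length
  have hlen2 : l2.length = N := h2.length
  constructor
  · intro hc S hS0 hSu ⟨k1, hk1⟩ ⟨k2, hk2⟩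
    have hcard1 : S.card = min k1 N := by rw [hk1, take_toFinset_card h1.1, hlen1]
    have hcard2 : S.card = min k2 N := by rw [hk2, take_toFinset_card h2.1, hlen2]
    have hcube : S.card < N := by
      have hle : S.card ≤ N := by
        rw [hN]; exact Finset.card_le_univ S
      rcases lt_or_eq_of_le hle with h | h
      · exact h
      · exact absurd (Finset.eq_univ_of_card S (by rw [h])) hSu
    have hk1c : k1 = S.card := by omega
    have hk2c : k2 = S.card := by omega
    have hpos : 0 < S.card := Finset.card_pos.mpr (Finset.nonempty_iff_ne_empty.mpr hS0)
    set c := S.card with hc'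
    rw [hk1c] at hk1
    rw [hk2c] at hk2
    have heq : (l1.take c).toFinset = (l2.take c).toFinset := by rw [← hk1, ← hk2]
    rcases hc c hpos hcube heq with h | h
    · left
      rw [hk1, filter_mem_take h1.1 c]
      conv_rhs => rw [heq]
      rw [filter_mem_take h2.1 c]
      exact h
    · right
      rw [hk1, filter_not_mem_take h1.1 c]
      conv_rhs => rw [heq]
      rw [filter_not_mem_take h2.1 c]
      exact h
  · intro hr k hk0 hkN heq
    set S := (l1.take k).toFinset with hS
    have hScard : S.card = k := by
      rw [hS, take_toFinset_card h1.1]; omega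
    have hS0 : S ≠ ∅ := by
      intro h
      rw [h] at hScard
      simp at hScard
      omega
    have hSu : S ≠ Finset.univ := by
      intro h
      rw [h, Finset.card_univ] at hScard
      omega
    have hSl2 : S = (l2.take k).toFinset := heq
    have heq' : (l1.take k).toFinset = (l2.take k).toFinset := heq
    rcases hr S hS0 hSu ⟨k, rfl⟩ ⟨k, hSl2⟩ with h | h
    · left
      rw [hS, filter_mem_take h1.1 k, heq', filter_mem_take h2.1 k] at h
      exact h
    · right
      rw [hS, filter_not_mem_take h1.1 k, heq', filter_not_mem_take h2.1 k] at h
      exact h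

end Bridge


/-- The vertices of the multiple choice polytope corresponding to two distinct linear
orderings `L₁`, `L₂` are adjacent iff whenever a nonempty proper subset `S` is a
beginning set of both, the orderings coincide on `S` or on `C \ S`. -/
theorem stmt16 {α : Type*} [Fintype α] [DecidableEq α] (hcard : 2 ≤ Fintype.card α)
    (l1 l2 : List α) (h1 : IsLinOrd l1) (h2 : IsLinOrd l2) (hne : l1 ≠ l2) :
    AdjacentVerts (flowPolytope (mcArcs α) ∅ Finset.univ)
        (chi (pathOf l1)) (chi (pathOf l2)) ↔
      ∀ S : Finset α, S ≠ ∅ → S ≠ Finset.univ →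
        (∃ k, S = (l1.take k).toFinset) → (∃ k, S = (l2.take k).toFinset) →
        (l1.filter (fun a => a ∈ S) = l2.filter (fun a => a ∈ S) ∨
          l1.filter (fun a => a ∉ S) = l2.filter (fun a => a ∉ S)) := by

  rw [← cond_iff_rhs hcard h1 h2]
  constructor
  · intro hadj
    by_contra hnc
    exact not_adjacent_of_not_cond hcard h1 h2 hne hnc hadj
  · intro hc
    exact adjacent_of_cond hcard h1 h2 hne hc
end
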